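/- arXiv:1312.5291 — 7 statements merged into one kernel-verified Lean document; each statement's English description precedes it below -/
import Mathlib

section
/- Let S : [0,1] → ℝ^{n×n} be a smooth path of symmetric matrices, and for t ∈ (0,1] let m(t) be the dimension of the space of functions u ∈ C²([0,1],ℝⁿ) satisfying u''(x) + S(x)u(x) = 0, u(0) = 0 and u(t) = 0. If m(1) = 0, then the set {t ∈ (0,1] : m(t) > 0} of conjugate instants is finite. -/
open Set RealInnerProductSpace

noncomputable section

variable {n : ℕ}

/-- The space of solutions `u` of the Jacobi-type boundary value problem
`u'' + S u = 0` on `[0, T]`, `u 0 = 0`, `u t = 0`, realized as functions `ℝ → ℝⁿ`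
that are determined by their restriction to `[0, T]` (clamping condition). -/
def jacobiSolutions (S : ℝ → (EuclideanSpace ℝ (Fin n) →L[ℝ] EuclideanSpace ℝ (Fin n)))
    (T : ℝ) (hT : 0 < T) (t : ℝ) : Submodule ℝ (ℝ → EuclideanSpace ℝ (Fin n)) where
  carrier := {u | (∀ x : ℝ, u x = u (min (max x 0) T)) ∧
      ContDiffOn ℝ 2 u (Icc 0 T) ∧
      (∀ x ∈ Icc (0:ℝ) T,
        derivWithin (derivWithin u (Icc 0 T)) (Icc 0 T) x + S x (u x) = 0) ∧
      u 0 = 0 ∧ u t = 0}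
  zero_mem' := by
    refine ⟨fun x => rfl, contDiffOn_const, fun x hx => ?_, rfl, rfl⟩
    have hI : UniqueDiffOn ℝ (Icc (0:ℝ) T) := uniqueDiffOn_Icc hT
    have h1 : ∀ y ∈ Icc (0:ℝ) T, derivWithin (fun _ : ℝ => (0 : EuclideanSpace ℝ (Fin n)))
        (Icc 0 T) y = 0 := fun y _ => by simp
    have h2 : derivWithin (derivWithin (fun _ : ℝ => (0 : EuclideanSpace ℝ (Fin n))) (Icc 0 T))
        (Icc 0 T) x = derivWithin (fun _ : ℝ => (0 : EuclideanSpace ℝ (Fin n))) (Icc 0 T) x :=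
      derivWithin_congr h1 (h1 x hx)
    show derivWithin (derivWithin (fun _ : ℝ => (0 : EuclideanSpace ℝ (Fin n))) (Icc 0 T))
        (Icc 0 T) x + S x 0 = 0
    rw [h2, h1 x hx, map_zero, add_zero]
  add_mem' := by
    rintro u v ⟨hu0, hu1, hu2, hu3, hu4⟩ ⟨hv0, hv1, hv2, hv3, hv4⟩
    have hI : UniqueDiffOn ℝ (Icc (0:ℝ) T) := uniqueDiffOn_Icc hT
    have hud : DifferentiableOn ℝ u (Icc 0 T) := hu1.differentiableOn (by norm_num)
    have hvd : DifferentiableOn ℝ v (Icc 0 T) := hv1.differentiableOn (by norm_num)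
    have hud' : DifferentiableOn ℝ (derivWithin u (Icc 0 T)) (Icc 0 T) :=
      (hu1.derivWithin hI (one_add_one_eq_two.le : (1 : WithTop ℕ∞) + 1 ≤ 2)).differentiableOn one_ne_zero
    have hvd' : DifferentiableOn ℝ (derivWithin v (Icc 0 T)) (Icc 0 T) :=
      (hv1.derivWithin hI (one_add_one_eq_two.le : (1 : WithTop ℕ∞) + 1 ≤ 2)).differentiableOn one_ne_zero
    refine ⟨fun x => by simp only [Pi.add_apply, ← hu0 x, ← hv0 x],
      hu1.add hv1, fun x hx => ?_, by simp [hu3, hv3], by simp [hu4, hv4]⟩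
    have h1 : ∀ y ∈ Icc (0:ℝ) T, derivWithin (u + v) (Icc 0 T) y
        = derivWithin u (Icc 0 T) y + derivWithin v (Icc 0 T) y := fun y hy =>
      derivWithin_add (hud y hy) (hvd y hy)
    have h2 : derivWithin (derivWithin (u + v) (Icc 0 T)) (Icc 0 T) x
        = derivWithin (fun y => derivWithin u (Icc 0 T) y + derivWithin v (Icc 0 T) y)
          (Icc 0 T) x := derivWithin_congr h1 (h1 x hx)
    have h3 : derivWithin (fun y => derivWithin u (Icc 0 T) y + derivWithin v (Icc 0 T) y)
        (Icc 0 T) x = derivWithin (derivWithin u (Icc 0 T)) (Icc 0 T) x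
          + derivWithin (derivWithin v (Icc 0 T)) (Icc 0 T) x :=
      derivWithin_add (hud' x hx) (hvd' x hx)
    show derivWithin (derivWithin (u + v) (Icc 0 T)) (Icc 0 T) x + S x (u x + v x) = 0
    rw [h2, h3, map_add]
    abel_nf
    linear_combination (norm := module) hu2 x hx + hv2 x hx
  smul_mem' := by
    rintro c u ⟨hu0, hu1, hu2, hu3, hu4⟩
    have hI : UniqueDiffOn ℝ (Icc (0:ℝ) T) := uniqueDiffOn_Icc hT
    have hud : DifferentiableOn ℝ u (Icc 0 T) := hu1.differentiableOn (by norm_num)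
    have hud' : DifferentiableOn ℝ (derivWithin u (Icc 0 T)) (Icc 0 T) :=
      (hu1.derivWithin hI (one_add_one_eq_two.le : (1 : WithTop ℕ∞) + 1 ≤ 2)).differentiableOn one_ne_zero
    refine ⟨fun x => by simp only [Pi.smul_apply, ← hu0 x],
      hu1.const_smul c, fun x hx => ?_, by simp [hu3], by simp [hu4]⟩
    have h1 : ∀ y ∈ Icc (0:ℝ) T, derivWithin (c • u) (Icc 0 T) y
        = c • derivWithin u (Icc 0 T) y := fun y hy =>
      derivWithin_const_smul c (hud y hy)
    have h2 : derivWithin (derivWithin (c • u) (Icc 0 T)) (Icc 0 T) x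
        = derivWithin (fun y => c • derivWithin u (Icc 0 T) y) (Icc 0 T) x :=
      derivWithin_congr h1 (h1 x hx)
    have h3 : derivWithin (fun y => c • derivWithin u (Icc 0 T) y) (Icc 0 T) x
        = c • derivWithin (derivWithin u (Icc 0 T)) (Icc 0 T) x :=
      derivWithin_const_smul c (hud' x hx)
    show derivWithin (derivWithin (c • u) (Icc 0 T)) (Icc 0 T) x + S x (c • u x) = 0
    rw [h2, h3, map_smul]
    have := hu2 x hx
    rw [← smul_add, this, smul_zero]

/-- The multiplicity `m t` of an instant `t`: the dimension of the space of solutions of the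
Jacobi equation `u'' + S u = 0` on `[0,1]` with `u 0 = 0` and `u t = 0`. -/
def conjMult (S : ℝ → (EuclideanSpace ℝ (Fin n) →L[ℝ] EuclideanSpace ℝ (Fin n))) (t : ℝ) : ℕ∞ :=
  (Module.rank ℝ ↥(jacobiSolutions S 1 one_pos t)).toENat

namespace ConjFin

variable {n : ℕ}

local notation "Eu" => EuclideanSpace ℝ (Fin n)
local notation "I01" => Icc (0:ℝ) 1

lemma mem_jacobi_iff {S : ℝ → (Eu →L[ℝ] Eu)} {T : ℝ} {hT : 0 < T} {t : ℝ} {u : ℝ → Eu} :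
    u ∈ jacobiSolutions S T hT t ↔
      (∀ x : ℝ, u x = u (min (max x 0) T)) ∧ ContDiffOn ℝ 2 u (Icc 0 T) ∧
      (∀ x ∈ Icc (0:ℝ) T, derivWithin (derivWithin u (Icc 0 T)) (Icc 0 T) x + S x (u x) = 0) ∧
      u 0 = 0 ∧ u t = 0 := Iff.rfl

/-- Being a solution of the Jacobi equation on `[0,1]`. -/
def IsSol (S : ℝ → (Eu →L[ℝ] Eu)) (u : ℝ → Eu) : Prop :=
  ContDiffOn ℝ 2 u I01 ∧
  ∀ x ∈ I01, derivWithin (derivWithin u I01) I01 x + S x (u x) = 0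

lemma IsSol.of_mem {S : ℝ → (Eu →L[ℝ] Eu)} {T : ℝ} {u : ℝ → Eu}
    (h : u ∈ jacobiSolutions S 1 one_pos T) : IsSol S u := ⟨h.2.1, h.2.2.1⟩

lemma IsSol.d1 {S : ℝ → (Eu →L[ℝ] Eu)} {u : ℝ → Eu} (hu : IsSol S u) {x : ℝ} (hx : x ∈ I01) :
    HasDerivWithinAt u (derivWithin u I01 x) I01 x :=
  ((hu.1.differentiableOn (by norm_num)) x hx).hasDerivWithinAt

lemma IsSol.cd1 {S : ℝ → (Eu →L[ℝ] Eu)} {u : ℝ → Eu} (hu : IsSol S u) : ContDiffOn ℝ 1 (derivWithin u I01) I01 :=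
  hu.1.derivWithin (uniqueDiffOn_Icc one_pos) (by norm_num)

lemma IsSol.d2 {S : ℝ → (Eu →L[ℝ] Eu)} {u : ℝ → Eu} (hu : IsSol S u) {x : ℝ} (hx : x ∈ I01) :
    HasDerivWithinAt (derivWithin u I01) (-(S x (u x))) I01 x := by
  have h := ((hu.cd1.differentiableOn (by norm_num)) x hx).hasDerivWithinAt
  have he : derivWithin (derivWithin u I01) I01 x = -(S x (u x)) :=
    eq_neg_of_add_eq_zero_left (hu.2 x hx)
  rwa [he] at h

lemma hasDW_Ici {F : Type*} [NormedAddCommGroup F] [NormedSpace ℝ F] {f : ℝ → F} {f' : F} {x : ℝ} (hx : x ∈ Ico (0:ℝ) 1)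
    (h : HasDerivWithinAt f f' I01 x) : HasDerivWithinAt f f' (Ici x) x := by
  refine h.mono_of_mem_nhdsWithin (mem_nhdsWithin.2 ⟨Iio 1, isOpen_Iio, hx.2, ?_⟩)
  rintro y ⟨hy1, hy2⟩
  exact ⟨le_trans hx.1 hy2, le_of_lt hy1⟩

lemma hasDW_Iic {F : Type*} [NormedAddCommGroup F] [NormedSpace ℝ F] {f : ℝ → F} {f' : F} {x : ℝ} (hx : x ∈ Ioc (0:ℝ) 1)
    (h : HasDerivWithinAt f f' I01 x) : HasDerivWithinAt f f' (Iic x) x := by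
  refine h.mono_of_mem_nhdsWithin (mem_nhdsWithin.2 ⟨Ioi 0, isOpen_Ioi, hx.1, ?_⟩)
  rintro y ⟨hy1, hy2⟩
  exact ⟨le_of_lt hy1, le_trans hy2 hx.2⟩

/-- clamping -/
lemma clamp_mem (x : ℝ) : min (max x 0) 1 ∈ I01 :=
  ⟨le_min (le_max_right x 0) zero_le_one, min_le_right _ _⟩

lemma clamp_eq {x : ℝ} (hx : x ∈ I01) : min (max x 0) 1 = x := by
  rw [max_eq_left hx.1, min_eq_left hx.2]

/-- The first-order vector field associated to the equation, clamped in time. -/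
def vf (S : ℝ → (Eu →L[ℝ] Eu)) (x : ℝ) : (Eu × Eu) →L[ℝ] (Eu × Eu) :=
  (ContinuousLinearMap.snd ℝ Eu Eu).prod
    (-((S (min (max x 0) 1)).comp (ContinuousLinearMap.fst ℝ Eu Eu)))

lemma vf_apply (S : ℝ → (Eu →L[ℝ] Eu)) (x : ℝ) (p : Eu × Eu) :
    vf S x p = (p.2, -(S (min (max x 0) 1) p.1)) := rfl

lemma vf_norm_le {S : ℝ → (Eu →L[ℝ] Eu)} {M : ℝ} (hM : ∀ x ∈ I01, ‖S x‖ ≤ M) (x : ℝ) (p : Eu × Eu) :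
    ‖vf S x p‖ ≤ max 1 M * ‖p‖ := by
  rw [vf_apply, Prod.norm_def]
  have h1 : ‖p.2‖ ≤ max 1 M * ‖p‖ := by
    calc ‖p.2‖ ≤ ‖p‖ := norm_snd_le p
    _ = 1 * ‖p‖ := (one_mul _).symm
    _ ≤ max 1 M * ‖p‖ := by
        apply mul_le_mul_of_nonneg_right (le_max_left _ _) (norm_nonneg _)
  have h2 : ‖-(S (min (max x 0) 1) p.1)‖ ≤ max 1 M * ‖p‖ := by
    rw [norm_neg]
    calc ‖S (min (max x 0) 1) p.1‖ ≤ ‖S (min (max x 0) 1)‖ * ‖p.1‖ :=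
          (S _).le_opNorm p.1
    _ ≤ M * ‖p‖ := by
        apply mul_le_mul (hM _ (clamp_mem x)) (norm_fst_le p) (norm_nonneg _)
        exact le_trans (norm_nonneg _) (hM _ (clamp_mem x))
    _ ≤ max 1 M * ‖p‖ := by
        apply mul_le_mul_of_nonneg_right (le_max_right _ _) (norm_nonneg _)
  exact max_le h1 h2

lemma vf_lipschitz {S : ℝ → (Eu →L[ℝ] Eu)} {M : ℝ} (hM : ∀ x ∈ I01, ‖S x‖ ≤ M) (x : ℝ) :
    LipschitzWith (Real.toNNReal (max 1 M)) (vf S x) :=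
  AddMonoidHomClass.lipschitz_of_bound (vf S x) (max 1 M) (vf_norm_le hM x)

/-- The pair function `(u, u')`. -/
def yf (u : ℝ → Eu) : ℝ → Eu × Eu := fun x => (u x, derivWithin u I01 x)

lemma IsSol.y_cont {S : ℝ → (Eu →L[ℝ] Eu)} {u : ℝ → Eu} (hu : IsSol S u) : ContinuousOn (yf u) I01 :=
  ((hu.1.continuousOn).prodMk (hu.cd1.continuousOn))

lemma IsSol.y_deriv {S : ℝ → (Eu →L[ℝ] Eu)} {u : ℝ → Eu} (hu : IsSol S u) {x : ℝ} (hx : x ∈ I01) :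
    HasDerivWithinAt (yf u) (vf S x (yf u x)) I01 x := by
  have h := (hu.d1 hx).prodMk (hu.d2 hx)
  have he : vf S x (yf u x) = (derivWithin u I01 x, -(S x (u x))) := by
    rw [vf_apply, clamp_eq hx]; rfl
  rwa [he]



lemma IsSol.y_deriv_Ici {S : ℝ → (Eu →L[ℝ] Eu)} {u : ℝ → Eu} (hu : IsSol S u) {x : ℝ} (hx : x ∈ Ico (0:ℝ) 1) :
    HasDerivWithinAt (yf u) (vf S x (yf u x)) (Ici x) x :=
  hasDW_Ici hx (hu.y_deriv ⟨hx.1, le_of_lt hx.2⟩)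

lemma IsSol.y_deriv_Iic {S : ℝ → (Eu →L[ℝ] Eu)} {u : ℝ → Eu} (hu : IsSol S u) {x : ℝ} (hx : x ∈ Ioc (0:ℝ) 1) :
    HasDerivWithinAt (yf u) (vf S x (yf u x)) (Iic x) x :=
  hasDW_Iic hx (hu.y_deriv ⟨le_of_lt hx.1, hx.2⟩)

/-- Gronwall growth bound from the initial time. -/
lemma IsSol.bound {S : ℝ → (Eu →L[ℝ] Eu)} {u : ℝ → Eu} (hu : IsSol S u) (h0 : u 0 = 0) {M : ℝ}
    (hM : ∀ x ∈ I01, ‖S x‖ ≤ M) {x : ℝ} (hx : x ∈ I01) :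
    ‖yf u x‖ ≤ ‖derivWithin u I01 0‖ * Real.exp (max 1 M) := by
  have key := norm_le_gronwallBound_of_norm_deriv_right_le (f := yf u)
    (f' := fun x => vf S x (yf u x)) (δ := ‖yf u 0‖) (K := max 1 M) (ε := 0)
    (a := 0) (b := 1) hu.y_cont (fun t ht => hu.y_deriv_Ici ht)
    le_rfl (fun t ht => by
      rw [add_zero]; exact vf_norm_le hM t (yf u t)) x hx
  have h0' : ‖yf u 0‖ = ‖derivWithin u I01 0‖ := by
    rw [yf, h0, Prod.norm_def]
    simp [max_eq_right (norm_nonneg _)]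
  rw [gronwallBound_ε0, sub_zero, h0'] at key
  refine le_trans key ?_
  apply mul_le_mul_of_nonneg_left _ (norm_nonneg _)
  apply Real.exp_le_exp.2
  calc max 1 M * x ≤ max 1 M * 1 := by
        apply mul_le_mul_of_nonneg_left hx.2 (le_trans zero_le_one (le_max_left _ _))
  _ = max 1 M := mul_one _

lemma IsSol.bound_fst {S : ℝ → (Eu →L[ℝ] Eu)} {u : ℝ → Eu} (hu : IsSol S u) (h0 : u 0 = 0) {M : ℝ}
    (hM : ∀ x ∈ I01, ‖S x‖ ≤ M) {x : ℝ} (hx : x ∈ I01) :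
    ‖u x‖ ≤ ‖derivWithin u I01 0‖ * Real.exp (max 1 M) :=
  le_trans (norm_fst_le (yf u x)) (hu.bound h0 hM hx)

lemma IsSol.bound_snd {S : ℝ → (Eu →L[ℝ] Eu)} {u : ℝ → Eu} (hu : IsSol S u) (h0 : u 0 = 0) {M : ℝ}
    (hM : ∀ x ∈ I01, ‖S x‖ ≤ M) {x : ℝ} (hx : x ∈ I01) :
    ‖derivWithin u I01 x‖ ≤ ‖derivWithin u I01 0‖ * Real.exp (max 1 M) :=
  le_trans (norm_snd_le (yf u x)) (hu.bound h0 hM hx)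

/-- Uniqueness: a solution vanishing to first order at a point of `[0,1]` vanishes on `[0,1]`. -/
lemma IsSol.eq_zero {S : ℝ → (Eu →L[ℝ] Eu)} {u : ℝ → Eu} (hu : IsSol S u) {M : ℝ} (hM : ∀ x ∈ I01, ‖S x‖ ≤ M)
    {t₀ : ℝ} (ht₀ : t₀ ∈ I01) (h1 : u t₀ = 0) (h2 : derivWithin u I01 t₀ = 0) :
    ∀ x ∈ I01, u x = 0 ∧ derivWithin u I01 x = 0 := by
  have hv : ∀ t, LipschitzOnWith (Real.toNNReal (max 1 M)) (vf S t)
      ((fun _ => (univ : Set (Eu × Eu))) t) := fun t => (vf_lipschitz hM t).lipschitzOnWith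
  have hy0 : yf u t₀ = 0 := by
    rw [yf, h1, h2]; rfl
  have hgc : ∀ a b : ℝ, ContinuousOn (fun _ : ℝ => (0 : Eu × Eu)) (Icc a b) :=
    fun a b => continuousOn_const
  have hgd : ∀ t : ℝ, ∀ s : Set ℝ, HasDerivWithinAt (fun _ : ℝ => (0 : Eu × Eu))
      (vf S t ((fun _ : ℝ => (0 : Eu × Eu)) t)) s t := by
    intro t s
    rw [map_zero]
    exact hasDerivWithinAt_const t s 0
  have hright : EqOn (yf u) (fun _ => (0 : Eu × Eu)) (Icc t₀ 1) := by
    apply ODE_solution_unique_of_mem_Icc_right (fun t _ => hv t)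
      (hu.y_cont.mono (Icc_subset_Icc_left ht₀.1))
      (fun t ht => hu.y_deriv_Ici ⟨le_trans ht₀.1 ht.1, ht.2⟩)
      (fun t _ => trivial) (hgc t₀ 1) (fun t _ => hgd t _) (fun t _ => trivial) hy0
  have hleft : EqOn (yf u) (fun _ => (0 : Eu × Eu)) (Icc 0 t₀) := by
    apply ODE_solution_unique_of_mem_Icc_left (fun t _ => hv t)
      (hu.y_cont.mono (Icc_subset_Icc_right ht₀.2))
      (fun t ht => hu.y_deriv_Iic ⟨ht.1, le_trans ht.2 ht₀.2⟩)
      (fun t _ => trivial) (hgc 0 t₀) (fun t _ => hgd t _) (fun t _ => trivial) hy0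
  intro x hx
  have : yf u x = 0 := by
    rcases le_total x t₀ with h | h
    · exact hleft ⟨hx.1, h⟩
    · exact hright ⟨h, hx.2⟩
  exact ⟨congrArg Prod.fst this, congrArg Prod.snd this⟩



/-- Second-order Taylor estimate for a solution. -/
lemma IsSol.taylor {S : ℝ → (Eu →L[ℝ] Eu)} {u : ℝ → Eu} (hu : IsSol S u) {C : ℝ}
    (hC : ∀ x ∈ I01, ‖S x (u x)‖ ≤ C)
    {s t₀ : ℝ} (hs : s ∈ I01) (ht₀ : t₀ ∈ I01) :
    ‖u s - u t₀ - (s - t₀) • derivWithin u I01 t₀‖ ≤ C * |s - t₀| * |s - t₀| := by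
  set J : Set ℝ := Icc (min s t₀) (max s t₀) with hJ
  have hJsub : J ⊆ I01 := by
    apply Icc_subset_Icc (le_min hs.1 ht₀.1) (max_le hs.2 ht₀.2)
  have hsJ : s ∈ J := ⟨min_le_left _ _, le_max_left _ _⟩
  have ht₀J : t₀ ∈ J := ⟨min_le_right _ _, le_max_right _ _⟩
  have hconv : Convex ℝ J := convex_Icc _ _
  -- step 1 : bound on `u' x - u' t₀` on J
  have step1 : ∀ x ∈ J, ‖derivWithin u I01 x - derivWithin u I01 t₀‖ ≤ C * |x - t₀| := by
    intro x hx
    have := hconv.norm_image_sub_le_of_norm_hasDerivWithin_le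
      (f := derivWithin u I01) (f' := fun x => -(S x (u x))) (C := C)
      (fun z hz => (hu.d2 (hJsub hz)).mono hJsub)
      (fun z hz => by rw [norm_neg]; exact hC z (hJsub hz)) ht₀J hx
    simpa [Real.norm_eq_abs] using this
  -- step 2
  have habs : ∀ x ∈ J, |x - t₀| ≤ |s - t₀| := by
    intro x hx
    rw [hJ, mem_Icc] at hx
    rcases le_total s t₀ with h | h
    · rw [min_eq_left h, max_eq_right h] at hx
      have h1 : |s - t₀| = t₀ - s := by
        rw [abs_sub_comm]; exact abs_of_nonneg (by linarith)
      rw [h1, abs_le]; constructor <;> linarith [hx.1, hx.2]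
    · rw [min_eq_right h, max_eq_left h] at hx
      have h1 : |s - t₀| = s - t₀ := abs_of_nonneg (by linarith)
      rw [h1, abs_le]; constructor <;> linarith [hx.1, hx.2]
  have step2 := hconv.norm_image_sub_le_of_norm_hasDerivWithin_le
    (f := fun x => u x - (x - t₀) • derivWithin u I01 t₀)
    (f' := fun x => derivWithin u I01 x - derivWithin u I01 t₀)
    (C := C * |s - t₀|)
    (fun z hz => by
      have h1 : HasDerivWithinAt u (derivWithin u I01 z) J z :=
        (hu.d1 (hJsub hz)).mono hJsub
      have h2 : HasDerivWithinAt (fun x : ℝ => (x - t₀) • derivWithin u I01 t₀)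
          ((1:ℝ) • derivWithin u I01 t₀) J z :=
        (((hasDerivWithinAt_id z J).sub_const t₀)).smul_const _
      have h3 := h1.sub h2
      simp only [one_smul] at h3
      exact h3)
    (fun z hz => le_trans (step1 z hz)
      (mul_le_mul_of_nonneg_left (habs z hz)
        (le_trans (norm_nonneg _) (hC t₀ ht₀))))
    ht₀J hsJ
  have hsimp : u s - (s - t₀) • derivWithin u I01 t₀ -
      (u t₀ - (t₀ - t₀) • derivWithin u I01 t₀)
      = u s - u t₀ - (s - t₀) • derivWithin u I01 t₀ := by
    rw [sub_self, zero_smul, sub_zero]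
    abel
  rw [hsimp, Real.norm_eq_abs] at step2
  calc ‖u s - u t₀ - (s - t₀) • derivWithin u I01 t₀‖ ≤ C * |s - t₀| * |s - t₀| := step2

/-- The Wronskian-type identity for two solutions vanishing at `0`. -/
lemma wronskian {S : ℝ → (Eu →L[ℝ] Eu)} {u w : ℝ → Eu}
    (hu : IsSol S u) (hw : IsSol S w)
    (hsym : ∀ x ∈ I01, IsSelfAdjoint (S x))
    (hu0 : u 0 = 0) (hw0 : w 0 = 0) {t : ℝ} (ht : t ∈ I01) :
    ⟪u t, derivWithin w I01 t⟫ = ⟪derivWithin u I01 t, w t⟫ := by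
  set g : ℝ → ℝ := fun x => ⟪u x, derivWithin w I01 x⟫ - ⟪derivWithin u I01 x, w x⟫ with hg
  have hgd : ∀ x ∈ I01, HasDerivWithinAt g 0 I01 x := by
    intro x hx
    have h1 := HasDerivWithinAt.inner ℝ (hu.d1 hx) (hw.d2 hx)
    have h2 := HasDerivWithinAt.inner ℝ (hu.d2 hx) (hw.d1 hx)
    have h := h1.sub h2
    have hzero : (⟪u x, -(S x (w x))⟫ + ⟪derivWithin u I01 x, derivWithin w I01 x⟫)
        - (⟪derivWithin u I01 x, derivWithin w I01 x⟫ + ⟪-(S x (u x)), w x⟫) = 0 := by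
      have hsx : ⟪S x (u x), w x⟫ = ⟪u x, S x (w x)⟫ :=
        (ContinuousLinearMap.isSelfAdjoint_iff_isSymmetric.1 (hsym x hx)) (u x) (w x)
      rw [inner_neg_left, inner_neg_right]
      rw [hsx]
      ring
    rwa [hzero] at h
  have key := (convex_Icc (0:ℝ) 1).norm_image_sub_le_of_norm_hasDerivWithin_le
    (f := g) (f' := fun _ => (0:ℝ)) (C := 0) hgd (fun z _ => by simp)
    (left_mem_Icc.2 zero_le_one) ht
  have hg0 : g 0 = 0 := by
    rw [hg]; simp [hu0, hw0]
  have : ‖g t - g 0‖ ≤ 0 := by simpa using key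
  have hgt : g t = g 0 := by
    have := norm_le_zero_iff.1 this
    linarith [sub_eq_zero.1 this]
  have hgt0 : g t = 0 := by rw [hgt, hg0]
  have hfin : ⟪u t, derivWithin w I01 t⟫ - ⟪derivWithin u I01 t, w t⟫ = 0 := hgt0
  linarith


/-- The space of all solutions vanishing at `0`. -/
def Vsp (S : ℝ → (Eu →L[ℝ] Eu)) : Submodule ℝ (ℝ → Eu) := jacobiSolutions S 1 one_pos 0

lemma mem_Vsp_of_mem {S : ℝ → (Eu →L[ℝ] Eu)} {T : ℝ} {u : ℝ → Eu}
    (h : u ∈ jacobiSolutions S 1 one_pos T) : u ∈ Vsp S :=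
  ⟨h.1, h.2.1, h.2.2.1, h.2.2.2.1, h.2.2.2.1⟩

lemma Vsp.isSol {S : ℝ → (Eu →L[ℝ] Eu)} (u : Vsp S) : IsSol S ↑u := IsSol.of_mem u.2

lemma Vsp.zero_at {S : ℝ → (Eu →L[ℝ] Eu)} (u : Vsp S) : (↑u : ℝ → Eu) 0 = 0 := u.2.2.2.2.1

lemma Vsp.clamp {S : ℝ → (Eu →L[ℝ] Eu)} (u : Vsp S) (x : ℝ) :
    (↑u : ℝ → Eu) x = (↑u : ℝ → Eu) (min (max x 0) 1) := u.2.1 x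

lemma Vsp.diffAt {S : ℝ → (Eu →L[ℝ] Eu)} (u : Vsp S) {t₀ : ℝ} (ht₀ : t₀ ∈ I01) :
    DifferentiableWithinAt ℝ (↑u : ℝ → Eu) I01 t₀ :=
  ((Vsp.isSol u).1.differentiableOn (by norm_num)) t₀ ht₀

/-- Evaluation of the derivative at a point, as a linear map. -/
def dmap (S : ℝ → (Eu →L[ℝ] Eu)) (t₀ : ℝ) (ht₀ : t₀ ∈ I01) : Vsp S →ₗ[ℝ] Eu where
  toFun u := derivWithin (↑u) I01 t₀
  map_add' u v := by
    have hI := (uniqueDiffOn_Icc one_pos) t₀ ht₀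
    exact derivWithin_add (Vsp.diffAt u ht₀) (Vsp.diffAt v ht₀)
  map_smul' c u := by
    have hI := (uniqueDiffOn_Icc one_pos) t₀ ht₀
    exact derivWithin_const_smul c (Vsp.diffAt u ht₀)

/-- Evaluation at a point, as a linear map. -/
def emap (S : ℝ → (Eu →L[ℝ] Eu)) (t : ℝ) : Vsp S →ₗ[ℝ] Eu where
  toFun u := (↑u : ℝ → Eu) t
  map_add' _ _ := rfl
  map_smul' _ _ := rfl

lemma zero_mem_I01 : (0:ℝ) ∈ I01 := left_mem_Icc.2 zero_le_one

lemma dmap_inj {S : ℝ → (Eu →L[ℝ] Eu)} {M : ℝ} (hM : ∀ x ∈ I01, ‖S x‖ ≤ M) :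
    Function.Injective (dmap S 0 zero_mem_I01) := by
  rw [← LinearMap.ker_eq_bot]
  rw [Submodule.eq_bot_iff]
  intro u hu
  have h2 : derivWithin (↑u : ℝ → Eu) I01 0 = 0 := hu
  have hz := (Vsp.isSol u).eq_zero hM zero_mem_I01 (Vsp.zero_at u) h2
  apply Subtype.ext
  funext x
  have := Vsp.clamp u x
  rw [this]
  exact (hz _ (clamp_mem x)).1

lemma exists_sol_of_pos {S : ℝ → (Eu →L[ℝ] Eu)} {t : ℝ} (h : 0 < conjMult S t) :
    ∃ u : ℝ → Eu, u ∈ jacobiSolutions S 1 one_pos t ∧ u ≠ 0 := by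
  have hrank : Module.rank ℝ ↥(jacobiSolutions S 1 one_pos t) ≠ 0 := by
    intro h0
    rw [conjMult, h0] at h
    simp at h
  have hpos : 0 < Module.rank ℝ ↥(jacobiSolutions S 1 one_pos t) :=
    pos_iff_ne_zero.2 hrank
  obtain ⟨x, hx⟩ := rank_pos_iff_exists_ne_zero.1 hpos
  exact ⟨↑x, x.2, fun h0 => hx (Subtype.ext h0)⟩

lemma exists_anti {V W : Type*} [NormedAddCommGroup V] [NormedSpace ℝ V]
    [FiniteDimensional ℝ V] [NormedAddCommGroup W] [NormedSpace ℝ W]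
    (f : V →ₗ[ℝ] W) (hf : Function.Injective f) :
    ∃ c : ℝ, 0 < c ∧ ∀ v, c * ‖v‖ ≤ ‖f v‖ := by
  obtain ⟨K, hK, hanti⟩ := f.exists_antilipschitzWith (LinearMap.ker_eq_bot.2 hf)
  have hK' : (0:ℝ) < (K:ℝ) := hK
  refine ⟨(K:ℝ)⁻¹, by positivity, fun v => ?_⟩
  have h1 := hanti.le_mul_dist v 0
  rw [dist_zero_right, map_zero, dist_zero_right] at h1
  rw [inv_mul_le_iff₀ hK']
  exact h1
set_option maxHeartbeats 1000000

/-- The final arithmetic contradiction, isolated in a clean context. -/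
lemma final_arith {c c' B C₁ Γ N d na nb nw0 iQ iwb : ℝ}
    (hc0 : 0 < c) (hc'0 : 0 < c') (hC₁ : 1 ≤ C₁) (hB0 : 0 ≤ B)
    (hΓ : Γ = c'^2*(C₁+B)^2 + c^2*B*C₁ + c*C₁^2*(C₁+B))
    (hN : 0 < N) (hd0 : 0 < d) (hd1 : d ≤ 1)
    (hclose : (Γ + 1) * d < c^2*c'^2)
    (na0 : 0 ≤ na) (nb0 : 0 ≤ nb) (nw00 : 0 ≤ nw0)
    (pythag : na^2 + nb^2 = N^2)
    (hbb : c*nb ≤ (C₁+B)*N*d)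
    (hanti : c'*na ≤ nw0)
    (hwle : nw0 ≤ na*C₁)
    (hQw0 : iQ = nw0^2 + iwb)
    (hQabs : |iQ| ≤ B*N*d*nw0)
    (hwbw0 : |iwb| ≤ nb*C₁*nw0) : False := by
  have hC₁0 : (0:ℝ) < C₁ := lt_of_lt_of_le one_pos hC₁
  have hN0 : (0:ℝ) ≤ N := hN.le
  have hdd : d*d ≤ d := mul_le_of_le_one_right hd0.le hd1
  have ha_le : na ≤ N := by nlinarith [pythag, sq_nonneg nb, na0, hN0]
  have hw0sq : nw0^2 ≤ B*N*d*nw0 + nb*C₁*nw0 := by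
    have h2 := le_abs_self iQ
    have h3 := neg_abs_le iwb
    linarith
  have hca : c'^2*na^2 ≤ nw0^2 := by
    have h2 := mul_self_le_mul_self (mul_nonneg hc'0.le na0) hanti
    linarith [h2]
  have hBN : 0 ≤ B*N*d + nb*C₁ :=
    add_nonneg (mul_nonneg (mul_nonneg hB0 hN0) hd0.le) (mul_nonneg nb0 hC₁0.le)
  have h1 : nw0^2 ≤ (B*N*d + nb*C₁)*(na*C₁) := by
    calc nw0^2 ≤ (B*N*d + nb*C₁)*nw0 := by linarith [hw0sq]
    _ ≤ (B*N*d + nb*C₁)*(na*C₁) := mul_le_mul_of_nonneg_left hwle hBN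
  have h2a : B*N*d*(na*C₁) ≤ B*C₁*N^2*d := by
    have h := mul_le_mul_of_nonneg_left ha_le
      (mul_nonneg (mul_nonneg (mul_nonneg hB0 hN0) hd0.le) hC₁0.le)
    linarith [h]
  have h2b : nb*C₁*(na*C₁) ≤ C₁^2*nb*N := by
    have h := mul_le_mul_of_nonneg_left ha_le
      (mul_nonneg (mul_nonneg nb0 hC₁0.le) hC₁0.le)
    linarith [h]
  have hstep : c'^2*na^2 ≤ B*C₁*N^2*d + C₁^2*nb*N := by linarith [hca, h1, h2a, h2b]
  have hXnn : 0 ≤ c*nb := mul_nonneg hc0.le nb0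
  have hkey : c^2*c'^2*N^2 ≤ Γ * (N^2*d) := by
    have h1' := mul_le_mul_of_nonneg_left hstep (sq_nonneg c)
    have h2 : c'^2*(c*nb)^2 ≤ c'^2*((C₁+B)*N*d)^2 := by
      apply mul_le_mul_of_nonneg_left _ (sq_nonneg c')
      rw [sq, sq]
      exact mul_self_le_mul_self hXnn hbb
    have h3 : c*C₁^2*N*(c*nb) ≤ c*C₁^2*N*((C₁+B)*N*d) :=
      mul_le_mul_of_nonneg_left hbb
        (mul_nonneg (mul_nonneg hc0.le (sq_nonneg _)) hN0)
    have h4 : c'^2*((C₁+B)*N*d)^2 ≤ c'^2*(C₁+B)^2*(N^2*d) := by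
      have hnn : (0:ℝ) ≤ c'^2*(C₁+B)^2*N^2 := by positivity
      have h5 := mul_le_mul_of_nonneg_left hdd hnn
      calc c'^2*((C₁+B)*N*d)^2 = c'^2*(C₁+B)^2*N^2*(d*d) := by ring
      _ ≤ c'^2*(C₁+B)^2*N^2*d := h5
      _ = c'^2*(C₁+B)^2*(N^2*d) := by ring
    have hpy : c^2*c'^2*N^2 = c^2*(c'^2*na^2) + c'^2*(c*nb)^2 := by
      have hh : N^2 = na^2 + nb^2 := pythag.symm
      rw [hh]; ring
    have h24 : c'^2*(c*nb)^2 ≤ c'^2*(C₁+B)^2*(N^2*d) := le_trans h2 h4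
    rw [hΓ]
    linarith [hpy, h24, h1', h3]
  have hfinal : c^2*c'^2 ≤ Γ*d := by
    have h2 : (0:ℝ) < N^2 := pow_pos hN 2
    have h3 : c^2*c'^2*(N^2) ≤ (Γ*d)*(N^2) := by linarith [hkey]
    exact le_of_mul_le_mul_right h3 h2
  linarith [hclose, hfinal, hd0]


set_option maxHeartbeats 1000000 in
set_option synthInstance.maxHeartbeats 400000 in
/-- Conjugate instants are isolated. -/
lemma isolated {S : ℝ → (Eu →L[ℝ] Eu)} (hScont : ContinuousOn S I01)
    (hsym : ∀ x ∈ I01, IsSelfAdjoint (S x))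
    {t₀ : ℝ} (ht₀ : t₀ ∈ I01) :
    ∃ ε : ℝ, 0 < ε ∧ ∀ t ∈ Ioc (0:ℝ) 1, 0 < conjMult S t → |t - t₀| < ε → t = t₀ := by
  classical
  -- bound on S
  obtain ⟨M₀, hM₀⟩ := (isCompact_Icc : IsCompact I01).exists_bound_of_continuousOn hScont
  set M := max M₀ 0 with hM_def
  have hM : ∀ x ∈ I01, ‖S x‖ ≤ M := fun x hx => le_trans (hM₀ x hx) (le_max_left _ _)
  have hM0 : 0 ≤ M := le_max_right _ _
  set C₁ := Real.exp (max 1 M) with hC₁_def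
  have hC₁ : 1 ≤ C₁ := Real.one_le_exp (le_trans zero_le_one (le_max_left _ _))
  have hC₁0 : 0 < C₁ := lt_of_lt_of_le one_pos hC₁
  set B := M * C₁ with hB_def
  have hB0 : 0 ≤ B := mul_nonneg hM0 (le_of_lt hC₁0)
  -- linear algebra setup
  set D0 := dmap S 0 zero_mem_I01 with hD0_def
  have hinj : Function.Injective D0 := dmap_inj hM
  set W := LinearMap.range D0 with hW_def
  set K := Submodule.map D0 (LinearMap.ker (emap S t₀)) with hK_def
  have hKW : K ≤ W := LinearMap.map_le_range
  set e := LinearEquiv.ofInjective D0 hinj with he_def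
  have hRD : ∀ w : W, D0 (e.symm w) = ↑w := by
    intro w
    conv_rhs => rw [← e.apply_symm_apply w]
    rfl
  -- the two injective comparison maps and their antilipschitz constants
  set φ : ↥(W ⊓ Kᗮ) →ₗ[ℝ] Eu :=
    (emap S t₀) ∘ₗ (e.symm.toLinearMap ∘ₗ Submodule.inclusion inf_le_left) with hφ_def
  have hφ_inj : Function.Injective φ := by
    rw [← LinearMap.ker_eq_bot, Submodule.eq_bot_iff]
    intro v hv
    have hv' : (↑(e.symm (Submodule.inclusion (inf_le_left : W ⊓ Kᗮ ≤ W) v)) : ℝ → Eu) t₀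
        = 0 := hv
    have hker : e.symm (Submodule.inclusion (inf_le_left : W ⊓ Kᗮ ≤ W) v)
        ∈ LinearMap.ker (emap S t₀) := hv'
    have hmem : (↑v : Eu) ∈ K := Submodule.mem_map.2 ⟨_, hker, hRD _⟩
    have hbot : (↑v : Eu) ∈ K ⊓ Kᗮ := ⟨hmem, (Submodule.mem_inf.1 v.2).2⟩
    rw [Submodule.inf_orthogonal_eq_bot, Submodule.mem_bot] at hbot
    exact Subtype.ext hbot
  set ψ : ↥K →ₗ[ℝ] Eu :=
    (dmap S t₀ ht₀) ∘ₗ (e.symm.toLinearMap ∘ₗ Submodule.inclusion hKW) with hψ_def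
  have hψ_inj : Function.Injective ψ := by
    rw [← LinearMap.ker_eq_bot, Submodule.eq_bot_iff]
    intro v hv
    set uu := e.symm (Submodule.inclusion hKW v) with huu
    have hv' : derivWithin (↑uu : ℝ → Eu) I01 t₀ = 0 := hv
    obtain ⟨u₀, hu₀ker, hu₀D⟩ := v.2
    have huu_eq : uu = u₀ := by
      apply hinj
      rw [hRD, hu₀D]
      rfl
    have huu_t₀ : (↑uu : ℝ → Eu) t₀ = 0 := by
      rw [huu_eq]
      exact hu₀ker
    have hz := (Vsp.isSol uu).eq_zero hM ht₀ huu_t₀ hv'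
    have huu0 : uu = 0 := by
      apply Subtype.ext
      funext x
      rw [Vsp.clamp uu x]
      exact (hz _ (clamp_mem x)).1
    apply Subtype.ext
    have : D0 uu = ↑v := by rw [hRD]; rfl
    rw [huu0, map_zero] at this
    exact this.symm
  haveI : FiniteDimensional ℝ ↥(W ⊓ Kᗮ) := FiniteDimensional.finiteDimensional_submodule _
  haveI : FiniteDimensional ℝ ↥K := FiniteDimensional.finiteDimensional_submodule _
  obtain ⟨c, hc0, hc⟩ := exists_anti φ hφ_inj
  obtain ⟨c', hc'0, hc'⟩ := exists_anti ψ hψ_inj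
  -- the constant
  set Γ := c'^2*(C₁+B)^2 + c^2*B*C₁ + c*C₁^2*(C₁+B) with hΓ_def
  have hCB : 0 ≤ C₁ + B := by linarith only [hC₁, hB0]
  have hΓ0 : 0 ≤ Γ := by
    rw [hΓ_def]
    have t1 : 0 ≤ c'^2*(C₁+B)^2 := mul_nonneg (sq_nonneg _) (sq_nonneg _)
    have t2 : 0 ≤ c^2*B*C₁ := mul_nonneg (mul_nonneg (sq_nonneg _) hB0) hC₁0.le
    have t3 : 0 ≤ c*C₁^2*(C₁+B) := mul_nonneg (mul_nonneg hc0.le (sq_nonneg _)) hCB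
    linarith
  refine ⟨c^2*c'^2 / (Γ + 1),
    div_pos (mul_pos (pow_pos hc0 2) (pow_pos hc'0 2)) (by linarith), ?_⟩
  intro t ht hconj hclose
  by_contra hne
  -- extract a nonzero solution
  obtain ⟨u, huj, hune⟩ := exists_sol_of_pos hconj
  have huV : u ∈ Vsp S := mem_Vsp_of_mem huj
  set uV : Vsp S := ⟨u, huV⟩ with huV_def
  set v := D0 uV with hv_def
  have hvne : v ≠ 0 := by
    intro h0
    apply hune
    have : uV = 0 := hinj (by rw [← hv_def, h0, map_zero])
    exact congrArg Subtype.val this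
  set N := ‖v‖ with hN_def
  have hN : 0 < N := norm_pos_iff.2 hvne
  have htI : t ∈ I01 := ⟨le_of_lt ht.1, ht.2⟩
  set d := |t - t₀| with hd_def
  have hd0 : 0 < d := abs_pos.2 (sub_ne_zero.2 hne)
  have hd1 : d ≤ 1 := by
    rw [hd_def, abs_le]
    constructor <;> [linarith only [htI.1, ht₀.2]; linarith only [htI.2, ht₀.1]]
  have hdd : d * d ≤ d := mul_le_of_le_one_right hd0.le hd1
  -- orthogonal decomposition
  have hvW : v ∈ W := ⟨uV, rfl⟩
  set a : Eu := ↑(K.orthogonalProjectionOnto v) with ha_def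
  have haK : a ∈ K := Submodule.coe_mem _
  set b := v - a with hb_def
  have hbK : b ∈ Kᗮ := K.sub_starProjection_mem_orthogonal v
  have haW : a ∈ W := hKW haK
  have hbW : b ∈ W := Submodule.sub_mem W hvW haW
  have hab : ⟪a, b⟫ = 0 := (Submodule.mem_orthogonal K b).1 hbK a haK
  have hvab : v = a + b := by rw [hb_def]; abel
  have pythag : ‖a‖^2 + ‖b‖^2 = N^2 := by
    rw [hN_def, hvab, norm_add_sq_real, hab]
    ring
  -- the two solutions
  set ua := e.symm ⟨a, haW⟩ with hua_def
  set ub := e.symm ⟨b, hbW⟩ with hub_def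
  have hDa : D0 ua = a := hRD _
  have hDb : D0 ub = b := hRD _
  have hsum : uV = ua + ub := by
    apply hinj
    rw [map_add, hDa, hDb, ← hv_def, hvab]
  -- `ua` vanishes at `t₀`
  have hua_t₀ : (↑ua : ℝ → Eu) t₀ = 0 := by
    obtain ⟨u₀, hu₀ker, hu₀D⟩ := haK
    have : ua = u₀ := hinj (by rw [hDa, hu₀D])
    rw [this]
    exact hu₀ker
  -- growth bounds
  have bnd1 : ∀ z : Vsp S, ∀ x ∈ I01, ‖(↑z : ℝ → Eu) x‖ ≤ ‖D0 z‖ * C₁ :=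
    fun z x hx => (Vsp.isSol z).bound_fst (Vsp.zero_at z) hM hx
  have bnd2 : ∀ z : Vsp S, ∀ x ∈ I01, ‖derivWithin (↑z : ℝ → Eu) I01 x‖ ≤ ‖D0 z‖ * C₁ :=
    fun z x hx => (Vsp.isSol z).bound_snd (Vsp.zero_at z) hM hx
  -- Taylor estimate for u
  set Q := derivWithin u I01 t₀ with hQ_def
  set P := u t₀ with hP_def
  have hut : u t = 0 := huj.2.2.2.2
  have hTay : ‖P + (t - t₀) • Q‖ ≤ B*N*(d*d) := by
    have hC : ∀ x ∈ I01, ‖S x (u x)‖ ≤ M*(N*C₁) := by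
      intro x hx
      calc ‖S x (u x)‖ ≤ ‖S x‖ * ‖u x‖ := (S x).le_opNorm _
      _ ≤ M*(N*C₁) := by
          apply mul_le_mul (hM x hx) (bnd1 uV x hx) (norm_nonneg _) hM0
    have htay := (Vsp.isSol uV).taylor hC htI ht₀
    have heq : (↑uV : ℝ → Eu) t - (↑uV : ℝ → Eu) t₀
        - (t - t₀) • derivWithin (↑uV : ℝ → Eu) I01 t₀ = -(P + (t - t₀) • Q) := by
      show u t - u t₀ - (t - t₀) • derivWithin u I01 t₀ = _
      rw [hut, ← hP_def, ← hQ_def]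
      abel
    rw [heq, norm_neg] at htay
    calc ‖P + (t - t₀) • Q‖ ≤ M*(N*C₁) * |t - t₀| * |t - t₀| := htay
    _ = B*N*(d*d) := by rw [hB_def, hd_def]; ring
  -- `P = ub t₀` and the bound on `b`
  have hP_eq : P = (↑ub : ℝ → Eu) t₀ := by
    have h1 : u t₀ = (↑ua : ℝ → Eu) t₀ + (↑ub : ℝ → Eu) t₀ := by
      have := congrArg (fun (z : Vsp S) => (↑z : ℝ → Eu) t₀) hsum
      exact this
    rw [hP_def, h1, hua_t₀, zero_add]
  have hQnorm : ‖Q‖ ≤ N * C₁ := bnd2 uV t₀ ht₀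
  have hub_t₀ : ‖(↑ub : ℝ → Eu) t₀‖ ≤ (C₁ + B)*N*d := by
    have h1 : ‖P‖ ≤ ‖P + (t - t₀) • Q‖ + ‖(t - t₀) • Q‖ := by
      have := norm_add_le (P + (t - t₀) • Q) (-((t - t₀) • Q))
      simpa using this
    have h2 : ‖(t - t₀) • Q‖ = d * ‖Q‖ := by
      rw [norm_smul, Real.norm_eq_abs, hd_def]
    rw [← hP_eq]
    have h5 : ‖P‖ ≤ B*N*(d*d) + d*(N*C₁) := by
      rw [h2] at h1
      refine le_trans h1 (add_le_add hTay ?_)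
      exact mul_le_mul_of_nonneg_left hQnorm (le_of_lt hd0)
    have h6 : B*N*(d*d) ≤ B*N*d :=
      mul_le_mul_of_nonneg_left hdd (mul_nonneg hB0 (norm_nonneg v))
    have h7 : (C₁ + B)*N*d = d*(N*C₁) + B*N*d := by ring
    linarith only [h5, h6, h7]
  have hb_bound : c * ‖b‖ ≤ (C₁ + B)*N*d := by
    have hbWb : b ∈ W ⊓ Kᗮ := Submodule.mem_inf.2 ⟨hbW, hbK⟩
    have hφb : φ ⟨b, hbWb⟩ = (↑ub : ℝ → Eu) t₀ := by
      have hincl : (Submodule.inclusion (inf_le_left : W ⊓ Kᗮ ≤ W) ⟨b, hbWb⟩ : W)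
          = ⟨b, hbW⟩ := Subtype.ext rfl
      show emap S t₀ (e.symm (Submodule.inclusion _ ⟨b, hbWb⟩)) = _
      rw [hincl]
      rfl
    have := hc ⟨b, hbWb⟩
    rw [hφb] at this
    have hnb : ‖(⟨b, hbWb⟩ : ↥(W ⊓ Kᗮ))‖ = ‖b‖ := rfl
    rw [hnb] at this
    exact le_trans this hub_t₀
  -- `w0`, Wronskian and the main inequality
  set w0 := derivWithin (↑ua : ℝ → Eu) I01 t₀ with hw0_def
  set wb := derivWithin (↑ub : ℝ → Eu) I01 t₀ with hwb_def
  have hw0_anti : c' * ‖a‖ ≤ ‖w0‖ := by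
    have hψa : ψ ⟨a, haK⟩ = w0 := by
      have hincl : (Submodule.inclusion hKW ⟨a, haK⟩ : W) = ⟨a, haW⟩ := Subtype.ext rfl
      show dmap S t₀ ht₀ (e.symm (Submodule.inclusion hKW ⟨a, haK⟩)) = _
      rw [hincl]
      rfl
    have := hc' ⟨a, haK⟩
    rw [hψa] at this
    exact this
  have hw0_le : ‖w0‖ ≤ ‖a‖ * C₁ := by
    have := bnd2 ua t₀ ht₀
    rw [hDa] at this
    exact this
  have hwb_le : ‖wb‖ ≤ ‖b‖ * C₁ := by
    have := bnd2 ub t₀ ht₀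
    rw [hDb] at this
    exact this
  have hPw0 : ⟪P, w0⟫ = 0 := by
    have hwr := wronskian (Vsp.isSol ub) (Vsp.isSol ua) hsym
      (Vsp.zero_at ub) (Vsp.zero_at ua) ht₀
    rw [← hw0_def, ← hwb_def] at hwr
    rw [hP_eq, hwr, hua_t₀, inner_zero_right]
  have hQ_sum : Q = w0 + wb := by
    have h := congrArg (dmap S t₀ ht₀) hsum
    rw [map_add] at h
    exact h
  have hQw0 : ⟪Q, w0⟫ = ‖w0‖^2 + ⟪wb, w0⟫ := by
    rw [hQ_sum, inner_add_left, real_inner_self_eq_norm_sq]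
  have hF5 : d * |⟪Q, w0⟫| ≤ B*N*(d*d)*‖w0‖ := by
    have h1 : ⟪P + (t - t₀) • Q, w0⟫ = (t - t₀) * ⟪Q, w0⟫ := by
      rw [inner_add_left, hPw0, real_inner_smul_left, zero_add]
    have h2 : |⟪P + (t - t₀) • Q, w0⟫| ≤ B*N*(d*d)*‖w0‖ := by
      refine le_trans (abs_real_inner_le_norm _ _) ?_
      exact mul_le_mul_of_nonneg_right hTay (norm_nonneg _)
    rw [h1, abs_mul, ← hd_def] at h2
    exact h2
  have hQabs : |⟪Q, w0⟫| ≤ B*N*d*‖w0‖ := by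
    have h3 : B*N*(d*d)*‖w0‖ = d*(B*N*d*‖w0‖) := by ring
    rw [h3] at hF5
    exact le_of_mul_le_mul_left hF5 hd0
  have hwbw0 : |⟪wb, w0⟫| ≤ ‖b‖ * C₁ * ‖w0‖ := by
    refine le_trans (abs_real_inner_le_norm _ _) ?_
    exact mul_le_mul_of_nonneg_right hwb_le (norm_nonneg _)
  have hεd : (Γ + 1) * d < c^2*c'^2 := by
    have h1 : d < c^2*c'^2 / (Γ + 1) := by rw [hd_def]; exact hclose
    have h2 : (0:ℝ) < Γ + 1 := by linarith only [hΓ0]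
    calc (Γ + 1) * d < (Γ + 1) * (c^2*c'^2 / (Γ + 1)) := mul_lt_mul_of_pos_left h1 h2
    _ = c^2*c'^2 := by rw [mul_comm]; exact div_mul_cancel₀ _ (ne_of_gt h2)
  exact final_arith hc0 hc'0 hC₁ hB0 hΓ_def hN hd0 hd1 hεd (norm_nonneg a)
    (norm_nonneg b) (norm_nonneg w0) pythag hb_bound hw0_anti hw0_le hQw0 hQabs hwbw0
end ConjFin

/-- If the geodesic is non-degenerate, i.e. `m 1 = 0`, then the set of conjugate instants
`{t ∈ (0,1] : m t > 0}` is finite. -/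
theorem conjugate_instants_finite {n : ℕ}
    (S : ℝ → (EuclideanSpace ℝ (Fin n) →L[ℝ] EuclideanSpace ℝ (Fin n)))
    (hS : ContDiffOn ℝ (⊤ : ℕ∞) S (Icc 0 1))
    (hsym : ∀ x ∈ Icc (0:ℝ) 1, IsSelfAdjoint (S x))
    (hnd : conjMult S 1 = 0) :
    {t : ℝ | t ∈ Ioc (0:ℝ) 1 ∧ 0 < conjMult S t}.Finite := by
  classical
  have hScont : ContinuousOn S (Icc 0 1) := hS.continuousOn
  have hiso : ∀ t₀ ∈ Icc (0:ℝ) 1, ∃ ε : ℝ, 0 < ε ∧ ∀ t ∈ Ioc (0:ℝ) 1,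
      0 < conjMult S t → |t - t₀| < ε → t = t₀ :=
    fun t₀ ht₀ => ConjFin.isolated hScont hsym ht₀
  choose! ε hε0 hεp using hiso
  obtain ⟨F, hFmem, hFcov⟩ := (isCompact_Icc : IsCompact (Icc (0:ℝ) 1)).elim_nhds_subcover
    (fun x => Metric.ball x (ε x)) (fun x hx => Metric.ball_mem_nhds x (hε0 x hx))
  apply Set.Finite.subset F.finite_toSet
  intro t htC
  have htIoc : t ∈ Ioc (0:ℝ) 1 := htC.1
  have htIcc : t ∈ Icc (0:ℝ) 1 := Ioc_subset_Icc_self htIoc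
  have hcov := hFcov htIcc
  rw [Set.mem_iUnion₂] at hcov
  obtain ⟨x, hxF, hxt⟩ := hcov
  have hdist : |t - x| < ε x := by
    rw [← Real.dist_eq]
    exact Metric.mem_ball.1 hxt
  have ht_eq : t = x := hεp x (hFmem x hxF) t htIoc htC.2 hdist
  rw [ht_eq]
  exact Finset.mem_coe.2 hxF
end
end

section
/- Let H be a real Hilbert space and let L : [0,1] → L(H) be a norm-continuous path of operators such that for every t ∈ [0,1], L_t = I_H + K_t is invertible, where K_t is compact and selfadjoint. Then μ(L_0) = μ(L_1), where μ denotes the Morse index. -/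
open Set RealInnerProductSpace

noncomputable section

variable {H : Type*} [NormedAddCommGroup H] [InnerProductSpace ℝ H] [CompleteSpace H]

/-- The Morse index `μ(T)` of a bounded operator `T` on a real Hilbert space: the supremum of
the dimensions of subspaces on which the quadratic form `u ↦ ⟪T u, u⟫` is negative definite. -/
def morseIndex (T : H →L[ℝ] H) : ℕ∞ :=
  ⨆ U ∈ {U : Submodule ℝ H | ∀ u ∈ U, u ≠ 0 → ⟪T u, u⟫ < 0},
    (Module.rank ℝ ↥U).toENat

variable {G : Type*} [NormedAddCommGroup G] [InnerProductSpace ℝ G] [CompleteSpace G]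

/-- A symmetric operator whose quadratic form is bounded by `M` has norm at most `M`. -/
lemma opNorm_le_of_quadform {T : G →L[ℝ] G} (hsym : ∀ x y : G, ⟪T x, y⟫ = ⟪x, T y⟫)
    {M : ℝ} (hM : 0 ≤ M) (h : ∀ x : G, |⟪T x, x⟫| ≤ M * ‖x‖ ^ 2) : ‖T‖ ≤ M := by
  refine ContinuousLinearMap.opNorm_le_bound T hM fun x => ?_
  rcases eq_or_ne (T x) 0 with h0 | h0
  · rw [h0, norm_zero]; positivity
  have hx : x ≠ 0 := by rintro rfl; simp at h0
  set y : G := (‖x‖ / ‖T x‖) • T x with hy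
  have hny : ‖y‖ = ‖x‖ := by
    rw [hy, norm_smul, Real.norm_eq_abs, abs_div, abs_norm, abs_norm,
      div_mul_eq_mul_div, mul_div_assoc, div_self (norm_ne_zero_iff.2 h0), mul_one]
  have hTxy : ⟪T x, y⟫ = ‖x‖ * ‖T x‖ := by
    rw [hy, real_inner_smul_right, real_inner_self_eq_norm_sq]
    rw [div_mul_eq_mul_div, pow_two, ← mul_assoc, mul_div_assoc,
      div_self (norm_ne_zero_iff.2 h0), mul_one]
  have hpolar : ⟪T (x + y), x + y⟫ - ⟪T (x - y), x - y⟫ = 4 * ⟪T x, y⟫ := by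
    have h1 : ⟪T y, x⟫ = ⟪T x, y⟫ := by rw [hsym y x, real_inner_comm]
    simp only [map_add, map_sub, inner_add_left, inner_add_right, inner_sub_left,
      inner_sub_right]
    ring_nf
    linarith [h1]
  have hineq : 4 * (‖x‖ * ‖T x‖) ≤ 4 * (M * ‖x‖ ^ 2) := by
    have h2 := h (x + y)
    have h3 := h (x - y)
    have hpar := parallelogram_law_with_norm ℝ x y
    have : 4 * ⟪T x, y⟫ ≤ M * ‖x + y‖ ^ 2 + M * ‖x - y‖ ^ 2 := by
      rw [← hpolar]
      have := abs_le.1 h2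
      have := abs_le.1 h3
      linarith
    rw [hTxy] at this
    have hn : M * ‖x + y‖ ^ 2 + M * ‖x - y‖ ^ 2 = M * (‖x + y‖ * ‖x + y‖ + ‖x - y‖ * ‖x - y‖) := by
      ring
    rw [hn, ← pow_two, ← pow_two, hpar, hny] at this
    nlinarith
  have hx0 : 0 < ‖x‖ := norm_pos_iff.2 hx
  nlinarith

/-- A nonzero compact selfadjoint operator on a real Hilbert space has an eigenvalue of
absolute value equal to its norm. -/
lemma exists_eigenvector_norm {T : G →L[ℝ] G} (hT : IsSelfAdjoint T)
    (hcpt : IsCompactOperator ⇑T) (hne : T ≠ 0) :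
    ∃ (x : G) (μ : ℝ), x ≠ 0 ∧ T x = μ • x ∧ |μ| = ‖T‖ := by
  have hsym : ∀ x y : G, ⟪T x, y⟫ = ⟪x, T y⟫ := fun x y => hT.isSymmetric x y
  have hTpos : 0 < ‖T‖ := by
    rcases (norm_pos_iff).2 hne with h; exact h
  -- existence of near-maximizers of the quadratic form
  have key : ∀ ε : ℝ, 0 < ε → ∃ x : G, ‖x‖ = 1 ∧ ‖T‖ - ε < |⟪T x, x⟫| := by
    intro ε hε
    by_contra hcon
    push_neg at hcon
    obtain ⟨v, hv⟩ : ∃ v : G, T v ≠ 0 := by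
      by_contra hv; push_neg at hv
      exact hne (by ext w; simpa using hv w)
    have hvne : v ≠ 0 := by rintro rfl; simp at hv
    have hvn : (0:ℝ) < ‖v‖ := norm_pos_iff.2 hvne
    have hunit : ‖(‖v‖⁻¹ • v)‖ = 1 := by
      rw [norm_smul, Real.norm_eq_abs, abs_inv, abs_norm, inv_mul_cancel₀ hvn.ne']
    have hM0 : 0 ≤ ‖T‖ - ε := le_trans (abs_nonneg _) (hcon _ hunit)
    have hq : ∀ x : G, |⟪T x, x⟫| ≤ (‖T‖ - ε) * ‖x‖ ^ 2 := by
      intro x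
      rcases eq_or_ne x 0 with rfl | hx
      · simp
      have hxn : (0:ℝ) < ‖x‖ := norm_pos_iff.2 hx
      have hux : ‖(‖x‖⁻¹ • x)‖ = 1 := by
        rw [norm_smul, Real.norm_eq_abs, abs_inv, abs_norm, inv_mul_cancel₀ hxn.ne']
      have hb := hcon _ hux
      set u : G := ‖x‖⁻¹ • x with hu
      have hxu : x = ‖x‖ • u := by
        rw [hu, smul_smul, mul_inv_cancel₀ hxn.ne', one_smul]
      have h2 : |⟪T x, x⟫| ≤ (‖T‖ - ε) * (‖x‖ * ‖x‖) := by
        have e1 : ⟪T x, x⟫ = ‖x‖ * (‖x‖ * ⟪T u, u⟫) := by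
          conv_lhs => rw [hxu]
          rw [map_smul, real_inner_smul_left, real_inner_smul_right]
        rw [e1, abs_mul, abs_mul, abs_norm]
        calc ‖x‖ * (‖x‖ * |⟪T u, u⟫|) ≤ ‖x‖ * (‖x‖ * (‖T‖ - ε)) := by
              have h3 : ‖x‖ * |⟪T u, u⟫| ≤ ‖x‖ * (‖T‖ - ε) :=
                mul_le_mul_of_nonneg_left hb (norm_nonneg x)
              exact mul_le_mul_of_nonneg_left h3 (norm_nonneg x)
          _ = (‖T‖ - ε) * (‖x‖ * ‖x‖) := by ring
      calc |⟪T x, x⟫| ≤ (‖T‖ - ε) * (‖x‖ * ‖x‖) := h2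
        _ = (‖T‖ - ε) * ‖x‖ ^ 2 := by ring
    have := opNorm_le_of_quadform hsym hM0 hq
    linarith
  -- choose a maximizing sequence
  have hchoice : ∀ n : ℕ, ∃ x : G, ‖x‖ = 1 ∧ ‖T‖ - 1 / (n + 1) < |⟪T x, x⟫| := fun n =>
    key (1 / (n + 1)) (by positivity)
  choose x hx1 hx2 using hchoice
  have hqb : ∀ n, |⟪T (x n), x n⟫| ≤ ‖T‖ := by
    intro n
    calc |⟪T (x n), x n⟫| ≤ ‖T (x n)‖ * ‖x n‖ := abs_real_inner_le_norm _ _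
      _ ≤ ‖T‖ * ‖x n‖ * ‖x n‖ := by
          have := T.le_opNorm (x n)
          nlinarith [norm_nonneg (x n)]
      _ = ‖T‖ := by rw [hx1 n]; ring
  have htend : Filter.Tendsto (fun n => |⟪T (x n), x n⟫|) Filter.atTop (nhds ‖T‖) := by
    have hlow : Filter.Tendsto (fun n : ℕ => ‖T‖ - 1 / (n + 1)) Filter.atTop (nhds ‖T‖) := by
      have := tendsto_one_div_add_atTop_nhds_zero_nat (𝕜 := ℝ)
      have := (tendsto_const_nhds (x := ‖T‖) (f := Filter.atTop (α := ℕ))).sub this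
      simpa using this
    exact tendsto_of_tendsto_of_tendsto_of_le_of_le hlow tendsto_const_nhds
      (fun n => (hx2 n).le) hqb
  -- extract a convergent subsequence of the quadratic form values
  obtain ⟨μ, -, φ₁, hφ₁, hμtend⟩ :=
    tendsto_subseq_of_bounded (Metric.isBounded_Icc (-‖T‖) ‖T‖)
      (fun n => abs_le.1 (hqb n))
  have hμabs : |μ| = ‖T‖ := by
    have h1 : Filter.Tendsto (fun n => |⟪T (x (φ₁ n)), x (φ₁ n)⟫|) Filter.atTop (nhds |μ|) :=
      (continuous_abs.tendsto μ).comp hμtend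
    have h2 : Filter.Tendsto (fun n => |⟪T (x (φ₁ n)), x (φ₁ n)⟫|) Filter.atTop (nhds ‖T‖) :=
      htend.comp hφ₁.tendsto_atTop
    exact tendsto_nhds_unique h1 h2
  have hμne : μ ≠ 0 := by
    intro h; rw [h, abs_zero] at hμabs; exact hTpos.ne hμabs
  -- extract a convergent subsequence of the images
  have hC : IsCompact (closure (⇑T '' Metric.closedBall 0 1)) :=
    hcpt.isCompact_closure_image_closedBall (f := (T : G →ₗ[ℝ] G)) 1
  have hmem : ∀ n, T (x (φ₁ n)) ∈ closure (⇑T '' Metric.closedBall 0 1) := fun n =>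
    subset_closure ⟨x (φ₁ n), by simp [Metric.mem_closedBall, hx1 (φ₁ n)], rfl⟩
  obtain ⟨y, -, φ₂, hφ₂, hytend⟩ := hC.tendsto_subseq hmem
  set z : ℕ → G := fun n => x (φ₁ (φ₂ n)) with hz
  have hz1 : ∀ n, ‖z n‖ = 1 := fun n => hx1 _
  have hqz : Filter.Tendsto (fun n => ⟪T (z n), z n⟫) Filter.atTop (nhds μ) :=
    hμtend.comp hφ₂.tendsto_atTop
  have hTz : Filter.Tendsto (fun n => T (z n)) Filter.atTop (nhds y) := hytend
  -- ‖T zₙ - μ zₙ‖² → 0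
  have hsq : ∀ n, ‖T (z n) - μ • z n‖ ^ 2 ≤ μ ^ 2 - 2 * μ * ⟪T (z n), z n⟫ + μ ^ 2 := by
    intro n
    rw [norm_sub_sq_real, real_inner_smul_right, norm_smul, Real.norm_eq_abs]
    have h1 : ‖T (z n)‖ ≤ |μ| := by
      rw [hμabs]
      calc ‖T (z n)‖ ≤ ‖T‖ * ‖z n‖ := T.le_opNorm _
        _ = ‖T‖ := by rw [hz1 n]; ring
    have h2 : ‖T (z n)‖ ^ 2 ≤ μ ^ 2 := by
      rw [← sq_abs μ]; exact pow_le_pow_left₀ (norm_nonneg _) h1 2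
    have h3 : (|μ| * ‖z n‖) ^ 2 = μ ^ 2 := by
      rw [hz1 n, mul_one, sq_abs]
    rw [h3]; linarith
  have hzero : Filter.Tendsto (fun n => ‖T (z n) - μ • z n‖ ^ 2) Filter.atTop (nhds 0) := by
    have hub : Filter.Tendsto (fun n => μ ^ 2 - 2 * μ * ⟪T (z n), z n⟫ + μ ^ 2)
        Filter.atTop (nhds 0) := by
      have h1 : Filter.Tendsto (fun n => 2 * μ * ⟪T (z n), z n⟫) Filter.atTop
          (nhds (2 * μ * μ)) := (tendsto_const_nhds).mul hqz
      have h2 := ((tendsto_const_nhds (x := μ ^ 2) (f := Filter.atTop (α := ℕ))).sub h1).add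
        (tendsto_const_nhds (x := μ ^ 2))
      have h3 : μ ^ 2 - 2 * μ * μ + μ ^ 2 = 0 := by ring
      rwa [h3] at h2
    exact tendsto_of_tendsto_of_tendsto_of_le_of_le tendsto_const_nhds hub
      (fun n => by positivity) hsq
  have hnorm0 : Filter.Tendsto (fun n => T (z n) - μ • z n) Filter.atTop (nhds 0) := by
    rw [tendsto_zero_iff_norm_tendsto_zero]
    have := (Real.continuous_sqrt.tendsto 0).comp hzero
    simp only [Function.comp_def, Real.sqrt_zero] at this
    convert this using 2 with n
    rw [Real.sqrt_sq (norm_nonneg _)]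
  have hmuz : Filter.Tendsto (fun n => μ • z n) Filter.atTop (nhds y) := by
    have := hTz.sub hnorm0
    simpa using this
  have hztend : Filter.Tendsto z Filter.atTop (nhds (μ⁻¹ • y)) := by
    have := hmuz.const_smul μ⁻¹
    simpa [smul_smul, inv_mul_cancel₀ hμne] using this
  refine ⟨μ⁻¹ • y, μ, ?_, ?_, hμabs⟩
  · have hn1 : Filter.Tendsto (fun n => ‖z n‖) Filter.atTop (nhds ‖μ⁻¹ • y‖) :=
      (continuous_norm.tendsto _).comp hztend
    have hn2 : Filter.Tendsto (fun n => ‖z n‖) Filter.atTop (nhds 1) := by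
      simpa [hz1] using tendsto_const_nhds (x := (1:ℝ)) (f := Filter.atTop (α := ℕ))
    have : ‖μ⁻¹ • y‖ = 1 := tendsto_nhds_unique hn1 hn2
    intro h; rw [h, norm_zero] at this; exact one_ne_zero this.symm
  · have h1 : Filter.Tendsto (fun n => T (z n)) Filter.atTop (nhds (T (μ⁻¹ • y))) :=
      (T.continuous.tendsto _).comp hztend
    have h2 : T (μ⁻¹ • y) = y := tendsto_nhds_unique h1 hTz
    rw [h2, smul_smul, mul_inv_cancel₀ hμne, one_smul]

lemma sum_inner_diag {ι : Type*} (s : Finset ι) (v w : ι → G)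
    (h : ∀ i ∈ s, ∀ j ∈ s, j ≠ i → ⟪v i, w j⟫ = 0) :
    ⟪∑ i ∈ s, v i, ∑ j ∈ s, w j⟫ = ∑ i ∈ s, ⟪v i, w i⟫ := by
  rw [sum_inner]
  refine Finset.sum_congr rfl fun i hi => ?_
  rw [inner_sum]
  exact Finset.sum_eq_single i (fun j hj hne => h i hi j hj hne) (fun h' => absurd hi h')

/-- The eigenspace of a continuous linear map, as used below. -/
def eigSp (K : G →L[ℝ] G) (a : ℝ) : Submodule ℝ G :=
  Module.End.eigenspace (K : G →ₗ[ℝ] G) a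

lemma mem_eigSp {K : G →L[ℝ] G} {a : ℝ} {x : G} : x ∈ eigSp K a ↔ K x = a • x :=
  Module.End.mem_eigenspace_iff

/-- Decomposition of an element of a (sup of) eigenspaces into eigenvectors, with the
associated quadratic identities. -/
lemma eig_decomp {K : G →L[ℝ] G} (hsym : ∀ x y : G, ⟪K x, y⟫ = ⟪x, K y⟫) {S : Set ℝ} {x : G}
    (hx : x ∈ ⨆ a : S, eigSp K (a : ℝ)) :
    ∃ (s : Finset S) (g : S → G),
      (∀ i : S, K (g i) = (i : ℝ) • g i) ∧
      x = ∑ i ∈ s, g i ∧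
      ‖x‖ ^ 2 = ∑ i ∈ s, ‖g i‖ ^ 2 ∧
      ⟪K x, x⟫ = ∑ i ∈ s, (i : ℝ) * ‖g i‖ ^ 2 ∧
      ‖K x‖ ^ 2 = ∑ i ∈ s, (i : ℝ) ^ 2 * ‖g i‖ ^ 2 := by
  obtain ⟨f, hf, hfx⟩ := (Submodule.mem_iSup_iff_exists_finsupp
    (fun a : S => eigSp K (a : ℝ)) x).1 hx
  set g : S → G := fun i => f i with hg
  have heig : ∀ i : S, K (g i) = (i : ℝ) • g i := fun i => mem_eigSp.1 (hf i)
  have hxs : x = ∑ i ∈ f.support, g i := by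
    rw [← hfx]; rfl
  have horth : ∀ i j : S, j ≠ i → ⟪g i, g j⟫ = 0 := by
    intro i j hne
    have hij : (j : ℝ) ≠ (i : ℝ) := fun h => hne (Subtype.ext h)
    have h1 : ⟪K (g i), g j⟫ = ⟪g i, K (g j)⟫ := hsym _ _
    rw [heig i, heig j, real_inner_smul_left, real_inner_smul_right] at h1
    have h2 : ((i : ℝ) - (j : ℝ)) * ⟪g i, g j⟫ = 0 := by
      rw [sub_mul, h1, sub_self]
    rcases mul_eq_zero.1 h2 with h | h
    · exact absurd (sub_eq_zero.1 h) (fun hh => hij hh.symm)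
    · exact h
  have hKx : K x = ∑ i ∈ f.support, (i : ℝ) • g i := by
    rw [hxs, map_sum]
    exact Finset.sum_congr rfl fun i _ => heig i
  refine ⟨f.support, g, heig, hxs, ?_, ?_, ?_⟩
  · rw [← real_inner_self_eq_norm_sq, hxs,
      sum_inner_diag _ _ _ (fun i _ j _ hne => horth i j hne)]
    exact Finset.sum_congr rfl fun i _ => real_inner_self_eq_norm_sq _
  · rw [hKx]
    conv_lhs => rw [hxs]
    rw [sum_inner_diag _ ((fun i : S => (i:ℝ) • g i)) _
      (fun i _ j _ hne => by rw [real_inner_smul_left, horth i j hne, mul_zero])]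
    exact Finset.sum_congr rfl fun i _ => by
      rw [real_inner_smul_left, real_inner_self_eq_norm_sq]
  · rw [← real_inner_self_eq_norm_sq, hKx,
      sum_inner_diag _ _ _ (fun i _ j _ hne => by
        rw [real_inner_smul_left, real_inner_smul_right, horth i j hne, mul_zero, mul_zero])]
    exact Finset.sum_congr rfl fun i _ => by
      rw [real_inner_smul_left, real_inner_smul_right, real_inner_self_eq_norm_sq]
      ring

set_option maxHeartbeats 1000000 in
set_option synthInstance.maxHeartbeats 400000 in
/-- Main structural lemma: near an invertible compact selfadjoint perturbation of the
identity, the Morse index is constant. -/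
lemma morse_perturb {K : G →L[ℝ] G} (hcpt : IsCompactOperator ⇑K) (hsa : IsSelfAdjoint K)
    (hinj : Function.Injective ⇑(1 + K)) :
    ∃ δ : ℝ, 0 < δ ∧ ∃ n : ℕ, ∀ T : G →L[ℝ] G, ‖T - (1 + K)‖ < δ →
      morseIndex T = (n : ℕ∞) := by
  have hsym : ∀ x y : G, ⟪K x, y⟫ = ⟪x, K y⟫ := fun x y => hsa.isSymmetric x y
  set L : G →L[ℝ] G := 1 + K with hL
  have hLapp : ∀ x : G, L x = x + K x := fun x => by
    simp [hL, ContinuousLinearMap.add_apply]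
  have hLq : ∀ x : G, ⟪L x, x⟫ = ‖x‖ ^ 2 + ⟪K x, x⟫ := fun x => by
    rw [hLapp, inner_add_left, real_inner_self_eq_norm_sq]
  -- the eigenspace sups
  set Sneg : Set ℝ := {a | a < -1} with hSneg
  set Spos : Set ℝ := {a | 1 ≤ a} with hSpos
  set Sall : Set ℝ := {a | 1 ≤ |a|} with hSall
  set Eneg : Submodule ℝ G := ⨆ a : Sneg, eigSp K (a : ℝ) with hEneg
  set Epos : Submodule ℝ G := ⨆ a : Spos, eigSp K (a : ℝ) with hEpos
  set Eall : Submodule ℝ G := ⨆ a : Sall, eigSp K (a : ℝ) with hEall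
  -- quadratic form estimates on the eigenspace sups
  have hnegq : ∀ x ∈ Eneg, x ≠ 0 → ⟪L x, x⟫ < 0 := by
    intro x hx hxne
    obtain ⟨s, g, heig, hxs, hn, hq, -⟩ := eig_decomp hsym hx
    rw [hLq, hn, hq, ← Finset.sum_add_distrib]
    have hterm : ∀ i ∈ s, ‖g i‖ ^ 2 + (i : ℝ) * ‖g i‖ ^ 2 ≤ 0 := by
      intro i _
      have hi : (i : ℝ) < -1 := i.2
      nlinarith [sq_nonneg ‖g i‖]
    have hxn : (0:ℝ) < ‖x‖ ^ 2 := pow_pos (norm_pos_iff.2 hxne) 2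
    have hex : ∃ i ∈ s, 0 < ‖g i‖ ^ 2 := by
      by_contra hcon
      push_neg at hcon
      have : ∑ i ∈ s, ‖g i‖ ^ 2 ≤ 0 :=
        Finset.sum_nonpos fun i hi => hcon i hi
      rw [← hn] at this; linarith
    obtain ⟨i₀, hi₀s, hi₀⟩ := hex
    have := Finset.sum_lt_sum hterm ⟨i₀, hi₀s, by
      have hi : (i₀ : ℝ) < -1 := i₀.2
      nlinarith⟩
    simpa using this
  have hposq : ∀ x ∈ Epos, 2 * ‖x‖ ^ 2 ≤ ⟪L x, x⟫ := by
    intro x hx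
    obtain ⟨s, g, heig, hxs, hn, hq, -⟩ := eig_decomp hsym hx
    rw [hLq, hn, hq, ← Finset.sum_add_distrib, Finset.mul_sum]
    refine Finset.sum_le_sum fun i _ => ?_
    have hi : (1:ℝ) ≤ (i : ℝ) := i.2
    nlinarith [sq_nonneg ‖g i‖]
  have hallq : ∀ x ∈ Eall, ‖x‖ ^ 2 ≤ ‖K x‖ ^ 2 := by
    intro x hx
    obtain ⟨s, g, heig, hxs, hn, -, hnk⟩ := eig_decomp hsym hx
    rw [hn, hnk]
    refine Finset.sum_le_sum fun i _ => ?_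
    have hi : (1:ℝ) ≤ |(i : ℝ)| := i.2
    nlinarith [sq_nonneg ‖g i‖, sq_abs (i : ℝ), sq_nonneg (|(i:ℝ)| - 1)]
  have hKmem : ∀ x ∈ Eall, K x ∈ Eall := by
    intro x hx
    obtain ⟨s, g, heig, hxs, -, -, -⟩ := eig_decomp hsym hx
    have : K x = ∑ i ∈ s, (i : ℝ) • g i := by
      rw [hxs, map_sum]; exact Finset.sum_congr rfl fun i _ => heig i
    rw [this]
    refine Submodule.sum_mem _ fun i _ => ?_
    have hgi : g i ∈ eigSp K (i : ℝ) := mem_eigSp.2 (heig i)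
    have hle : eigSp K (i : ℝ) ≤ Eall := le_iSup (fun a : Sall => eigSp K (a : ℝ)) i
    exact hle (Submodule.smul_mem _ _ hgi)
  -- finite dimensionality of `Eall`
  have hFD : FiniteDimensional ℝ ↥Eall := by
    set F := Eall.topologicalClosure with hF
    have hFq : ∀ x ∈ F, ‖x‖ ^ 2 ≤ ‖K x‖ ^ 2 := by
      have hset : (F : Set G) ⊆ {x | ‖x‖ ^ 2 ≤ ‖K x‖ ^ 2} := by
        rw [hF, Submodule.topologicalClosure_coe]
        refine closure_minimal hallq ?_
        exact isClosed_le (by fun_prop) (by fun_prop)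
      exact fun x hx => hset hx
    have hFDF : FiniteDimensional ℝ ↥F := by
      refine FiniteDimensional.of_isCompact_closedBall₀ ℝ zero_lt_one ?_
      refine IsSeqCompact.isCompact ?_
      intro u hu
      have hub : ∀ n, ‖(u n : G)‖ ≤ 1 := by
        intro n
        have := hu n
        rw [Metric.mem_closedBall, dist_zero_right] at this
        exact this
      have hmem : ∀ n, K (u n : G) ∈ closure (⇑K '' Metric.closedBall 0 1) := fun n =>
        subset_closure ⟨(u n : G), by simpa [Metric.mem_closedBall, dist_zero_right] using hub n, rfl⟩
      have hC : IsCompact (closure (⇑K '' Metric.closedBall 0 1)) :=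
        hcpt.isCompact_closure_image_closedBall (f := (K : G →ₗ[ℝ] G)) 1
      obtain ⟨y, -, φ, hφ, hKtend⟩ := hC.tendsto_subseq hmem
      have hcauchy : CauchySeq (fun n => (u (φ n) : G)) := by
        rw [Metric.cauchySeq_iff]
        intro ε hε
        obtain ⟨N, hN⟩ := Metric.cauchySeq_iff.1 hKtend.cauchySeq ε hε
        refine ⟨N, fun m hm n hn => ?_⟩
        have h1 := hN m hm n hn
        simp only [Function.comp_apply] at h1
        have hdmem : ((u (φ m) : G) - (u (φ n) : G)) ∈ F := by
          have := sub_mem (u (φ m)).2 (u (φ n)).2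
          simpa using this
        have h2 := hFq _ hdmem
        rw [dist_eq_norm] at h1 ⊢
        rw [map_sub] at h2
        have h3 := (pow_le_pow_iff_left₀ (norm_nonneg ((u (φ m) : G) - (u (φ n) : G)))
          (norm_nonneg (K (u (φ m) : G) - K (u (φ n) : G))) two_ne_zero).1 h2
        linarith
      obtain ⟨w, hw⟩ := cauchySeq_tendsto_of_complete hcauchy
      have hwF : w ∈ F := by
        have hclosed : IsClosed (F : Set G) := Submodule.isClosed_topologicalClosure _
        exact hclosed.mem_of_tendsto hw (Filter.Eventually.of_forall fun n => (u (φ n)).2)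
      have hwn : ‖w‖ ≤ 1 := by
        have hn : Filter.Tendsto (fun n => ‖(u (φ n) : G)‖) Filter.atTop (nhds ‖w‖) :=
          (continuous_norm.tendsto _).comp hw
        exact le_of_tendsto hn (Filter.Eventually.of_forall fun n => hub (φ n))
      refine ⟨⟨w, hwF⟩, ?_, φ, hφ, ?_⟩
      · rw [Metric.mem_closedBall, dist_zero_right]
        exact hwn
      · rw [tendsto_subtype_rng]
        exact hw
    exact Submodule.finiteDimensional_of_le (Submodule.le_topologicalClosure _)
  have hEnegle : Eneg ≤ Eall := by
    refine iSup_le fun i => ?_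
    have hi : (i : ℝ) < -1 := i.2
    have hmem : (i : ℝ) ∈ Sall := by
      rw [hSall, Set.mem_setOf_eq, le_abs]
      exact Or.inr (by linarith)
    exact le_iSup (fun a : Sall => eigSp K (a : ℝ)) ⟨(i : ℝ), hmem⟩
  have hEposle : Epos ≤ Eall := by
    refine iSup_le fun i => ?_
    have hmem : (i : ℝ) ∈ Sall := by
      rw [hSall, Set.mem_setOf_eq, le_abs]
      exact Or.inl i.2
    exact le_iSup (fun a : Sall => eigSp K (a : ℝ)) ⟨(i : ℝ), hmem⟩
  have hFDneg : FiniteDimensional ℝ ↥Eneg := Submodule.finiteDimensional_of_le hEnegle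
  -- the orthogonal complement of Eall
  set W : Submodule ℝ G := Eallᗮ with hW
  have hWKinv : ∀ w ∈ W, K w ∈ W := by
    intro w hw
    rw [hW, Submodule.mem_orthogonal] at hw ⊢
    intro u hu
    rw [← hsym u w]
    exact hw _ (hKmem u hu)
  haveI hWcomplete : CompleteSpace ↥W :=
    (Submodule.isClosed_orthogonal Eall).completeSpace_coe
  set TW : ↥W →L[ℝ] ↥W :=
    (K.comp W.subtypeL).codRestrict W (fun x => hWKinv x.1 x.2) with hTW
  have hTWapp : ∀ x : ↥W, (TW x : G) = K (x : G) := fun x => rfl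
  set r : ℝ := ‖TW‖ with hr
  have hr0 : 0 ≤ r := by rw [hr]; exact norm_nonneg TW
  have hrlt : r < 1 := by
    by_contra hcon
    push_neg at hcon
    have hTWne : TW ≠ 0 := by
      intro h
      have : r = 0 := by rw [hr, h]; exact @norm_zero (↥W →L[ℝ] ↥W) _
      rw [this] at hcon
      linarith
    have hTWsa : IsSelfAdjoint TW := by
      rw [ContinuousLinearMap.isSelfAdjoint_iff_isSymmetric]
      intro x y
      have : ⟪(TW x : G), (y : G)⟫ = ⟪(x : G), (TW y : G)⟫ := by
        rw [hTWapp, hTWapp]; exact hsym _ _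
      simpa [Submodule.coe_inner] using this
    have hTWc : IsCompactOperator ⇑TW :=
      (hcpt.comp_clm W.subtypeL).codRestrict (fun x => hWKinv _ x.2)
        (Submodule.isClosed_orthogonal Eall)
    obtain ⟨x₀, μ, hx₀ne, hx₀eig, hμ⟩ := exists_eigenvector_norm hTWsa hTWc hTWne
    have hval : K (x₀ : G) = μ • (x₀ : G) := by
      rw [← hTWapp, hx₀eig]; rfl
    have hμmem : μ ∈ Sall := by
      rw [hSall, Set.mem_setOf_eq, hμ]
      exact hcon
    have hx₀Eall : (x₀ : G) ∈ Eall :=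
      le_iSup (fun a : Sall => eigSp K (a : ℝ)) ⟨μ, hμmem⟩ (mem_eigSp.2 hval)
    have hx₀W : (x₀ : G) ∈ W := x₀.2
    have : (x₀ : G) = 0 := by
      have hdisj := Submodule.orthogonal_disjoint Eall
      exact (Submodule.disjoint_def.1 hdisj) _ hx₀Eall hx₀W
    exact hx₀ne (Subtype.ext this)
  have hWq : ∀ w ∈ W, ‖K w‖ ≤ r * ‖w‖ := by
    intro w hw
    have := TW.le_opNorm ⟨w, hw⟩
    simpa [hTWapp] using this
  have hWposq : ∀ w ∈ W, (1 - r) * ‖w‖ ^ 2 ≤ ⟪L w, w⟫ := by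
    intro w hw
    rw [hLq]
    have h1 : |⟪K w, w⟫| ≤ ‖K w‖ * ‖w‖ := abs_real_inner_le_norm _ _
    have h2 := hWq w hw
    have h3 := abs_le.1 h1
    nlinarith [norm_nonneg w, norm_nonneg (K w)]
  -- the positive subspace
  set Vpos : Submodule ℝ G := Epos ⊔ W with hVpos
  set c₁ : ℝ := min 2 (1 - r) with hc₁
  have hc₁pos : 0 < c₁ := lt_min (by norm_num) (by linarith)
  have hVposq : ∀ v ∈ Vpos, c₁ * ‖v‖ ^ 2 ≤ ⟪L v, v⟫ := by
    intro v hv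
    obtain ⟨e, he, w, hw, rfl⟩ := Submodule.mem_sup.1 hv
    have hew : ⟪e, w⟫ = 0 :=
      (Submodule.mem_orthogonal _ _).1 hw e (hEposle he)
    have hKew : ⟪K e, w⟫ = 0 :=
      (Submodule.mem_orthogonal _ _).1 hw _ (hKmem e (hEposle he))
    have hLew : ⟪L e, w⟫ = 0 := by
      rw [hLapp, inner_add_left, hew, hKew, add_zero]
    have hLwe : ⟪L w, e⟫ = 0 := by
      have h1 : ⟪w, e⟫ = 0 := by rw [real_inner_comm]; exact hew
      have h2 : ⟪K w, e⟫ = 0 := by rw [hsym w e, real_inner_comm]; exact hKew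
      rw [hLapp, inner_add_left, h1, h2, add_zero]
    have hnorm : ‖e + w‖ ^ 2 = ‖e‖ ^ 2 + ‖w‖ ^ 2 := by
      rw [norm_add_sq_real, hew]; ring
    have hsplit : ⟪L (e + w), e + w⟫ = ⟪L e, e⟫ + ⟪L w, w⟫ := by
      rw [map_add, inner_add_left, inner_add_right, inner_add_right, hLew, hLwe]
      ring
    rw [hsplit, hnorm]
    have h1 := hposq e he
    have h2 := hWposq w hw
    have h3 : c₁ ≤ 2 := min_le_left _ _
    have h4 : c₁ ≤ 1 - r := min_le_right _ _
    nlinarith [sq_nonneg ‖e‖, sq_nonneg ‖w‖]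
  -- Eall splits into Eneg and Epos (using injectivity of L at eigenvalue -1)
  have hEallle : Eall ≤ Eneg ⊔ Epos := by
    refine iSup_le fun i => ?_
    rcases lt_trichotomy ((i : ℝ)) (-1) with hlt | heq | hgt
    · exact le_trans (le_iSup (fun a : Sneg => eigSp K (a : ℝ)) ⟨_, hlt⟩) le_sup_left
    · intro x hx
      have hKx : K x = (-1 : ℝ) • x := by rw [← heq]; exact mem_eigSp.1 hx
      have hLx : L x = 0 := by
        rw [hLapp, hKx]; simp
      have hx0 : x = 0 := hinj (by rw [hLx, map_zero])
      rw [hx0]; exact Submodule.zero_mem _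
    · have h2 : (1:ℝ) ≤ |(i : ℝ)| := i.2
      have hi : (1:ℝ) ≤ (i : ℝ) := by
        rcases le_abs.1 h2 with h | h
        · exact h
        · linarith
      exact le_trans (le_iSup (fun a : Spos => eigSp K (a : ℝ)) ⟨_, hi⟩) le_sup_right
  haveI : CompleteSpace ↥Eall := FiniteDimensional.complete ℝ _
  have hsup : Eneg ⊔ Vpos = ⊤ := by
    rw [hVpos, ← sup_assoc]
    refine top_unique ?_
    rw [← Submodule.sup_orthogonal_of_hasOrthogonalProjection (K := Eall)]
    exact sup_le_sup hEallle le_rfl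
  -- uniform negativity constant on Eneg
  obtain ⟨c₂, hc₂pos, hc₂⟩ : ∃ c₂ : ℝ, 0 < c₂ ∧ ∀ u ∈ Eneg, ⟪L u, u⟫ ≤ -(c₂ * ‖u‖ ^ 2) := by
    rcases eq_or_ne Eneg ⊥ with hbot | hbot
    · refine ⟨1, one_pos, fun u hu => ?_⟩
      rw [hbot, Submodule.mem_bot] at hu
      simp [hu]
    · obtain ⟨u₀, hu₀m, hu₀ne⟩ := Submodule.ne_bot_iff _ |>.1 hbot
      have hu₀n : (0:ℝ) < ‖u₀‖ := norm_pos_iff.2 hu₀ne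
      set f : ↥Eneg → ℝ := fun u => ⟪L (u : G), (u : G)⟫ with hf
      have hfc : Continuous f :=
        Continuous.inner (L.continuous.comp continuous_subtype_val) continuous_subtype_val
      have hsph : IsCompact (Metric.sphere (0 : ↥Eneg) 1) := isCompact_sphere _ _
      have hne : (Metric.sphere (0 : ↥Eneg) 1).Nonempty := by
        refine ⟨(‖u₀‖⁻¹ : ℝ) • ⟨u₀, hu₀m⟩, ?_⟩
        rw [mem_sphere_zero_iff_norm, norm_smul, Real.norm_eq_abs, abs_inv, abs_norm]
        have hcoe : ‖(⟨u₀, hu₀m⟩ : ↥Eneg)‖ = ‖u₀‖ := rfl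
        rw [hcoe, inv_mul_cancel₀ hu₀n.ne']
      obtain ⟨xm, hxm_mem, hxm_max⟩ := hsph.exists_isMaxOn hne hfc.continuousOn
      have hxm_ne : (xm : G) ≠ 0 := by
        intro h
        have h1 : ‖xm‖ = 1 := mem_sphere_zero_iff_norm.1 hxm_mem
        have h0 : xm = 0 := by
          exact Subtype.ext h
        rw [h0] at h1
        simp at h1
      have hm_neg : f xm < 0 := hnegq _ xm.2 hxm_ne
      refine ⟨-(f xm), by linarith, ?_⟩
      intro u hu
      rcases eq_or_ne u 0 with rfl | hune
      · simp
      have hn : (0:ℝ) < ‖u‖ := norm_pos_iff.2 hune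
      set uu : ↥Eneg := (‖u‖⁻¹ : ℝ) • ⟨u, hu⟩ with huu
      have huum : uu ∈ Metric.sphere (0 : ↥Eneg) 1 := by
        rw [mem_sphere_zero_iff_norm, huu, norm_smul, Real.norm_eq_abs, abs_inv, abs_norm]
        have hcoe : ‖(⟨u, hu⟩ : ↥Eneg)‖ = ‖u‖ := rfl
        rw [hcoe, inv_mul_cancel₀ hn.ne']
      have hle : f uu ≤ f xm := hxm_max huum
      have hexp : f uu = ‖u‖⁻¹ * (‖u‖⁻¹ * ⟪L u, u⟫) := by
        rw [hf]
        have hval : ((uu : ↥Eneg) : G) = (‖u‖⁻¹ : ℝ) • u := rfl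
        simp only [hval, map_smul, real_inner_smul_left, real_inner_smul_right]
      rw [hexp] at hle
      have h1 : ‖u‖⁻¹ * (‖u‖⁻¹ * ⟪L u, u⟫) * ‖u‖ ^ 2 ≤ f xm * ‖u‖ ^ 2 :=
        mul_le_mul_of_nonneg_right hle (sq_nonneg _)
      have h2 : ‖u‖⁻¹ * (‖u‖⁻¹ * ⟪L u, u⟫) * ‖u‖ ^ 2 = ⟪L u, u⟫ := by
        have hinv : ‖u‖⁻¹ * ‖u‖ = 1 := inv_mul_cancel₀ hn.ne'
        calc ‖u‖⁻¹ * (‖u‖⁻¹ * ⟪L u, u⟫) * ‖u‖ ^ 2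
            = (‖u‖⁻¹ * ‖u‖) * ((‖u‖⁻¹ * ‖u‖) * ⟪L u, u⟫) := by ring
          _ = ⟪L u, u⟫ := by rw [hinv]; ring
      rw [h2] at h1
      nlinarith
  -- conclusion
  refine ⟨min c₁ c₂, lt_min hc₁pos hc₂pos, Module.finrank ℝ ↥Eneg, ?_⟩
  intro T hT
  have hTq : ∀ u : G, |⟪T u, u⟫ - ⟪L u, u⟫| ≤ ‖T - L‖ * ‖u‖ ^ 2 := by
    intro u
    have he : ⟪T u, u⟫ - ⟪L u, u⟫ = ⟪(T - L) u, u⟫ := by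
      rw [ContinuousLinearMap.sub_apply, inner_sub_left]
    rw [he]
    calc |⟪(T - L) u, u⟫| ≤ ‖(T - L) u‖ * ‖u‖ := abs_real_inner_le_norm _ _
      _ ≤ ‖T - L‖ * ‖u‖ * ‖u‖ :=
          mul_le_mul_of_nonneg_right ((T - L).le_opNorm u) (norm_nonneg u)
      _ = ‖T - L‖ * ‖u‖ ^ 2 := by ring
  refine le_antisymm ?_ ?_
  · -- upper bound
    rw [morseIndex]
    refine iSup₂_le fun U hU => ?_
    have hdisj : U ⊓ Vpos = ⊥ := by
      rw [Submodule.eq_bot_iff]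
      rintro v ⟨hvU, hvV⟩
      by_contra hvne
      have h1 := hU v hvU hvne
      have h2 := hVposq v hvV
      have h3 := abs_le.1 (hTq v)
      have h4 : (0:ℝ) < ‖v‖ ^ 2 := pow_pos (norm_pos_iff.2 hvne) 2
      have h5 : ‖T - L‖ < c₁ := lt_of_lt_of_le hT (min_le_left _ _)
      nlinarith
    have hinj1 : Function.Injective ⇑((Vpos.mkQ).comp U.subtype) := by
      rw [← LinearMap.ker_eq_bot, LinearMap.ker_comp, Submodule.ker_mkQ,
        Submodule.eq_bot_iff]
      intro x hx
      rw [Submodule.mem_comap] at hx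
      have hxv : (x : G) ∈ U ⊓ Vpos := ⟨x.2, hx⟩
      rw [hdisj, Submodule.mem_bot] at hxv
      exact Subtype.ext hxv
    have hsurj : Function.Surjective ⇑((Vpos.mkQ).comp Eneg.subtype) := by
      rw [← LinearMap.range_eq_top, LinearMap.range_comp, Submodule.range_subtype,
        Submodule.map_mkQ_eq_top]
      rw [sup_comm] at hsup
      exact hsup
    have h6 : Module.rank ℝ ↥U ≤ Module.rank ℝ ↥Eneg :=
      le_trans (LinearMap.rank_le_of_injective _ hinj1)
        (LinearMap.rank_le_of_surjective _ hsurj)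
    calc (Module.rank ℝ ↥U).toENat ≤ (Module.rank ℝ ↥Eneg).toENat :=
          Cardinal.toENat.monotone' h6
      _ = (Module.finrank ℝ ↥Eneg : ℕ∞) := by
          rw [← Module.finrank_eq_rank]; simp
  · -- lower bound
    have hmem : Eneg ∈ {U : Submodule ℝ G | ∀ u ∈ U, u ≠ 0 → ⟪T u, u⟫ < 0} := by
      intro u hu hune
      have h1 := hc₂ u hu
      have h3 := abs_le.1 (hTq u)
      have h4 : (0:ℝ) < ‖u‖ ^ 2 := pow_pos (norm_pos_iff.2 hune) 2
      have h5 : ‖T - L‖ < c₂ := lt_of_lt_of_le hT (min_le_right _ _)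
      nlinarith
    have hle := le_iSup₂ (f := fun (U : Submodule ℝ G)
      (_ : U ∈ {U : Submodule ℝ G | ∀ u ∈ U, u ≠ 0 → ⟪T u, u⟫ < 0}) =>
      (Module.rank ℝ ↥U).toENat) Eneg hmem
    rw [morseIndex]
    have heq : (Module.rank ℝ ↥Eneg).toENat = (Module.finrank ℝ ↥Eneg : ℕ∞) := by
      rw [← Module.finrank_eq_rank]; simp
    rw [heq] at hle
    exact hle

/-- Homotopy invariance of the Morse index: if `t ↦ I + K t` is a norm-continuous path of
invertible operators on `[0,1]` with each `K t` compact and selfadjoint, then the Morse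
indices of the endpoints agree. -/
theorem morseIndex_homotopy_invariant
    (K : ℝ → (H →L[ℝ] H)) (hcont : ContinuousOn K (Icc 0 1))
    (hcpt : ∀ t ∈ Icc (0:ℝ) 1, IsCompactOperator ⇑(K t))
    (hsa : ∀ t ∈ Icc (0:ℝ) 1, IsSelfAdjoint (K t))
    (hinv : ∀ t ∈ Icc (0:ℝ) 1, IsUnit (1 + K t)) :
    morseIndex (1 + K 0) = morseIndex (1 + K 1) := by
  have hinj : ∀ t ∈ Icc (0:ℝ) 1, Function.Injective ⇑(1 + K t) := by
    intro t ht
    obtain ⟨u, hu⟩ := hinv t ht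
    have key : ∀ z : H, (↑u⁻¹ : H →L[ℝ] H) ((1 + K t) z) = z := by
      intro z
      rw [← hu, ← ContinuousLinearMap.mul_apply, Units.inv_mul,
        ContinuousLinearMap.one_apply]
    intro x y hxy
    rw [← key x, ← key y, hxy]
  set f : ↥(Icc (0:ℝ) 1) → ℕ∞ := fun t => morseIndex (1 + K t.1) with hfdef
  have hlc : IsLocallyConstant f := by
    rw [IsLocallyConstant.iff_eventually_eq]
    intro t
    obtain ⟨δ, hδ, n, hn⟩ := morse_perturb (hcpt _ t.2) (hsa _ t.2) (hinj _ t.2)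
    have hev : ∀ᶠ s in nhdsWithin t.1 (Icc 0 1), ‖K s - K t.1‖ < δ := by
      have hc := (hcont t.1 t.2).tendsto
      have h2 := Metric.tendsto_nhds.1 hc δ hδ
      filter_upwards [h2] with s hs
      rw [dist_eq_norm] at hs
      exact hs
    have hev2 : ∀ᶠ (y : ↥(Icc (0:ℝ) 1)) in nhds t, ‖K y.1 - K t.1‖ < δ := by
      rw [nhdsWithin_eq_map_subtype_coe t.2, Filter.eventually_map] at hev
      exact hev
    filter_upwards [hev2] with s hs
    have e1 := hn (1 + K s.1) (by rwa [add_sub_add_left_eq_sub])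
    have e2 := hn (1 + K t.1) (by simpa using hδ)
    rw [hfdef]
    exact e1.trans e2.symm
  haveI : PreconnectedSpace ↥(Icc (0:ℝ) 1) :=
    Subtype.preconnectedSpace isPreconnected_Icc
  have h01 := hlc.apply_eq_of_isPreconnected isPreconnected_univ
    (x := (⟨0, by norm_num⟩ : ↥(Icc (0:ℝ) 1)))
    (y := (⟨1, by norm_num⟩ : ↥(Icc (0:ℝ) 1))) trivial trivial
  exact h01
end
end

section
/- Let H be a real Hilbert space, K : [0,1] → L(H) a C² path of compact selfadjoint operators, and L_λ = I_H + K_λ. Suppose λ₀ ∈ (0,1) is a regular crossing, i.e. ker L_{λ₀} ≠ {0} and the quadratic form u ↦ ⟨K̇_{λ₀} u, u⟩ restricted to ker L_{λ₀} is non-degenerate. Then there exist ε > 0 and c > 0 such that ‖L_λ u‖ ≥ c |λ − λ₀| ‖u‖ for all λ with |λ − λ₀| < ε and all u ∈ H. -/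
open Set RealInnerProductSpace

noncomputable section

variable {H : Type*} [NormedAddCommGroup H] [InnerProductSpace ℝ H] [CompleteSpace H]

/-- The kernel of `1 + A` is finite dimensional when `A` is compact. -/
lemma aux_findim (A : H →L[ℝ] H) (hA : IsCompactOperator ⇑A) :
    FiniteDimensional ℝ (LinearMap.ker ((1 + A : H →L[ℝ] H) : H →ₗ[ℝ] H)) := by
  set N : Submodule ℝ H := LinearMap.ker ((1 + A : H →L[ℝ] H) : H →ₗ[ℝ] H) with hN
  have hC : IsCompact (closure (⇑A '' Metric.closedBall 0 1)) :=
    hA.isCompact_closure_image_closedBall 1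
  have hsub : (Subtype.val '' Metric.closedBall (0 : N) 1)
      ⊆ closure (⇑A '' Metric.closedBall 0 1) := by
    rintro - ⟨u, hu, rfl⟩
    apply subset_closure
    refine ⟨-(u : H), ?_, ?_⟩
    · simp only [Metric.mem_closedBall, dist_zero_right, norm_neg]
      simpa [Submodule.coe_norm] using mem_closedBall_zero_iff.mp hu
    · have hu0 : (1 + A) (u : H) = 0 := u.2
      have h1 : (u : H) + A u = 0 := by
        rwa [ContinuousLinearMap.add_apply, ContinuousLinearMap.one_apply] at hu0
      have h2 : A (u : H) = -(u : H) := eq_neg_of_add_eq_zero_right h1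
      simp [map_neg, h2]
  have himg : Subtype.val '' Metric.closedBall (0 : N) 1
      = (N : Set H) ∩ Metric.closedBall 0 1 := by
    ext v
    constructor
    · rintro ⟨u, hu, rfl⟩
      exact ⟨u.2, by simpa [Submodule.coe_norm, mem_closedBall_zero_iff]
        using mem_closedBall_zero_iff.mp hu⟩
    · rintro ⟨hv, hb⟩
      exact ⟨⟨v, hv⟩, by simpa [Submodule.coe_norm, mem_closedBall_zero_iff]
        using mem_closedBall_zero_iff.mp hb, rfl⟩
  have hclosed : IsClosed (Subtype.val '' Metric.closedBall (0 : N) 1) := by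
    rw [himg]
    exact (ContinuousLinearMap.isClosed_ker (1 + A)).inter Metric.isClosed_closedBall
  have hcpt : IsCompact (Subtype.val '' Metric.closedBall (0 : N) 1) :=
    hC.of_isClosed_subset hclosed hsub
  have : IsCompact (Metric.closedBall (0 : N) 1) :=
    Topology.IsEmbedding.subtypeVal.isCompact_iff.mpr hcpt
  exact FiniteDimensional.of_isCompact_closedBall₀ ℝ one_pos this

/-- Coercivity of `1 + A` on the orthogonal complement of its kernel. -/
lemma aux_coercive (A : H →L[ℝ] H) (hA : IsCompactOperator ⇑A) :
    ∃ δ > (0:ℝ), ∀ y ∈ (LinearMap.ker ((1 + A : H →L[ℝ] H) : H →ₗ[ℝ] H))ᗮ, δ * ‖y‖ ≤ ‖(1 + A) y‖ := by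
  set N : Submodule ℝ H := LinearMap.ker ((1 + A : H →L[ℝ] H) : H →ₗ[ℝ] H) with hN
  by_contra hcon
  push_neg at hcon
  have hex : ∀ n : ℕ, ∃ w : H, w ∈ Nᗮ ∧ ‖w‖ = 1 ∧ ‖(1 + A) w‖ < 1 / (n + 1) := by
    intro n
    obtain ⟨z, hz1, hz2⟩ := hcon (1 / (n + 1)) (by positivity)
    have hz0 : z ≠ 0 := by
      rintro rfl
      simp at hz2
    refine ⟨‖z‖⁻¹ • z, Nᗮ.smul_mem _ hz1, ?_, ?_⟩
    · rw [norm_smul, Real.norm_eq_abs, abs_of_nonneg (inv_nonneg.mpr (norm_nonneg z)),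
        inv_mul_cancel₀ (norm_ne_zero_iff.mpr hz0)]
    · rw [map_smul, norm_smul, Real.norm_eq_abs, abs_of_nonneg (inv_nonneg.mpr (norm_nonneg z))]
      calc ‖z‖⁻¹ * ‖(1 + A) z‖ < ‖z‖⁻¹ * (1 / (n + 1) * ‖z‖) := by
            exact mul_lt_mul_of_pos_left hz2 (inv_pos.mpr (norm_pos_iff.mpr hz0))
        _ = 1 / (n + 1) := by
            rw [mul_comm (1 / ((n:ℝ) + 1)) ‖z‖, inv_mul_cancel_left₀ (norm_ne_zero_iff.mpr hz0)]
  choose w hw1 hw2 hw3 using hex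
  have hC : IsCompact (closure (⇑A '' Metric.closedBall 0 1)) :=
    hA.isCompact_closure_image_closedBall 1
  have hmem : ∀ n, A (w n) ∈ closure (⇑A '' Metric.closedBall 0 1) := fun n =>
    subset_closure ⟨w n, by simp [mem_closedBall_zero_iff, hw2 n], rfl⟩
  obtain ⟨p, -, φ, hφ, hconv⟩ := hC.tendsto_subseq hmem
  have hT0 : Filter.Tendsto (fun n => (1 + A) (w (φ n))) Filter.atTop (nhds 0) := by
    refine squeeze_zero_norm (a := fun n : ℕ => 1 / (n + 1)) ?_ ?_
    · intro n
      refine le_trans (le_of_lt (hw3 (φ n))) ?_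
      have hle : (n : ℝ) ≤ (φ n : ℝ) := by exact_mod_cast hφ.le_apply
      apply one_div_le_one_div_of_le <;> [positivity; linarith]
    · exact tendsto_one_div_add_atTop_nhds_zero_nat
  have hwlim : Filter.Tendsto (fun n => w (φ n)) Filter.atTop (nhds (-p)) := by
    have h := hT0.sub hconv
    rw [zero_sub] at h
    refine h.congr fun n => ?_
    simp [ContinuousLinearMap.add_apply]
  have hnorm : ‖(-p : H)‖ = 1 := by
    have h1 : Filter.Tendsto (fun n => ‖w (φ n)‖) Filter.atTop (nhds ‖(-p : H)‖) :=
      (continuous_norm.tendsto _).comp hwlim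
    have h2 : Filter.Tendsto (fun n => ‖w (φ n)‖) Filter.atTop (nhds 1) := by
      simpa [hw2] using (tendsto_const_nhds : Filter.Tendsto (fun _ : ℕ => (1:ℝ)) _ _)
    exact tendsto_nhds_unique h1 h2
  have hmemO : (-p : H) ∈ Nᗮ :=
    (Submodule.isClosed_orthogonal N).mem_of_tendsto hwlim
      (Filter.Eventually.of_forall fun n => hw1 (φ n))
  have hker : (1 + A) (-p) = 0 := by
    have h1 : Filter.Tendsto (fun n => (1 + A) (w (φ n))) Filter.atTop (nhds ((1 + A) (-p))) :=
      ((1 + A).continuous.tendsto _).comp hwlim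
    exact tendsto_nhds_unique h1 hT0
  have hzero : (-p : H) = 0 := by
    have hmemN : (-p : H) ∈ N := LinearMap.mem_ker.mpr hker
    exact inner_self_eq_zero.mp ((Submodule.mem_orthogonal N (-p)).mp hmemO (-p) hmemN)
  rw [hzero] at hnorm
  simp at hnorm


/-- An injective continuous endomorphism of a finite-dimensional space is bounded below. -/
lemma aux_anti {E : Type*} [NormedAddCommGroup E] [NormedSpace ℝ E] [FiniteDimensional ℝ E]
    (G : E →L[ℝ] E) (hG : Function.Injective ⇑G) :
    ∃ a > (0:ℝ), ∀ x : E, a * ‖x‖ ≤ ‖G x‖ := by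
  have hinj : Function.Injective (G : E →ₗ[ℝ] E) := hG
  have hsurj := LinearMap.injective_iff_surjective.mp hinj
  let e : E ≃ₗ[ℝ] E := LinearEquiv.ofBijective (G : E →ₗ[ℝ] E) ⟨hinj, hsurj⟩
  let e' : E ≃L[ℝ] E := e.toContinuousLinearEquiv
  refine ⟨(‖(e'.symm : E →L[ℝ] E)‖ + 1)⁻¹, by positivity, fun x => ?_⟩
  have h2 : e'.symm (G x) = x := by
    have h3 : e' x = G x := rfl
    rw [← h3, ContinuousLinearEquiv.symm_apply_apply]
  have h1 : ‖x‖ ≤ (‖(e'.symm : E →L[ℝ] E)‖ + 1) * ‖G x‖ := by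
    calc ‖x‖ = ‖e'.symm (G x)‖ := by rw [h2]
      _ ≤ ‖(e'.symm : E →L[ℝ] E)‖ * ‖G x‖ := (e'.symm : E →L[ℝ] E).le_opNorm _
      _ ≤ (‖(e'.symm : E →L[ℝ] E)‖ + 1) * ‖G x‖ := by
          have := norm_nonneg (G x); nlinarith
  rw [inv_mul_le_iff₀ (by positivity)]
  exact h1

set_option maxHeartbeats 2000000 in
/-- At a regular crossing `λ₀` of a `C²` path `λ ↦ L_λ = I + K_λ` of compact selfadjoint
perturbations of the identity, there are `ε, c > 0` such that
`‖L_λ u‖ ≥ c |λ − λ₀| ‖u‖` for all `|λ − λ₀| < ε` and all `u ∈ H`. -/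
theorem norm_estimate_at_regular_crossing
    (K : ℝ → (H →L[ℝ] H)) (hK : ContDiffOn ℝ 2 K (Icc 0 1))
    (hcpt : ∀ l ∈ Icc (0:ℝ) 1, IsCompactOperator ⇑(K l))
    (hsa : ∀ l ∈ Icc (0:ℝ) 1, IsSelfAdjoint (K l))
    (l₀ : ℝ) (hl₀ : l₀ ∈ Ioo (0:ℝ) 1)
    (hcross : LinearMap.ker ((1 + K l₀ : H →L[ℝ] H) : H →ₗ[ℝ] H) ≠ ⊥)
    (hreg : ∀ u ∈ LinearMap.ker ((1 + K l₀ : H →L[ℝ] H) : H →ₗ[ℝ] H),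
      (∀ v ∈ LinearMap.ker ((1 + K l₀ : H →L[ℝ] H) : H →ₗ[ℝ] H), ⟪derivWithin K (Icc 0 1) l₀ u, v⟫ = 0) → u = 0) :
    ∃ ε > (0:ℝ), ∃ c > (0:ℝ), ∀ l : ℝ, |l - l₀| < ε →
      ∀ u : H, c * |l - l₀| * ‖u‖ ≤ ‖(1 + K l) u‖ := by
  have hl₀I : l₀ ∈ Icc (0:ℝ) 1 := ⟨hl₀.1.le, hl₀.2.le⟩
  set T : H →L[ℝ] H := 1 + K l₀ with hT
  set N : Submodule ℝ H := LinearMap.ker (T : H →ₗ[ℝ] H) with hNdef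
  haveI hfin : FiniteDimensional ℝ N := aux_findim (K l₀) (hcpt l₀ hl₀I)
  haveI : CompleteSpace N := FiniteDimensional.complete ℝ N
  set D : H →L[ℝ] H := derivWithin K (Icc 0 1) l₀ with hD
  have hTsa : IsSelfAdjoint T := by
    rw [hT]; exact (IsSelfAdjoint.one (H →L[ℝ] H)).add (hsa l₀ hl₀I)
  have hsym := ContinuousLinearMap.isSelfAdjoint_iff_isSymmetric.mp hTsa
  have hTN : ∀ v, v ∈ N → T v = 0 := fun v hv => hv
  have hTappgen : ∀ u : H, T u = u + K l₀ u := fun u => by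
    rw [hT]
    simp only [ContinuousLinearMap.add_apply, ContinuousLinearMap.one_apply]
  have hTmem : ∀ u : H, T u ∈ Nᗮ := by
    intro u
    rw [Submodule.mem_orthogonal]
    intro v hv
    rw [real_inner_comm]
    calc ⟪T u, v⟫ = ⟪u, T v⟫ := hsym u v
      _ = 0 := by rw [hTN v hv, inner_zero_right]
  set P := N.orthogonalProjectionOnto with hP
  have hPnorm : ∀ v : H, ‖P v‖ ≤ ‖v‖ := by
    intro v
    calc ‖P v‖ ≤ ‖P‖ * ‖v‖ := P.le_opNorm v
      _ ≤ 1 * ‖v‖ := mul_le_mul_of_nonneg_right (Submodule.orthogonalProjectionOnto_norm_le N) (norm_nonneg v)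
      _ = ‖v‖ := one_mul _
  have hPT : ∀ u : H, P (T u) = 0 := fun u =>
    Submodule.orthogonalProjectionOnto_apply_of_mem_orthogonal (hTmem u)
  have hyOgen : ∀ u : H, u - (P u : H) ∈ Nᗮ := fun u =>
    N.sub_starProjection_mem_orthogonal u
  set G : N →L[ℝ] N := P.comp (D.comp N.subtypeL) with hG
  have hGx : ∀ z : N, G z = P (D (z : H)) := fun z => rfl
  have hGinj : Function.Injective ⇑G := by
    have hker : ∀ z : N, G z = 0 → z = 0 := by
      intro z hz
      have hz' : (z : H) = 0 := by
        apply hreg (z : H) z.2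
        intro v hv
        have h1 : ⟪D (z : H) - (P (D (z : H)) : H), v⟫ = 0 :=
          N.starProjection_inner_eq_zero (D (z : H)) v hv
        have h2 : (P (D (z : H)) : H) = 0 := by
          rw [← hGx z, hz, Submodule.coe_zero]
        rw [show (D (z : H)) = (D (z : H) - (P (D (z : H)) : H)) + (P (D (z : H)) : H) by abel]
        rw [inner_add_left, h1, h2, inner_zero_left, add_zero]
      exact Subtype.ext hz'
    intro z w hzw
    have h0 : z - w = 0 := hker _ (by rw [map_sub, hzw, sub_self])
    exact sub_eq_zero.mp h0
  obtain ⟨a, ha, haG⟩ := aux_anti G hGinj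
  obtain ⟨δ, hδ, hδT⟩ := aux_coercive (K l₀) (hcpt l₀ hl₀I)
  rw [← hT, ← hNdef] at hδT
  -- differentiability at `l₀`
  have hmem𝓝 : Icc (0:ℝ) 1 ∈ nhds l₀ := Icc_mem_nhds hl₀.1 hl₀.2
  have hdiffAt : DifferentiableAt ℝ K l₀ :=
    ((hK.differentiableOn (by norm_num)) l₀ hl₀I).differentiableAt hmem𝓝
  have hDeq : D = deriv K l₀ := by rw [hD]; exact derivWithin_of_mem_nhds hmem𝓝
  have hder : HasDerivAt K D l₀ := by rw [hDeq]; exact hdiffAt.hasDerivAt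
  have ho := hasDerivAt_iff_isLittleO.mp hder
  obtain ⟨ε₀, hε₀, hball⟩ :=
    Metric.eventually_nhds_iff.mp (ho.def (show (0:ℝ) < a/8 by positivity))
  clear_value G P D N T
  clear hG hP hD hNdef hT hder hDeq hdiffAt ho hsym hTsa hcross hreg
  have hM0 : (0:ℝ) ≤ ‖D‖ := norm_nonneg D
  -- constants
  set s : ℝ := min (1/4 : ℝ) (a / (8 * (‖D‖ + 1))) with hs
  have hs0 : 0 < s := lt_min (by norm_num) (by positivity)
  have hs14 : s ≤ 1/4 := min_le_left _ _
  have hMs : ‖D‖ * s ≤ a / 8 := by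
    have h1 : s ≤ a / (8 * (‖D‖ + 1)) := min_le_right _ _
    have h2 : ‖D‖ * s ≤ ‖D‖ * (a / (8 * (‖D‖ + 1))) := mul_le_mul_of_nonneg_left h1 hM0
    have h3 : ‖D‖ * (a / (8 * (‖D‖ + 1))) ≤ a / 8 := by
      rw [mul_div_assoc', div_le_div_iff₀ (by positivity) (by norm_num)]
      nlinarith
    linarith
  clear_value s
  clear hs
  set ε : ℝ := min ε₀ (δ * s / (2 * (‖D‖ + a/8 + 1))) with hε
  have hden : (0:ℝ) < 2 * (‖D‖ + a/8 + 1) := by linarith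
  have hεpos : 0 < ε := lt_min hε₀ (div_pos (mul_pos hδ hs0) hden)
  have hεle : ε ≤ δ * s / (2 * (‖D‖ + a/8 + 1)) := min_le_right _ _
  have hεε₀ : ε ≤ ε₀ := min_le_left _ _
  clear_value ε
  clear hε
  set c : ℝ := min (a/2) (δ * s / (2 * ε)) with hc
  have hcpos : 0 < c :=
    lt_min (by linarith) (div_pos (mul_pos hδ hs0) (by linarith))
  have hc1 : c ≤ a/2 := min_le_left _ _
  have hc2 : c ≤ δ * s / (2 * ε) := min_le_right _ _
  clear_value c
  clear hc
  refine ⟨ε, hεpos, c, hcpos, ?_⟩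
  intro l hl u
  set t : ℝ := l - l₀ with ht
  set E : H →L[ℝ] H := K l - K l₀ - t • D with hEdef
  have hEnorm : ‖E‖ ≤ a/8 * |t| := by
    have h1 : dist l l₀ < ε₀ := by
      rw [Real.dist_eq, ← ht]; exact lt_of_lt_of_le hl hεε₀
    have := hball h1
    rw [hEdef, ht]
    simpa [Real.norm_eq_abs] using this
  have happ : (1 + K l) u = T u + t • D u + E u := by
    have hEapp : E u = K l u - K l₀ u - t • D u := by
      rw [hEdef]
      simp only [ContinuousLinearMap.sub_apply, ContinuousLinearMap.smul_apply]
    have hTapp : T u = u + K l₀ u := hTappgen u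
    have hLapp : (1 + K l) u = u + K l u := by
      simp only [ContinuousLinearMap.add_apply, ContinuousLinearMap.one_apply]
    rw [hLapp, hTapp, hEapp]
    abel
  set x : H := (P u : H) with hx
  set y : H := u - x with hy
  have hxy : u = x + y := by rw [hy]; abel
  have hxN : x ∈ N := (P u).2
  have hyO : y ∈ Nᗮ := by
    rw [hy, hx]
    exact hyOgen u
  have hTx : T x = 0 := hTN x hxN
  have hnx : ‖P u‖ = ‖x‖ := rfl
  have hEu : ‖E u‖ ≤ a/8 * |t| * ‖u‖ := by
    calc ‖E u‖ ≤ ‖E‖ * ‖u‖ := E.le_opNorm u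
      _ ≤ a/8 * |t| * ‖u‖ := mul_le_mul_of_nonneg_right hEnorm (norm_nonneg u)
  have habs : (0:ℝ) ≤ |t| := abs_nonneg t
  have hnu : (0:ℝ) ≤ ‖u‖ := norm_nonneg u
  have hPapp : P ((1 + K l) u) = t • G (P u) + (t • P (D y) + P (E u)) := by
    rw [happ, map_add, map_add, hPT u, zero_add, map_smul]
    have hDu : D u = D x + D y := by conv_lhs => rw [hxy, map_add]
    rw [hDu, map_add, smul_add, hGx]
    abel
  have hTu : T u = T y := by
    conv_lhs => rw [hxy, map_add, hTx, zero_add]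
  have hGa : a * ‖x‖ ≤ ‖G (P u)‖ := by
    have := haG (P u); rwa [hnx] at this
  have hPDy : ‖P (D y)‖ ≤ ‖D‖ * ‖y‖ := le_trans (hPnorm (D y)) (D.le_opNorm y)
  have hPEu : ‖P (E u)‖ ≤ a/8 * |t| * ‖u‖ := le_trans (hPnorm (E u)) hEu
  have hTy : δ * ‖y‖ ≤ ‖T y‖ := hδT y hyO
  have hDuN : ‖D u‖ ≤ ‖D‖ * ‖u‖ := D.le_opNorm u
  have htriT : ‖T u‖ ≤ ‖(1 + K l) u‖ + (|t| * (‖D‖ * ‖u‖) + a/8 * |t| * ‖u‖) := by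
    have h0 : T u = (1 + K l) u - t • D u - E u := by rw [happ]; abel
    calc ‖T u‖ = ‖(1 + K l) u - t • D u - E u‖ := by rw [h0]
      _ ≤ ‖(1 + K l) u - t • D u‖ + ‖E u‖ := norm_sub_le _ _
      _ ≤ ‖(1 + K l) u‖ + ‖t • D u‖ + ‖E u‖ := add_le_add_left (norm_sub_le _ _) _
      _ ≤ ‖(1 + K l) u‖ + (|t| * (‖D‖ * ‖u‖) + a/8 * |t| * ‖u‖) := by
          rw [norm_smul, Real.norm_eq_abs]
          have := mul_le_mul_of_nonneg_left hDuN habs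
          linarith [hEu]
  have hnormu : ‖u‖ ≤ ‖x‖ + ‖y‖ := by
    conv_lhs => rw [hxy]
    exact norm_add_le x y
  have htri : ‖t • G (P u)‖ ≤ ‖P ((1 + K l) u)‖ + ‖t • P (D y) + P (E u)‖ := by
    rw [hPapp]
    have h := norm_add_le (t • G (P u) + (t • P (D y) + P (E u))) (-(t • P (D y) + P (E u)))
    rwa [add_neg_cancel_right, norm_neg] at h
  have hb1 : |t| * (a * ‖x‖) ≤ ‖t • G (P u)‖ := by
    rw [norm_smul, Real.norm_eq_abs]
    exact mul_le_mul_of_nonneg_left hGa habs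
  have hb2 : ‖t • P (D y) + P (E u)‖ ≤ |t| * (‖D‖ * ‖y‖) + a/8 * |t| * ‖u‖ := by
    calc ‖t • P (D y) + P (E u)‖ ≤ ‖t • P (D y)‖ + ‖P (E u)‖ := norm_add_le _ _
      _ ≤ |t| * (‖D‖ * ‖y‖) + a/8 * |t| * ‖u‖ := by
          rw [norm_smul, Real.norm_eq_abs]
          exact add_le_add (mul_le_mul_of_nonneg_left hPDy habs) hPEu
  have hPle : ‖P ((1 + K l) u)‖ ≤ ‖(1 + K l) u‖ := hPnorm _
  clear_value t x y E
  clear hxy happ hx hy hEdef hEnorm hPapp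
  by_cases hcase : ‖y‖ ≤ s * ‖u‖
  · -- kernel-dominant case
    have hxl : 3/4 * ‖u‖ ≤ ‖x‖ := by nlinarith [hnormu]
    have e1 : |t| * (a * (3/4 * ‖u‖)) ≤ |t| * (a * ‖x‖) := by
      apply mul_le_mul_of_nonneg_left _ habs
      exact mul_le_mul_of_nonneg_left hxl ha.le
    have e2 : |t| * (‖D‖ * ‖y‖) ≤ |t| * (‖D‖ * (s * ‖u‖)) := by
      apply mul_le_mul_of_nonneg_left _ habs
      exact mul_le_mul_of_nonneg_left hcase hM0
    have e3 : |t| * (‖D‖ * (s * ‖u‖)) ≤ |t| * (a/8 * ‖u‖) := by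
      apply mul_le_mul_of_nonneg_left _ habs
      rw [← mul_assoc]
      exact mul_le_mul_of_nonneg_right hMs hnu
    nlinarith [mul_le_mul_of_nonneg_right hc1 (mul_nonneg habs hnu)]
  · -- complement-dominant case
    push_neg at hcase
    have hys : δ * (s * ‖u‖) ≤ δ * ‖y‖ := mul_le_mul_of_nonneg_left hcase.le hδ.le
    have hcε : c * ε ≤ δ * s / 2 := by
      have h1 : c * ε ≤ δ * s / (2 * ε) * ε := mul_le_mul_of_nonneg_right hc2 hεpos.le
      have h2 : δ * s / (2 * ε) * ε = δ * s / 2 := by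
        field_simp
      linarith
    have htε : |t| * (‖D‖ + a/8 + 1) ≤ δ * s / 2 := by
      have h1 : |t| * (‖D‖ + a/8 + 1) ≤ ε * (‖D‖ + a/8 + 1) :=
        mul_le_mul_of_nonneg_right hl.le (by linarith)
      have h2 : ε * (‖D‖ + a/8 + 1) ≤ δ * s / 2 := by
        rw [← le_div_iff₀ (by linarith)]
        calc ε ≤ δ * s / (2 * (‖D‖ + a/8 + 1)) := hεle
          _ = δ * s / 2 / (‖D‖ + a/8 + 1) := by rw [div_div]
      linarith
    have hct : c * |t| ≤ δ * s / 2 := by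
      have h1 : c * |t| ≤ c * ε := mul_le_mul_of_nonneg_left hl.le hcpos.le
      linarith
    have hmain : δ * (s * ‖u‖) - (|t| * (‖D‖ * ‖u‖) + a/8 * |t| * ‖u‖) ≤ ‖(1 + K l) u‖ := by
      rw [hTu] at htriT
      linarith
    have hfin1 : |t| * (‖D‖ * ‖u‖) + a/8 * |t| * ‖u‖ ≤ δ * s / 2 * ‖u‖ := by
      have h1 : |t| * (‖D‖ + a/8 + 1) * ‖u‖ ≤ δ * s / 2 * ‖u‖ :=
        mul_le_mul_of_nonneg_right htε hnu
      nlinarith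
    have hfin2 : c * |t| * ‖u‖ ≤ δ * s / 2 * ‖u‖ := mul_le_mul_of_nonneg_right hct hnu
    nlinarith

end
end

section
/- Let H be a real Hilbert space, K : [0,1] → L(H) a C² path of compact selfadjoint operators, and L_λ = I_H + K_λ. If λ₀ ∈ (0,1) is a regular crossing, i.e. ker L_{λ₀} ≠ {0} and the quadratic form u ↦ ⟨K̇_{λ₀} u, u⟩ restricted to ker L_{λ₀} is non-degenerate, then λ₀ is an isolated crossing: there exists ε > 0 such that L_λ is invertible for all λ with 0 < |λ − λ₀| < ε. -/
open Set RealInnerProductSpace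

noncomputable section

variable {H : Type*} [NormedAddCommGroup H] [InnerProductSpace ℝ H] [CompleteSpace H]

/-- Fredholm alternative for selfadjoint compact perturbations of the identity. -/
theorem aux_isUnit_of_ker_eq_bot (A : H →L[ℝ] H) (hcpt : IsCompactOperator ⇑A)
    (hsa : IsSelfAdjoint A) (hker : LinearMap.ker ((1 + A : H →L[ℝ] H) : H →ₗ[ℝ] H) = ⊥) : IsUnit (1 + A) := by
  set T : H →L[ℝ] H := 1 + A with hT
  have hTsa : IsSelfAdjoint T := (IsSelfAdjoint.one (H →L[ℝ] H)).add hsa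
  have hTinj : Function.Injective T := (LinearMap.ker_eq_bot (f := (T : H →ₗ[ℝ] H))).mp hker
  -- T is bounded below
  have hbb : ∃ c : ℝ, 0 < c ∧ ∀ u : H, c * ‖u‖ ≤ ‖T u‖ := by
    by_contra hc
    push_neg at hc
    -- get unit vectors with ‖T u‖ small
    have key : ∀ n : ℕ, ∃ u : H, ‖u‖ = 1 ∧ ‖T u‖ < 1 / (n + 1) := by
      intro n
      obtain ⟨u, hu⟩ := hc (1 / (n + 1)) (by positivity)
      have hu0 : u ≠ 0 := by
        rintro rfl
        simpa using hu
      refine ⟨‖u‖⁻¹ • u, ?_, ?_⟩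
      · rw [norm_smul, norm_inv, norm_norm, inv_mul_cancel₀ (norm_ne_zero_iff.mpr hu0)]
      · rw [map_smul, norm_smul, norm_inv, norm_norm]
        rw [inv_mul_lt_iff₀ (norm_pos_iff.mpr hu0), mul_comm]
        exact hu
    choose u hu1 hu2 using key
    have hTu0 : Filter.Tendsto (fun n => T (u n)) Filter.atTop (nhds 0) := by
      apply squeeze_zero_norm (fun n => (hu2 n).le) tendsto_one_div_add_atTop_nhds_zero_nat
    -- extract convergent subsequence of A (u n)
    have hs : IsCompact (closure (⇑A '' Metric.closedBall 0 1)) :=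
      IsCompactOperator.isCompact_closure_image_closedBall (𝕜₁ := ℝ) (f := (A : H →ₗ[ℝ] H)) hcpt 1
    have hmem : ∀ n, A (u n) ∈ closure (⇑A '' Metric.closedBall 0 1) := fun n =>
      subset_closure ⟨u n, by simp [hu1 n], rfl⟩
    obtain ⟨y, -, φ, hφ, hconv⟩ := hs.tendsto_subseq hmem
    have huconv : Filter.Tendsto (fun n => u (φ n)) Filter.atTop (nhds (-y)) := by
      have huT : ∀ n, u (φ n) = T (u (φ n)) - A (u (φ n)) := by
        intro n
        rw [hT, ContinuousLinearMap.add_apply, ContinuousLinearMap.one_apply,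
          add_sub_cancel_right]
      have h2 : Filter.Tendsto (fun n => T (u (φ n)) - A (u (φ n))) Filter.atTop
          (nhds (0 - y)) := (hTu0.comp hφ.tendsto_atTop).sub hconv
      rw [zero_sub] at h2
      exact h2.congr fun n => (huT n).symm
    have hy1 : ‖(-y : H)‖ = 1 :=
      tendsto_nhds_unique (huconv.norm) (by simpa [hu1] using
        (tendsto_const_nhds : Filter.Tendsto (fun _ : ℕ => (1:ℝ)) Filter.atTop (nhds 1)))
    have hy0 : T (-y) = 0 :=
      tendsto_nhds_unique ((T.continuous.tendsto _).comp huconv) (hTu0.comp hφ.tendsto_atTop)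
    have : (-y : H) = 0 := hTinj (by simpa using hy0)
    rw [this] at hy1
    simp at hy1
  obtain ⟨c, hc, hbb⟩ := hbb
  -- antilipschitz, closed range
  have hanti : AntilipschitzWith c⁻¹.toNNReal T := by
    refine T.antilipschitz_of_bound ?_
    intro x
    rw [Real.coe_toNNReal', max_eq_left_of_lt (inv_pos.mpr hc)]
    rw [← inv_mul_le_iff₀ (inv_pos.mpr hc)]
    simpa using hbb x
  have hclosed : IsClosed (LinearMap.range (T : H →ₗ[ℝ] H) : Set H) := by
    rw [LinearMap.coe_range]
    exact hanti.isClosed_range T.uniformContinuous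
  -- range = ⊤ using selfadjointness
  have hrange : LinearMap.range (T : H →ₗ[ℝ] H) = ⊤ := by
    haveI := hclosed.completeSpace_coe
    rw [← (LinearMap.range (T : H →ₗ[ℝ] H)).orthogonal_orthogonal]
    have : (LinearMap.range (T : H →ₗ[ℝ] H))ᗮ = ⊥ := by
      rw [Submodule.eq_bot_iff]
      intro w hw
      have hTw : T w = 0 := by
        have h0 : ⟪T (T w), w⟫ = 0 := hw (T (T w)) (LinearMap.mem_range_self _ (T w))
        have h1 : ⟪T (T w), w⟫ = ⟪T w, T w⟫ := hTsa.isSymmetric (T w) w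
        rw [h1, inner_self_eq_zero] at h0
        exact h0
      exact hTinj (by simpa using hTw)
    rw [this, Submodule.bot_orthogonal_eq_top]
  exact ContinuousLinearMap.isUnit_iff_bijective.mpr
    ⟨hTinj, LinearMap.range_eq_top.mp hrange⟩

open Filter in
set_option maxHeartbeats 1000000 in
/-- A regular crossing `λ₀` of a `C²` path `λ ↦ L_λ = I + K_λ` of compact selfadjoint
perturbations of the identity is isolated: there is `ε > 0` such that `L_λ` is invertible
for all `0 < |λ − λ₀| < ε`. -/
theorem regular_crossing_isolated
    (K : ℝ → (H →L[ℝ] H)) (hK : ContDiffOn ℝ 2 K (Icc 0 1))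
    (hcpt : ∀ l ∈ Icc (0:ℝ) 1, IsCompactOperator ⇑(K l))
    (hsa : ∀ l ∈ Icc (0:ℝ) 1, IsSelfAdjoint (K l))
    (l₀ : ℝ) (hl₀ : l₀ ∈ Ioo (0:ℝ) 1)
    (hcross : LinearMap.ker ((1 + K l₀ : H →L[ℝ] H) : H →ₗ[ℝ] H) ≠ ⊥)
    (hreg : ∀ u ∈ LinearMap.ker ((1 + K l₀ : H →L[ℝ] H) : H →ₗ[ℝ] H),
      (∀ v ∈ LinearMap.ker ((1 + K l₀ : H →L[ℝ] H) : H →ₗ[ℝ] H), ⟪derivWithin K (Icc 0 1) l₀ u, v⟫ = 0) → u = 0) :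
    ∃ ε > (0:ℝ), ∀ l : ℝ, 0 < |l - l₀| → |l - l₀| < ε → IsUnit (1 + K l) := by
  by_contra hcon
  push_neg at hcon
  obtain ⟨hl₀0, hl₀1⟩ := hl₀
  have hmemIcc : l₀ ∈ Icc (0:ℝ) 1 := ⟨hl₀0.le, hl₀1.le⟩
  set D := derivWithin K (Icc 0 1) l₀ with hD
  -- choose a sequence of crossings converging to l₀
  have key : ∀ n : ℕ, ∃ x : ℝ, 0 < |x - l₀| ∧
      |x - l₀| < min (min l₀ (1 - l₀)) (1 / (n + 1)) ∧ ¬IsUnit (1 + K x) := by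
    intro n
    exact hcon _ (lt_min (lt_min hl₀0 (by linarith)) (by positivity))
  choose l hl1 hl2 hl3 using key
  have hlI : ∀ n, l n ∈ Icc (0:ℝ) 1 := by
    intro n
    have h1 := (hl2 n).trans_le (min_le_left _ _)
    have h2 := abs_lt.mp h1
    constructor
    · have := min_le_left l₀ (1 - l₀); linarith [h2.1]
    · have := min_le_right l₀ (1 - l₀); linarith [h2.2]
  have hlne : ∀ n, l n ≠ l₀ := by
    intro n h
    have := hl1 n
    rw [h] at this
    simp at this
  have hlt : Tendsto l atTop (nhds l₀) := by
    rw [tendsto_iff_dist_tendsto_zero]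
    simp only [Real.dist_eq]
    exact squeeze_zero (fun n => abs_nonneg _)
      (fun n => ((hl2 n).trans_le (min_le_right _ _)).le)
      tendsto_one_div_add_atTop_nhds_zero_nat
  -- unit kernel vectors
  have hker : ∀ n : ℕ, ∃ u : H, ‖u‖ = 1 ∧ (1 + K (l n)) u = 0 := by
    intro n
    have hne : LinearMap.ker ((1 + K (l n) : H →L[ℝ] H) : H →ₗ[ℝ] H) ≠ ⊥ := by
      intro h
      exact hl3 n (aux_isUnit_of_ker_eq_bot _ (hcpt _ (hlI n)) (hsa _ (hlI n)) h)
    obtain ⟨x, hxmem, hx0⟩ := (Submodule.ne_bot_iff _).mp hne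
    refine ⟨‖x‖⁻¹ • x, ?_, ?_⟩
    · rw [norm_smul, norm_inv, norm_norm, inv_mul_cancel₀ (norm_ne_zero_iff.mpr hx0)]
    · rw [map_smul, show (1 + K (l n)) x = 0 from LinearMap.mem_ker.mp hxmem, smul_zero]
  choose u hu1 hu2 using hker
  have hu2' : ∀ n, u n + K (l n) (u n) = 0 := by
    intro n
    have := hu2 n
    rwa [ContinuousLinearMap.add_apply, ContinuousLinearMap.one_apply] at this
  -- compactness: extract convergent subsequence of K l₀ (u n)
  have hs : IsCompact (closure (⇑(K l₀) '' Metric.closedBall 0 1)) :=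
    IsCompactOperator.isCompact_closure_image_closedBall (𝕜₁ := ℝ)
      (f := ((K l₀) : H →ₗ[ℝ] H)) (hcpt l₀ hmemIcc) 1
  have hmem' : ∀ n, K l₀ (u n) ∈ closure (⇑(K l₀) '' Metric.closedBall 0 1) := fun n =>
    subset_closure ⟨u n, by simp [hu1 n], rfl⟩
  obtain ⟨y, -, φ, hφ, hconv⟩ := hs.tendsto_subseq hmem'
  -- continuity of K along the sequence
  have hcont : ContinuousWithinAt K (Icc 0 1) l₀ := (hK.continuousOn).continuousWithinAt hmemIcc
  have hlin : Tendsto (fun n => l (φ n)) atTop (nhdsWithin l₀ (Icc (0:ℝ) 1)) := by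
    rw [tendsto_nhdsWithin_iff]
    exact ⟨hlt.comp hφ.tendsto_atTop, Eventually.of_forall fun n => hlI _⟩
  have hKl : Tendsto (fun n => K (l (φ n))) atTop (nhds (K l₀)) := hcont.tendsto.comp hlin
  have hdiff0 : Tendsto (fun n => K (l (φ n)) - K l₀) atTop (nhds 0) := by
    have h := hKl.sub (tendsto_const_nhds (x := K l₀))
    rwa [sub_self] at h
  have happ0 : Tendsto (fun n => (K (l (φ n)) - K l₀) (u (φ n))) atTop (nhds 0) := by
    refine squeeze_zero_norm (fun n => ?_) (by simpa using hdiff0.norm)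
    calc ‖(K (l (φ n)) - K l₀) (u (φ n))‖
        ≤ ‖K (l (φ n)) - K l₀‖ * ‖u (φ n)‖ := ContinuousLinearMap.le_opNorm _ _
      _ = ‖K (l (φ n)) - K l₀‖ := by rw [hu1, mul_one]
  -- the subsequence of u converges to -y
  have hueq : ∀ n, u (φ n) = -(K l₀ (u (φ n))) - (K (l (φ n)) - K l₀) (u (φ n)) := by
    intro n
    rw [ContinuousLinearMap.sub_apply]
    have h0 := hu2' (φ n)
    have : u (φ n) + K (l (φ n)) (u (φ n)) =
        u (φ n) - (-(K l₀ (u (φ n))) - (K (l (φ n)) (u (φ n)) - K l₀ (u (φ n)))) := by abel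
    rw [this] at h0
    have := sub_eq_zero.mp h0
    exact this
  have huconv : Tendsto (fun n => u (φ n)) atTop (nhds (-y)) := by
    have h2 : Tendsto (fun n => -(K l₀ (u (φ n))) - (K (l (φ n)) - K l₀) (u (φ n)))
        atTop (nhds (-y - 0)) := hconv.neg.sub happ0
    rw [sub_zero] at h2
    exact h2.congr fun n => (hueq n).symm
  have hw1 : ‖(-y : H)‖ = 1 := by
    refine tendsto_nhds_unique huconv.norm ?_
    have : (fun n => ‖u (φ n)‖) = fun _ => (1:ℝ) := funext fun n => hu1 _
    rw [this]
    exact tendsto_const_nhds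
  have hwne : (-y : H) ≠ 0 := by
    intro h
    rw [h, norm_zero] at hw1
    norm_num at hw1
  -- -y is in the kernel of 1 + K l₀
  have hwker : (-y : H) ∈ LinearMap.ker ((1 + K l₀ : H →L[ℝ] H) : H →ₗ[ℝ] H) := by
    rw [LinearMap.mem_ker]
    have h1 : Tendsto (fun n => (1 + K l₀) (u (φ n))) atTop (nhds ((1 + K l₀) (-y))) :=
      ((1 + K l₀).continuous.tendsto _).comp huconv
    have h2 : ∀ n, (1 + K l₀) (u (φ n)) = -((K (l (φ n)) - K l₀) (u (φ n))) := by
      intro n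
      rw [ContinuousLinearMap.add_apply, ContinuousLinearMap.one_apply,
        ContinuousLinearMap.sub_apply, eq_neg_iff_add_eq_zero]
      have h0 := hu2' (φ n)
      have heq : u (φ n) + K l₀ (u (φ n)) + (K (l (φ n)) (u (φ n)) - K l₀ (u (φ n))) =
          u (φ n) + K (l (φ n)) (u (φ n)) := by abel
      rw [heq, h0]
    have h3 : Tendsto (fun n => (1 + K l₀) (u (φ n))) atTop (nhds 0) := by
      have := happ0.neg
      rw [neg_zero] at this
      exact this.congr fun n => (h2 n).symm
    exact tendsto_nhds_unique h1 h3
  -- difference quotients converge to the derivative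
  have hderiv : HasDerivWithinAt K D (Icc 0 1) l₀ :=
    ((hK.differentiableOn (by norm_num)) l₀ hmemIcc).hasDerivWithinAt
  have hslope : Tendsto (slope K l₀) (nhdsWithin l₀ (Icc (0:ℝ) 1 \ {l₀})) (nhds D) :=
    hasDerivWithinAt_iff_tendsto_slope.mp hderiv
  have hlin' : Tendsto (fun n => l (φ n)) atTop (nhdsWithin l₀ (Icc (0:ℝ) 1 \ {l₀})) := by
    rw [tendsto_nhdsWithin_iff]
    exact ⟨hlt.comp hφ.tendsto_atTop, Eventually.of_forall fun n => ⟨hlI _, hlne _⟩⟩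
  have hslopeseq : Tendsto (fun n => slope K l₀ (l (φ n))) atTop (nhds D) := hslope.comp hlin'
  have happly : Tendsto (fun n => (slope K l₀ (l (φ n))) (u (φ n))) atTop (nhds (D (-y))) := by
    have hp : Tendsto (fun n => (slope K l₀ (l (φ n)), u (φ n))) atTop (nhds (D, -y)) :=
      hslopeseq.prodMk_nhds huconv
    exact (isBoundedBilinearMap_apply.continuous.tendsto (D, -y)).comp hp
  -- the difference quotients are orthogonal to the kernel
  have hinner0 : ∀ v ∈ LinearMap.ker ((1 + K l₀ : H →L[ℝ] H) : H →ₗ[ℝ] H), ∀ n : ℕ,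
      ⟪(slope K l₀ (l (φ n))) (u (φ n)), v⟫ = 0 := by
    intro v hv n
    have hKv : K l₀ v = -v := by
      have h0 : (1 + K l₀) v = 0 := LinearMap.mem_ker.mp hv
      rw [ContinuousLinearMap.add_apply, ContinuousLinearMap.one_apply] at h0
      exact eq_neg_of_add_eq_zero_right h0
    have hKu : K (l (φ n)) (u (φ n)) = -(u (φ n)) := eq_neg_of_add_eq_zero_right (hu2' (φ n))
    rw [slope_def_module, ContinuousLinearMap.smul_apply, ContinuousLinearMap.sub_apply,
      real_inner_smul_left]
    have hz : ⟪K (l (φ n)) (u (φ n)) - K l₀ (u (φ n)), v⟫ = 0 := by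
      rw [inner_sub_left, hKu]
      have hB : ⟪K l₀ (u (φ n)), v⟫ = ⟪u (φ n), K l₀ v⟫ := (hsa l₀ hmemIcc).isSymmetric _ _
      rw [hB, hKv, inner_neg_left, inner_neg_right]
      ring
    rw [hz, mul_zero]
  -- conclude ⟪D (-y), v⟫ = 0 for all kernel vectors v, contradicting regularity
  have hfinal : ∀ v ∈ LinearMap.ker ((1 + K l₀ : H →L[ℝ] H) : H →ₗ[ℝ] H), ⟪D (-y), v⟫ = 0 := by
    intro v hv
    have h1 : Tendsto (fun n => ⟪(slope K l₀ (l (φ n))) (u (φ n)), v⟫) atTop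
        (nhds ⟪D (-y), v⟫) := happly.inner tendsto_const_nhds
    have h2 : Tendsto (fun n => ⟪(slope K l₀ (l (φ n))) (u (φ n)), v⟫) atTop (nhds 0) := by
      have : (fun n => ⟪(slope K l₀ (l (φ n))) (u (φ n)), v⟫) = fun _ => (0:ℝ) :=
        funext fun n => hinner0 v hv n
      rw [this]
      exact tendsto_const_nhds
    exact tendsto_nhds_unique h1 h2
  exact hwne (hreg (-y) hwker hfinal)
end
end

section
/- Let V be a finite-dimensional real inner product space, λ₀ ∈ ℝ, and let ℓ : J → Sym(V) be a C¹ path of symmetric linear operators on V defined on an open interval J containing λ₀, with ℓ_{λ₀} = 0 and with the derivative ℓ̇_{λ₀} invertible. Then there exists δ > 0 such that for all a, b ∈ J with λ₀ − δ < a < λ₀ < b < λ₀ + δ, the operators ℓ_a and ℓ_b are invertible and μ(ℓ_a) − μ(ℓ_b) = sgn(ℓ̇_{λ₀}), where μ denotes the number of negative eigenvalues counted with multiplicity and sgn denotes the signature (number of positive eigenvalues minus number of negative eigenvalues). -/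
open Set

noncomputable section

variable {V : Type*} [NormedAddCommGroup V] [InnerProductSpace ℝ V] [FiniteDimensional ℝ V]

/-- The number of negative eigenvalues of an operator `A` on a finite-dimensional real inner
product space, counted with multiplicity. -/
def negEigCount (A : V →L[ℝ] V) : ℕ :=
  ∑ᶠ r ∈ {r : ℝ | r < 0}, Module.finrank ℝ ↥(LinearMap.ker ((A - r • (1 : V →L[ℝ] V) : V →L[ℝ] V) : V →ₗ[ℝ] V))

/-- The signature of a symmetric operator `A`: the number of positive eigenvalues minus the
number of negative eigenvalues, counted with multiplicity. -/
def signature (A : V →L[ℝ] V) : ℤ :=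
  (negEigCount (-A) : ℤ) - (negEigCount A : ℤ)

open scoped RealInnerProductSpace
namespace MorseAux
set_option linter.unusedSectionVars false
variable {n : ℕ} {B : V →L[ℝ] V} {b : OrthonormalBasis (Fin n) ℝ V} {μ : Fin n → ℝ}

lemma repr_apply_op (hB : IsSelfAdjoint B) (heig : ∀ i, B (b i) = μ i • b i) (x : V) (j : Fin n) :
    b.repr (B x) j = μ j * b.repr x j := by
  have hs := ContinuousLinearMap.isSelfAdjoint_iff_isSymmetric.mp hB
  have h2 : ⟪B (b j), x⟫ = ⟪b j, B x⟫ := hs (b j) x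
  rw [b.repr_apply_apply, b.repr_apply_apply, ← h2, heig, real_inner_smul_left]

lemma inner_op_eq_sum (hB : IsSelfAdjoint B) (heig : ∀ i, B (b i) = μ i • b i) (x : V) :
    ⟪B x, x⟫ = ∑ i, μ i * (b.repr x i)^2 := by
  rw [← b.sum_inner_mul_inner (B x) x]
  refine Finset.sum_congr rfl fun i _ => ?_
  have h1 : ⟪B x, b i⟫ = b.repr (B x) i := by
    rw [b.repr_apply_apply]; exact real_inner_comm _ _
  have h2 : ⟪b i, x⟫ = b.repr x i := (b.repr_apply_apply x i).symm
  rw [h1, h2, repr_apply_op hB heig]; ring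

lemma inner_self_eq_sum (x : V) : ⟪x, x⟫ = ∑ i, (b.repr x i)^2 := by
  rw [← b.sum_inner_mul_inner x x]
  refine Finset.sum_congr rfl fun i _ => ?_
  have h1 : ⟪x, b i⟫ = b.repr x i := by
    rw [b.repr_apply_apply]; exact real_inner_comm _ _
  have h2 : ⟪b i, x⟫ = b.repr x i := (b.repr_apply_apply x i).symm
  rw [h1, h2]; ring

lemma repr_eq_zero_of_mem_span {P : Fin n → Prop} {x : V}
    (hx : x ∈ Submodule.span ℝ (b '' {i | P i})) {j : Fin n} (hj : ¬ P j) :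
    b.repr x j = 0 := by
  induction hx using Submodule.span_induction with
  | mem y hy =>
      obtain ⟨i, hi, rfl⟩ := hy
      rw [b.repr_apply_apply]
      exact b.orthonormal.2 (fun h : j = i => hj (h ▸ hi))
  | zero => simp
  | add y z _ _ hy hz => simp [hy, hz]
  | smul c y _ hy => simp [hy]

lemma mem_ker_iff (r : ℝ) (x : V) :
    x ∈ LinearMap.ker ((B - r • (1 : V →L[ℝ] V) : V →L[ℝ] V) : V →ₗ[ℝ] V) ↔ B x = r • x := by
  simp [LinearMap.mem_ker, sub_eq_zero]

lemma ker_eq_span (hB : IsSelfAdjoint B) (heig : ∀ i, B (b i) = μ i • b i) (r : ℝ) :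
    LinearMap.ker ((B - r • (1 : V →L[ℝ] V) : V →L[ℝ] V) : V →ₗ[ℝ] V) = Submodule.span ℝ (b '' {i | μ i = r}) := by
  apply le_antisymm
  · intro x hx
    rw [mem_ker_iff] at hx
    have hrepr : ∀ j, μ j ≠ r → b.repr x j = 0 := by
      intro j hj
      have h1 : μ j * b.repr x j = r * b.repr x j := by
        rw [← repr_apply_op hB heig, hx, map_smul]
        simp
      have h2 : (μ j - r) * b.repr x j = 0 := by ring_nf; linarith
      exact (mul_eq_zero.mp h2).resolve_left (sub_ne_zero.mpr hj)
    rw [← b.sum_repr x]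
    refine Submodule.sum_mem _ fun i _ => ?_
    by_cases hi : μ i = r
    · exact Submodule.smul_mem _ _ (Submodule.subset_span ⟨i, hi, rfl⟩)
    · rw [hrepr i hi, zero_smul]; exact Submodule.zero_mem _
  · rw [Submodule.span_le]
    rintro y ⟨i, hi, rfl⟩
    rw [SetLike.mem_coe, mem_ker_iff, heig i, hi]

lemma finrank_span_image (P : Fin n → Prop) [DecidablePred P] :
    Module.finrank ℝ ↥(Submodule.span ℝ (b '' {i | P i}))
      = (Finset.univ.filter P).card := by
  classical
  have hli : LinearIndependent ℝ (fun s : {i // P i} => b s) :=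
    b.toBasis.linearIndependent.comp Subtype.val Subtype.val_injective
  have hr : Set.range (fun s : {i // P i} => b s) = b '' {i | P i} := by
    rw [show (fun s : {i // P i} => b s) = b ∘ Subtype.val from rfl, Set.range_comp,
      Subtype.range_coe_subtype]
  rw [← hr, finrank_span_eq_card hli, Fintype.card_subtype]

lemma inner_le_of_mem_span (hB : IsSelfAdjoint B) (heig : ∀ i, B (b i) = μ i • b i)
    {P : Fin n → Prop} {t : ℝ} (hP : ∀ i, P i → μ i ≤ t) {x : V}
    (hx : x ∈ Submodule.span ℝ (b '' {i | P i})) :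
    ⟪B x, x⟫ ≤ t * ⟪x, x⟫ := by
  rw [inner_op_eq_sum hB heig, inner_self_eq_sum (b := b), Finset.mul_sum]
  refine Finset.sum_le_sum fun i _ => ?_
  by_cases hi : P i
  · exact mul_le_mul_of_nonneg_right (hP i hi) (sq_nonneg _)
  · rw [repr_eq_zero_of_mem_span hx hi]; simp

lemma le_inner_of_mem_span (hB : IsSelfAdjoint B) (heig : ∀ i, B (b i) = μ i • b i)
    {P : Fin n → Prop} {t : ℝ} (hP : ∀ i, P i → t ≤ μ i) {x : V}
    (hx : x ∈ Submodule.span ℝ (b '' {i | P i})) :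
    t * ⟪x, x⟫ ≤ ⟪B x, x⟫ := by
  rw [inner_op_eq_sum hB heig, inner_self_eq_sum (b := b), Finset.mul_sum]
  refine Finset.sum_le_sum fun i _ => ?_
  by_cases hi : P i
  · exact mul_le_mul_of_nonneg_right (hP i hi) (sq_nonneg _)
  · rw [repr_eq_zero_of_mem_span hx hi]; simp

lemma negEigCount_eq_card (hB : IsSelfAdjoint B) (heig : ∀ i, B (b i) = μ i • b i) :
    negEigCount B = (Finset.univ.filter (fun i => μ i < 0)).card := by
  classical
  have hker : ∀ r : ℝ, Module.finrank ℝ ↥(LinearMap.ker ((B - r • (1 : V →L[ℝ] V) : V →L[ℝ] V) : V →ₗ[ℝ] V))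
      = (Finset.univ.filter (fun i => μ i = r)).card := by
    intro r
    rw [ker_eq_span hB heig r, finrank_span_image]
  set f : ℝ → ℕ := fun r => Module.finrank ℝ ↥(LinearMap.ker ((B - r • (1 : V →L[ℝ] V) : V →L[ℝ] V) : V →ₗ[ℝ] V)) with hf
  set T : Finset ℝ := (Finset.univ.image μ).filter (fun r => r < 0) with hT
  have hsupp : ∀ r, f r ≠ 0 → r ∈ Finset.univ.image μ := by
    intro r hr
    rw [show f r = _ from hker r] at hr
    obtain ⟨i, hi⟩ := Finset.card_ne_zero.mp hr |>.exists_mem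
    simp only [Finset.mem_filter] at hi
    exact hi.2 ▸ Finset.mem_image_of_mem μ (Finset.mem_univ i)
  have h1 : negEigCount B = ∑ r ∈ T, f r := by
    rw [negEigCount]
    apply finsum_mem_eq_sum_of_inter_support_eq
    ext r
    simp only [Set.mem_inter_iff, Set.mem_setOf_eq, Function.mem_support, Finset.coe_filter,
      hT, Finset.coe_filter, Set.mem_setOf_eq, Finset.mem_coe]
    constructor
    · rintro ⟨h1, h2⟩
      exact ⟨⟨hsupp r h2, h1⟩, h2⟩
    · rintro ⟨⟨_, h1⟩, h2⟩
      exact ⟨h1, h2⟩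
  rw [h1]
  have h2 : (Finset.univ.filter (fun i => μ i < 0)).card
      = ∑ r ∈ T, ((Finset.univ.filter (fun i => μ i < 0)).filter (fun i => μ i = r)).card := by
    apply Finset.card_eq_sum_card_fiberwise
    intro i hi
    simp only [Finset.mem_coe, Finset.mem_filter, Finset.mem_univ, true_and] at hi
    simp only [hT, Finset.mem_coe, Finset.mem_filter]
    exact ⟨Finset.mem_image_of_mem μ (Finset.mem_univ i), hi⟩
  rw [h2]
  refine Finset.sum_congr rfl fun r hr => ?_
  simp only [hT, Finset.mem_filter] at hr
  rw [show f r = _ from hker r]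
  congr 1
  rw [Finset.filter_filter]
  apply Finset.filter_congr
  intro i _
  constructor
  · intro h; exact ⟨h ▸ hr.2, h⟩
  · rintro ⟨_, h⟩; exact h

lemma count (B : V →L[ℝ] V) (hB : IsSelfAdjoint B) (Wn Wp : Submodule ℝ V)
    (hdim : Module.finrank ℝ Wn + Module.finrank ℝ Wp = Module.finrank ℝ V)
    (hneg : ∀ x ∈ Wn, x ≠ 0 → ⟪B x, x⟫ < 0)
    (hpos : ∀ x ∈ Wp, x ≠ 0 → 0 < ⟪B x, x⟫) :
    IsUnit B ∧ negEigCount B = Module.finrank ℝ Wn := by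
  classical
  have hs := ContinuousLinearMap.isSelfAdjoint_iff_isSymmetric.mp hB
  set N := Module.finrank ℝ V with hN
  obtain ⟨b, μ, heig⟩ : ∃ (b : OrthonormalBasis (Fin N) ℝ V) (μ : Fin N → ℝ),
      ∀ i, B (b i) = μ i • b i :=
    ⟨hs.eigenvectorBasis hN.symm, hs.eigenvalues hN.symm, fun i => by
      exact_mod_cast hs.apply_eigenvectorBasis hN.symm i⟩
  set cn := (Finset.univ.filter fun i => μ i < 0).card with hcn
  set cp := (Finset.univ.filter fun i => 0 < μ i).card with hcp
  set cn0 := (Finset.univ.filter fun i => μ i ≤ 0).card with hcn0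
  set cp0 := (Finset.univ.filter fun i => 0 ≤ μ i).card with hcp0
  set c0 := (Finset.univ.filter fun i => μ i = 0).card with hc0
  have hsplit1 : cn0 + cp = N := by
    have := Finset.card_filter_add_card_filter_not
      (s := (Finset.univ : Finset (Fin N))) (p := fun i => μ i ≤ 0)
    simp only [not_le] at this
    simpa using this
  have hsplit2 : cp0 + cn = N := by
    have := Finset.card_filter_add_card_filter_not
      (s := (Finset.univ : Finset (Fin N))) (p := fun i => 0 ≤ μ i)
    simp only [not_le] at this
    simpa using this
  have hu1 : cn0 = cn + c0 := by
    rw [hcn0, hcn, hc0, ← Finset.card_union_of_disjoint ?_]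
    · congr 1; ext i
      simp only [Finset.mem_filter, Finset.mem_univ, true_and, Finset.mem_union]
      constructor
      · intro h; rcases lt_or_eq_of_le h with h | h
        · exact Or.inl h
        · exact Or.inr h
      · rintro (h | h)
        · exact le_of_lt h
        · exact le_of_eq h
    · rw [Finset.disjoint_left]
      intro i hi1 hi2
      simp only [Finset.mem_filter, Finset.mem_univ, true_and] at hi1 hi2
      linarith
  have hu2 : cp0 = cp + c0 := by
    rw [hcp0, hcp, hc0, ← Finset.card_union_of_disjoint ?_]
    · congr 1; ext i
      simp only [Finset.mem_filter, Finset.mem_univ, true_and, Finset.mem_union]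
      constructor
      · intro h; rcases lt_or_eq_of_le h with h | h
        · exact Or.inl h
        · exact Or.inr h.symm
      · rintro (h | h)
        · exact le_of_lt h
        · exact ge_of_eq h
    · rw [Finset.disjoint_left]
      intro i hi1 hi2
      simp only [Finset.mem_filter, Finset.mem_univ, true_and] at hi1 hi2
      linarith
  set Nn := Submodule.span ℝ (⇑b '' {i | μ i ≤ 0}) with hNn
  set Pp := Submodule.span ℝ (⇑b '' {i | 0 ≤ μ i}) with hPp
  have hNnrk : Module.finrank ℝ Nn = cn0 := finrank_span_image _
  have hPprk : Module.finrank ℝ Pp = cp0 := finrank_span_image _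
  have hI1 : cn0 + Module.finrank ℝ Wp ≤ N := by
    have hdisj : Nn ⊓ Wp = ⊥ := by
      rw [Submodule.eq_bot_iff]
      rintro x ⟨hx1, hx2⟩
      by_contra hx0
      have h1 : ⟪B x, x⟫ ≤ 0 := by
        have := inner_le_of_mem_span hB heig (P := fun i => μ i ≤ 0) (t := 0)
          (fun i h => h) hx1
        simpa using this
      exact absurd (hpos x hx2 hx0) (not_lt.mpr h1)
    calc cn0 + Module.finrank ℝ Wp
        = Module.finrank ℝ Nn + Module.finrank ℝ Wp := by rw [hNnrk]
      _ = Module.finrank ℝ ↥(Nn ⊔ Wp) + Module.finrank ℝ ↥(Nn ⊓ Wp) :=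
          (Submodule.finrank_sup_add_finrank_inf_eq _ _).symm
      _ = Module.finrank ℝ ↥(Nn ⊔ Wp) := by rw [hdisj]; simp
      _ ≤ N := Submodule.finrank_le _
  have hI2 : cp0 + Module.finrank ℝ Wn ≤ N := by
    have hdisj : Pp ⊓ Wn = ⊥ := by
      rw [Submodule.eq_bot_iff]
      rintro x ⟨hx1, hx2⟩
      by_contra hx0
      have h1 : 0 ≤ ⟪B x, x⟫ := by
        have := le_inner_of_mem_span hB heig (P := fun i => 0 ≤ μ i) (t := 0)
          (fun i h => h) hx1
        simpa using this
      exact absurd (hneg x hx2 hx0) (not_lt.mpr h1)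
    calc cp0 + Module.finrank ℝ Wn
        = Module.finrank ℝ Pp + Module.finrank ℝ Wn := by rw [hPprk]
      _ = Module.finrank ℝ ↥(Pp ⊔ Wn) + Module.finrank ℝ ↥(Pp ⊓ Wn) :=
          (Submodule.finrank_sup_add_finrank_inf_eq _ _).symm
      _ = Module.finrank ℝ ↥(Pp ⊔ Wn) := by rw [hdisj]; simp
      _ ≤ N := Submodule.finrank_le _
  have harith : c0 = 0 ∧ cn = Module.finrank ℝ Wn := by omega
  refine ⟨?_, ?_⟩
  · have hempty : {i : Fin N | μ i = 0} = ∅ := by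
      have := Finset.card_eq_zero.mp (hc0 ▸ harith.1 : (Finset.univ.filter fun i => μ i = 0).card = 0)
      ext i
      simp only [Set.mem_setOf_eq, Set.mem_empty_iff_false, iff_false]
      intro h
      have hmem : i ∈ (Finset.univ.filter fun i => μ i = 0) := by simp [h]
      rw [this] at hmem
      exact absurd hmem (Finset.notMem_empty i)
    have hker : LinearMap.ker ((B - (0:ℝ) • (1 : V →L[ℝ] V) : V →L[ℝ] V) : V →ₗ[ℝ] V) = ⊥ := by
      rw [ker_eq_span hB heig 0, hempty]
      simp
    have hinj : Function.Injective ⇑B := by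
      intro x y hxy
      have : x - y ∈ LinearMap.ker ((B - (0:ℝ) • (1 : V →L[ℝ] V) : V →L[ℝ] V) : V →ₗ[ℝ] V) := by
        rw [mem_ker_iff, zero_smul, map_sub, hxy, sub_self]
      rw [hker, Submodule.mem_bot] at this
      exact sub_eq_zero.mp this
    have hsurj : Function.Surjective ⇑B :=
      LinearMap.injective_iff_surjective.mp hinj
    exact ContinuousLinearMap.isUnit_iff_bijective.mpr ⟨hinj, hsurj⟩
  · rw [negEigCount_eq_card hB heig, ← hcn, harith.2]

end MorseAux


open MorseAux in
set_option maxHeartbeats 1000000 in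
/-- Finite-dimensional reduction near a regular crossing: if `ℓ` is a `C¹` path of symmetric
operators on an open interval `J ∋ l₀` with `ℓ_{l₀} = 0` and invertible derivative
`ℓ̇_{l₀}`, then for all `a < l₀ < b` in `J` close enough to `l₀` the operators `ℓ_a, ℓ_b` are
invertible and `μ(ℓ_a) − μ(ℓ_b) = sgn(ℓ̇_{l₀})`. -/
theorem morse_index_jump_eq_signature_of_derivative
    (α β l₀ : ℝ) (hmem : l₀ ∈ Ioo α β)
    (ℓ : ℝ → (V →L[ℝ] V)) (hC1 : ContDiffOn ℝ 1 ℓ (Ioo α β))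
    (hsym : ∀ l ∈ Ioo α β, IsSelfAdjoint (ℓ l))
    (h0 : ℓ l₀ = 0) (hinv : IsUnit (deriv ℓ l₀)) :
    ∃ δ > (0:ℝ), ∀ a b : ℝ, a ∈ Ioo α β → b ∈ Ioo α β →
      l₀ - δ < a → a < l₀ → l₀ < b → b < l₀ + δ →
      IsUnit (ℓ a) ∧ IsUnit (ℓ b) ∧
        (negEigCount (ℓ a) : ℤ) - (negEigCount (ℓ b) : ℤ) = signature (deriv ℓ l₀) := by
  classical
  set D := deriv ℓ l₀ with hD
  have hopen : IsOpen (Ioo α β) := isOpen_Ioo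
  have hdiff : DifferentiableOn ℝ ℓ (Ioo α β) := hC1.differentiableOn one_ne_zero
  have hder : HasDerivAt ℓ D l₀ :=
    ((hdiff l₀ hmem).differentiableAt (hopen.mem_nhds hmem)).hasDerivAt
  have hslope : Filter.Tendsto (slope ℓ l₀) (nhdsWithin l₀ {l₀}ᶜ) (nhds D) :=
    hasDerivAt_iff_tendsto_slope.mp hder
  have hse : ∀ x : ℝ, slope ℓ l₀ x = (x - l₀)⁻¹ • ℓ x := by
    intro x
    rw [slope_def_module, h0, sub_zero]
  -- slope values are selfadjoint on `Ioo α β`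
  have hssa : ∀ t ∈ Ioo α β, IsSelfAdjoint (slope ℓ l₀ t) := by
    intro t ht
    rw [hse]
    exact (IsSelfAdjoint.all _).smul (hsym t ht)
  -- `D` is selfadjoint
  have hDsa : IsSelfAdjoint D := by
    rw [ContinuousLinearMap.isSelfAdjoint_iff_isSymmetric]
    intro x y
    have hFne : (nhdsWithin l₀ (Ioo l₀ β)).NeBot := by
      refine mem_closure_iff_nhdsWithin_neBot.mp ?_
      rw [closure_Ioo (ne_of_lt hmem.2)]
      exact ⟨le_rfl, le_of_lt hmem.2⟩
    have hmono : nhdsWithin l₀ (Ioo l₀ β) ≤ nhdsWithin l₀ {l₀}ᶜ :=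
      nhdsWithin_mono _ (fun t ht => Set.mem_compl_singleton_iff.mpr (ne_of_gt ht.1))
    have ht : Filter.Tendsto (slope ℓ l₀) (nhdsWithin l₀ (Ioo l₀ β)) (nhds D) :=
      hslope.mono_left hmono
    have hax : Filter.Tendsto (fun t => slope ℓ l₀ t x) (nhdsWithin l₀ (Ioo l₀ β))
        (nhds (D x)) := ((ContinuousLinearMap.apply ℝ V x).continuous.tendsto D).comp ht
    have hay : Filter.Tendsto (fun t => slope ℓ l₀ t y) (nhdsWithin l₀ (Ioo l₀ β))
        (nhds (D y)) := ((ContinuousLinearMap.apply ℝ V y).continuous.tendsto D).comp ht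
    have h1 : Filter.Tendsto (fun t => (⟪slope ℓ l₀ t x, y⟫ : ℝ))
        (nhdsWithin l₀ (Ioo l₀ β)) (nhds ⟪D x, y⟫) := hax.inner tendsto_const_nhds
    have h2 : Filter.Tendsto (fun t => (⟪x, slope ℓ l₀ t y⟫ : ℝ))
        (nhdsWithin l₀ (Ioo l₀ β)) (nhds ⟪x, D y⟫) := tendsto_const_nhds.inner hay
    have heq : ∀ᶠ t in nhdsWithin l₀ (Ioo l₀ β),
        (⟪slope ℓ l₀ t x, y⟫ : ℝ) = ⟪x, slope ℓ l₀ t y⟫ := by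
      filter_upwards [self_mem_nhdsWithin] with t ht
      have htab : t ∈ Ioo α β := ⟨lt_trans hmem.1 ht.1, ht.2⟩
      exact ContinuousLinearMap.isSelfAdjoint_iff_isSymmetric.mp (hssa t htab) x y
    exact tendsto_nhds_unique (h1.congr' heq) h2
  have hDs := ContinuousLinearMap.isSelfAdjoint_iff_isSymmetric.mp hDsa
  set N := Module.finrank ℝ V with hN
  obtain ⟨b, μ, heig⟩ : ∃ (b : OrthonormalBasis (Fin N) ℝ V) (μ : Fin N → ℝ),
      ∀ i, D (b i) = μ i • b i :=
    ⟨hDs.eigenvectorBasis hN.symm, hDs.eigenvalues hN.symm, fun i => by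
      exact_mod_cast hDs.apply_eigenvectorBasis hN.symm i⟩
  have hbij : Function.Bijective ⇑D := ContinuousLinearMap.isUnit_iff_bijective.mp hinv
  have hμ : ∀ i, μ i ≠ 0 := by
    intro i h
    have h1 := heig i
    rw [h, zero_smul] at h1
    have hb0 : b i = 0 := hbij.injective (h1.trans (map_zero D).symm)
    have := b.orthonormal.1 i
    rw [hb0, norm_zero] at this
    norm_num at this
  -- the spectral gap
  obtain ⟨c, hc0, hcgap⟩ : ∃ c : ℝ, 0 < c ∧ ∀ i, c ≤ |μ i| := by
    rcases isEmpty_or_nonempty (Fin N) with hE | hE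
    · exact ⟨1, one_pos, fun i => (IsEmpty.false i).elim⟩
    · set s := Finset.univ.image (fun i => |μ i|) with hsdef
      have hs : s.Nonempty :=
        ⟨|μ (Classical.arbitrary _)|, Finset.mem_image_of_mem _ (Finset.mem_univ _)⟩
      refine ⟨s.min' hs, ?_, fun i => s.min'_le _ (Finset.mem_image_of_mem _ (Finset.mem_univ _))⟩
      obtain ⟨i, _, hi⟩ := Finset.mem_image.mp (s.min'_mem hs)
      rw [← hi]
      exact abs_pos.mpr (hμ i)
  set Wn := Submodule.span ℝ (⇑b '' {i | μ i < 0}) with hWn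
  set Wp := Submodule.span ℝ (⇑b '' {i | 0 < μ i}) with hWp
  have hWnrk : Module.finrank ℝ Wn = (Finset.univ.filter fun i => μ i < 0).card :=
    finrank_span_image _
  have hWprk : Module.finrank ℝ Wp = (Finset.univ.filter fun i => 0 < μ i).card :=
    finrank_span_image _
  have hdim : Module.finrank ℝ Wn + Module.finrank ℝ Wp = Module.finrank ℝ V := by
    rw [hWnrk, hWprk]
    have hco : (Finset.univ.filter fun i => ¬ μ i < 0) = (Finset.univ.filter fun i => 0 < μ i) := by
      apply Finset.filter_congr
      intro i _
      simp only [not_lt]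
      constructor
      · intro h; exact lt_of_le_of_ne h (Ne.symm (hμ i))
      · exact le_of_lt
    have := Finset.card_filter_add_card_filter_not
      (s := (Finset.univ : Finset (Fin N))) (p := fun i => μ i < 0)
    rw [hco] at this
    simpa using this
  have hdim' : Module.finrank ℝ Wp + Module.finrank ℝ Wn = Module.finrank ℝ V := by
    rw [add_comm]; exact hdim
  -- quadratic form bounds for D
  have hDn : ∀ x ∈ Wn, ⟪D x, x⟫ ≤ -c * ⟪x, x⟫ := by
    intro x hx
    refine inner_le_of_mem_span hDsa heig (P := fun i => μ i < 0) (t := -c) ?_ hx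
    intro i hi
    have := hcgap i
    rw [abs_of_neg hi] at this
    linarith
  have hDp : ∀ x ∈ Wp, c * ⟪x, x⟫ ≤ ⟪D x, x⟫ := by
    intro x hx
    refine le_inner_of_mem_span hDsa heig (P := fun i => 0 < μ i) (t := c) ?_ hx
    intro i hi
    have := hcgap i
    rw [abs_of_pos hi] at this
    linarith
  -- perturbation: any selfadjoint E with ‖E - D‖ < c is negative definite on Wn,
  -- positive definite on Wp
  have hpert : ∀ E : V →L[ℝ] V, ‖E - D‖ < c →
      (∀ x ∈ Wn, x ≠ 0 → ⟪E x, x⟫ < 0) ∧ (∀ x ∈ Wp, x ≠ 0 → 0 < ⟪E x, x⟫) := by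
    intro E hE
    have key : ∀ x : V, |⟪E x, x⟫ - ⟪D x, x⟫| ≤ ‖E - D‖ * ‖x‖^2 := by
      intro x
      have h1 : ⟪E x, x⟫ - ⟪D x, x⟫ = ⟪(E - D) x, x⟫ := by
        rw [ContinuousLinearMap.sub_apply, inner_sub_left]
      rw [h1]
      calc |⟪(E - D) x, x⟫| ≤ ‖(E - D) x‖ * ‖x‖ := abs_real_inner_le_norm _ _
        _ ≤ (‖E - D‖ * ‖x‖) * ‖x‖ :=
            mul_le_mul_of_nonneg_right ((E - D).le_opNorm x) (norm_nonneg x)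
        _ = ‖E - D‖ * ‖x‖^2 := by ring
    constructor
    · intro x hx hne
      have h1 := hDn x hx
      have h2 := key x
      have h3 : (0:ℝ) < ‖x‖ := norm_pos_iff.mpr hne
      have h4 : ⟪x, x⟫ = ‖x‖^2 := real_inner_self_eq_norm_sq x
      rw [h4] at h1
      have h5 := abs_le.mp h2
      have h6 : ‖E - D‖ * ‖x‖^2 < c * ‖x‖^2 :=
        mul_lt_mul_of_pos_right hE (pow_pos h3 2)
      linarith [h5.1, h5.2]
    · intro x hx hne
      have h1 := hDp x hx
      have h2 := key x
      have h3 : (0:ℝ) < ‖x‖ := norm_pos_iff.mpr hne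
      have h4 : ⟪x, x⟫ = ‖x‖^2 := real_inner_self_eq_norm_sq x
      rw [h4] at h1
      have h5 := abs_le.mp h2
      have h6 : ‖E - D‖ * ‖x‖^2 < c * ‖x‖^2 :=
        mul_lt_mul_of_pos_right hE (pow_pos h3 2)
      linarith [h5.1, h5.2]
  -- counts for D and -D
  have hcountD : IsUnit D ∧ negEigCount D = Module.finrank ℝ Wn := by
    refine count D hDsa Wn Wp hdim ?_ ?_
    · intro x hx hne
      have h1 := hDn x hx
      have h2 : (0:ℝ) < ⟪x, x⟫ := by rw [real_inner_self_eq_norm_sq]; exact pow_pos (norm_pos_iff.mpr hne) 2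
      nlinarith
    · intro x hx hne
      have h1 := hDp x hx
      have h2 : (0:ℝ) < ⟪x, x⟫ := by rw [real_inner_self_eq_norm_sq]; exact pow_pos (norm_pos_iff.mpr hne) 2
      nlinarith
  have hcountnD : IsUnit (-D) ∧ negEigCount (-D) = Module.finrank ℝ Wp := by
    refine count (-D) hDsa.neg Wp Wn hdim' ?_ ?_
    · intro x hx hne
      have h1 := hDp x hx
      have h2 : (0:ℝ) < ⟪x, x⟫ := by rw [real_inner_self_eq_norm_sq]; exact pow_pos (norm_pos_iff.mpr hne) 2
      have h3 : ⟪(-D) x, x⟫ = -⟪D x, x⟫ := by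
        rw [ContinuousLinearMap.neg_apply, inner_neg_left]
      rw [h3]
      nlinarith
    · intro x hx hne
      have h1 := hDn x hx
      have h2 : (0:ℝ) < ⟪x, x⟫ := by rw [real_inner_self_eq_norm_sq]; exact pow_pos (norm_pos_iff.mpr hne) 2
      have h3 : ⟪(-D) x, x⟫ = -⟪D x, x⟫ := by
        rw [ContinuousLinearMap.neg_apply, inner_neg_left]
      rw [h3]
      nlinarith
  -- choose δ
  have hev : {t : ℝ | dist (slope ℓ l₀ t) D < c} ∈ nhdsWithin l₀ {l₀}ᶜ :=
    Metric.tendsto_nhds.mp hslope c hc0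
  obtain ⟨δ, hδ0, hδ⟩ := Metric.mem_nhdsWithin_iff.mp hev
  refine ⟨δ, hδ0, ?_⟩
  intro a b hamem hbmem ha1 ha2 hb1 hb2
  have hasub : a ∈ Metric.ball l₀ δ ∩ {l₀}ᶜ := by
    constructor
    · rw [Metric.mem_ball, Real.dist_eq, abs_lt]
      constructor <;> linarith
    · exact fun h => absurd (h : a = l₀) (ne_of_lt ha2)
  have hbsub : b ∈ Metric.ball l₀ δ ∩ {l₀}ᶜ := by
    constructor
    · rw [Metric.mem_ball, Real.dist_eq, abs_lt]
      constructor <;> linarith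
    · exact fun h => absurd (h : b = l₀) (ne_of_gt hb1)
  have hadist : ‖slope ℓ l₀ a - D‖ < c := by
    have := hδ hasub
    rwa [Set.mem_setOf_eq, dist_eq_norm] at this
  have hbdist : ‖slope ℓ l₀ b - D‖ < c := by
    have := hδ hbsub
    rwa [Set.mem_setOf_eq, dist_eq_norm] at this
  obtain ⟨haneg, hapos⟩ := hpert _ hadist
  obtain ⟨hbneg, hbpos⟩ := hpert _ hbdist
  -- express ℓ a, ℓ b via slopes
  have hsa : ℓ a = (a - l₀) • slope ℓ l₀ a := by
    rw [hse, smul_inv_smul₀ (sub_ne_zero.mpr (ne_of_lt ha2))]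
  have hsb : ℓ b = (b - l₀) • slope ℓ l₀ b := by
    rw [hse, smul_inv_smul₀ (sub_ne_zero.mpr (ne_of_gt hb1))]
  have hqa : ∀ x : V, ⟪(ℓ a) x, x⟫ = (a - l₀) * ⟪(slope ℓ l₀ a) x, x⟫ := by
    intro x
    rw [hsa, ContinuousLinearMap.smul_apply, real_inner_smul_left]
  have hqb : ∀ x : V, ⟪(ℓ b) x, x⟫ = (b - l₀) * ⟪(slope ℓ l₀ b) x, x⟫ := by
    intro x
    rw [hsb, ContinuousLinearMap.smul_apply, real_inner_smul_left]
  have hcounta : IsUnit (ℓ a) ∧ negEigCount (ℓ a) = Module.finrank ℝ Wp := by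
    refine count (ℓ a) (hsym a hamem) Wp Wn hdim' ?_ ?_
    · intro x hx hne
      rw [hqa]
      have := hapos x hx hne
      nlinarith
    · intro x hx hne
      rw [hqa]
      have := haneg x hx hne
      nlinarith
  have hcountb : IsUnit (ℓ b) ∧ negEigCount (ℓ b) = Module.finrank ℝ Wn := by
    refine count (ℓ b) (hsym b hbmem) Wn Wp hdim ?_ ?_
    · intro x hx hne
      rw [hqb]
      have := hbneg x hx hne
      nlinarith
    · intro x hx hne
      rw [hqb]
      have := hbpos x hx hne
      nlinarith
  refine ⟨hcounta.1, hcountb.1, ?_⟩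
  rw [hcounta.2, hcountb.2, signature, hcountD.2, hcountnD.2]
end
end

section
/- Let H be a real Hilbert space, let L : J → L(H) be a path of bounded selfadjoint operators differentiable (in operator norm) at λ₀ ∈ J, and let U : J → L(H) be a path of orthogonal operators differentiable at λ₀ with U_{λ₀} = I_H. Then for all u, v ∈ ker L_{λ₀}, ⟨(d/dλ)|_{λ=λ₀} (U_λ L_λ U_λ⁻¹) u, v⟩ = ⟨L̇_{λ₀} u, v⟩, where L̇_{λ₀} is the derivative of L at λ₀. -/
open RealInnerProductSpace

noncomputable section

variable {H : Type*} [NormedAddCommGroup H] [InnerProductSpace ℝ H] [CompleteSpace H]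

set_option synthInstance.maxHeartbeats 1000000

/-- The derivative of the conjugated path `λ ↦ U_λ L_λ U_λ⁻¹`, as a bilinear form on the
kernel of `L_{λ₀}`, agrees with the derivative of the path `L`: if `L` is a path of bounded
selfadjoint operators differentiable at `λ₀`, `U` is a path of orthogonal operators (surjective
linear isometries) differentiable at `λ₀` with `U_{λ₀} = I`, and `W_λ = U_λ⁻¹`, then
`⟪(d/dλ)|_{λ₀} (U_λ L_λ U_λ⁻¹) u, v⟫ = ⟪L̇_{λ₀} u, v⟫` for all `u, v ∈ ker L_{λ₀}`. -/
theorem deriv_conjugated_path_on_kernel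
    (L U W : ℝ → (H →L[ℝ] H)) (l₀ : ℝ)
    (hLsa : ∀ l : ℝ, IsSelfAdjoint (L l))
    (L' : H →L[ℝ] H) (hL : HasDerivAt L L' l₀)
    (hUiso : ∀ l : ℝ, (∀ x : H, ‖U l x‖ = ‖x‖) ∧ Function.Surjective ⇑(U l))
    (hU0 : U l₀ = 1)
    (U' : H →L[ℝ] H) (hU : HasDerivAt U U' l₀)
    (hW : ∀ l : ℝ, W l * U l = 1 ∧ U l * W l = 1)
    (M' : H →L[ℝ] H) (hM : HasDerivAt (fun l => U l * L l * W l) M' l₀) :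
    ∀ u ∈ LinearMap.ker (L l₀ : H →ₗ[ℝ] H), ∀ v ∈ LinearMap.ker (L l₀ : H →ₗ[ℝ] H), ⟪M' u, v⟫ = ⟪L' u, v⟫ := by
  -- W l₀ = 1
  have hW0 : W l₀ = 1 := by
    have := (hW l₀).1
    rw [hU0, mul_one] at this
    exact this
  -- W l = Ring.inverse (U l)
  have hWeq : ∀ l, W l = Ring.inverse (U l) := by
    intro l
    obtain ⟨u, hu⟩ : IsUnit (U l) := ⟨⟨U l, W l, (hW l).2, (hW l).1⟩, rfl⟩
    rw [← hu, Ring.inverse_unit]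
    have : (↑u : H →L[ℝ] H) * W l = 1 := by rw [hu]; exact (hW l).2
    exact (Units.inv_eq_of_mul_eq_one_right this).symm
  -- derivative of W
  have hWderiv : HasDerivAt W (-U') l₀ := by
    obtain ⟨u, huu⟩ : IsUnit (U l₀) := ⟨⟨U l₀, W l₀, (hW l₀).2, (hW l₀).1⟩, rfl⟩
    have h1 : HasFDerivAt Ring.inverse
        (-(ContinuousLinearMap.mulLeftRight ℝ (H →L[ℝ] H) ↑u⁻¹ ↑u⁻¹)) (U l₀) := by
      rw [← huu]; exact hasFDerivAt_ringInverse u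
    have h2 := h1.comp_hasDerivAt l₀ hU
    have hu1 : (u : H →L[ℝ] H) = 1 := by rw [huu, hU0]
    have huinv : ((u⁻¹ : (H →L[ℝ] H)ˣ) : H →L[ℝ] H) = 1 := by
      have : (u : H →L[ℝ] H) * ↑u⁻¹ = 1 := u.mul_inv
      rwa [hu1, one_mul] at this
    have heq : Ring.inverse ∘ U = W := funext fun l => (hWeq l).symm
    rw [heq] at h2
    simpa [huinv] using h2
  -- derivative of the product
  have hM2 : HasDerivAt (fun l => U l * L l * W l)
      ((U' * L l₀ + U l₀ * L') * W l₀ + U l₀ * L l₀ * (-U')) l₀ :=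
    (hU.mul hL).mul hWderiv
  have hM' : M' = (U' * L l₀ + L') + L l₀ * (-U') := by
    have := hM.unique hM2
    rw [this, hU0, hW0]
    simp
  intro u hu v hv
  have hu0 : L l₀ u = 0 := hu
  have hv0 : L l₀ v = 0 := hv
  rw [hM']
  simp only [ContinuousLinearMap.add_apply, ContinuousLinearMap.mul_apply,
    ContinuousLinearMap.neg_apply, hu0, map_zero]
  rw [inner_add_left, inner_add_left]
  have hsa : ⟪(L l₀) (-(U' u)), v⟫ = ⟪-(U' u), (L l₀) v⟫ := by
    have := (hLsa l₀)
    rw [ContinuousLinearMap.isSelfAdjoint_iff'] at this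
    nth_rewrite 1 [← this]
    exact ContinuousLinearMap.adjoint_inner_left _ _ _
  rw [hsa, hv0, inner_zero_right, inner_zero_left]
  ring
end
end

section
/- Let S : [0,1] → ℝ^{n×n} be a smooth path of symmetric matrices, λ₀ ∈ (0,1), and let u ∈ C²([0,1],ℝⁿ) satisfy u''(x) + λ₀² S(λ₀ x) u(x) = 0 for all x ∈ [0,1], u(0) = 0 and u(1) = 0. Then the function f(λ) = ∫₀¹ λ² ⟨S(λ x) u(x), u(x)⟩ dx, defined for λ in a neighborhood of λ₀ in (0,1), is differentiable at λ₀ and f'(λ₀) = (1/λ₀) ‖u'(1)‖². -/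
open Set RealInnerProductSpace

noncomputable section

set_option maxHeartbeats 1000000 in
/-- The crossing-form computation: if `u` is a `C²` solution of the reparametrized Jacobi
boundary value problem `u'' + λ₀² S(λ₀ x) u = 0` on `[0,1]` with `u 0 = u 1 = 0`, then
`f(λ) = ∫₀¹ λ² ⟪S(λx) u(x), u(x)⟫ dx` is differentiable at `λ₀` with
`f'(λ₀) = (1/λ₀) ‖u'(1)‖²`. -/
theorem crossing_form_derivative {n : ℕ}
    (S : ℝ → (EuclideanSpace ℝ (Fin n) →L[ℝ] EuclideanSpace ℝ (Fin n)))
    (hS : ContDiffOn ℝ (⊤ : ℕ∞) S (Icc 0 1))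
    (hsym : ∀ x ∈ Icc (0:ℝ) 1, IsSelfAdjoint (S x))
    (l₀ : ℝ) (hl₀ : l₀ ∈ Ioo (0:ℝ) 1)
    (u : ℝ → EuclideanSpace ℝ (Fin n))
    (hu : ContDiffOn ℝ 2 u (Icc 0 1))
    (hode : ∀ x ∈ Icc (0:ℝ) 1,
      derivWithin (derivWithin u (Icc 0 1)) (Icc 0 1) x + (l₀ ^ 2) • S (l₀ * x) (u x) = 0)
    (hu0 : u 0 = 0) (hu1 : u 1 = 0) :
    HasDerivAt (fun l : ℝ => ∫ x in (0:ℝ)..1, l ^ 2 * ⟪S (l * x) (u x), u x⟫)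
      ((1 / l₀) * ‖derivWithin u (Icc 0 1) 1‖ ^ 2) l₀ := by
  obtain ⟨hl₀0, hl₀1⟩ := hl₀
  have uD : UniqueDiffOn ℝ (Icc (0:ℝ) 1) := uniqueDiffOn_Icc one_pos
  set D := derivWithin u (Icc 0 1) with hDdef
  set D2 := derivWithin D (Icc 0 1) with hD2def
  set Sd := derivWithin S (Icc 0 1) with hSddef
  -- continuity facts
  have hu_c : ContinuousOn u (Icc 0 1) := hu.continuousOn
  have hD_cd : ContDiffOn ℝ 1 D (Icc 0 1) := hu.derivWithin uD (by norm_num)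
  have hD_c : ContinuousOn D (Icc 0 1) := hD_cd.continuousOn
  have hS_c : ContinuousOn S (Icc 0 1) := hS.continuousOn
  have hSd_c : ContinuousOn Sd (Icc 0 1) := hS.continuousOn_derivWithin uD (by norm_num)
  -- interior derivatives
  have hSder : ∀ y ∈ Ioo (0:ℝ) 1, HasDerivAt S (Sd y) y := fun y hy =>
    ((hS.differentiableOn (by norm_num) y (Ioo_subset_Icc_self hy)).hasDerivWithinAt).hasDerivAt
      (Icc_mem_nhds hy.1 hy.2)
  have huder : ∀ x ∈ Ioo (0:ℝ) 1, HasDerivAt u (D x) x := fun x hx =>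
    ((hu.differentiableOn (by norm_num) x (Ioo_subset_Icc_self hx)).hasDerivWithinAt).hasDerivAt
      (Icc_mem_nhds hx.1 hx.2)
  have hDder : ∀ x ∈ Ioo (0:ℝ) 1, HasDerivAt D (D2 x) x := fun x hx =>
    ((hD_cd.differentiableOn (by norm_num) x (Ioo_subset_Icc_self hx)).hasDerivWithinAt).hasDerivAt
      (Icc_mem_nhds hx.1 hx.2)
  have hode' : ∀ x ∈ Icc (0:ℝ) 1, D2 x = -((l₀ ^ 2) • S (l₀ * x) (u x)) :=
    fun x hx => eq_neg_of_add_eq_zero_left (hode x hx)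

  -- mapsTo fact
  have hmap : ∀ x ∈ Icc (0:ℝ) 1, l₀ * x ∈ Icc (0:ℝ) 1 := fun x hx =>
    ⟨mul_nonneg hl₀0.le hx.1, by nlinarith [hx.2, hl₀1.le, hx.1]⟩
  -- the pointwise derivative in the parameter
  set Fd : ℝ → ℝ → ℝ := fun l x =>
    2 * l * ⟪S (l * x) (u x), u x⟫ + l ^ 2 * x * ⟪Sd (l * x) (u x), u x⟫ with hFddef
  set G : ℝ → ℝ := fun x =>
    x * l₀ * ⟪S (l₀ * x) (u x), u x⟫ - (1 / l₀) * ⟪D x, u x⟫ + (1 / l₀) * x * ⟪D x, D x⟫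
    with hGdef
  have hSlx_c : ContinuousOn (fun x : ℝ => S (l₀ * x)) (Icc 0 1) :=
    hS_c.comp ((continuous_const.mul continuous_id).continuousOn) hmap
  have hSdlx_c : ContinuousOn (fun x : ℝ => Sd (l₀ * x)) (Icc 0 1) :=
    hSd_c.comp ((continuous_const.mul continuous_id).continuousOn) hmap
  have hGc : ContinuousOn G (Icc 0 1) := by
    apply ContinuousOn.add
    apply ContinuousOn.sub
    · exact ((continuousOn_id.mul continuousOn_const).mul
        ((hSlx_c.clm_apply hu_c).inner hu_c))
    · exact continuousOn_const.mul (hD_c.inner hu_c)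
    · exact (continuousOn_const.mul continuousOn_id).mul (hD_c.inner hD_c)
  have hFd_c : ContinuousOn (Fd l₀) (Icc 0 1) := by
    apply ContinuousOn.add
    · exact (continuousOn_const.mul ((hSlx_c.clm_apply hu_c).inner hu_c))
    · exact (continuousOn_const.mul continuousOn_id).mul
        ((hSdlx_c.clm_apply hu_c).inner hu_c)
  have hFdint : IntervalIntegrable (Fd l₀) MeasureTheory.volume 0 1 := by
    apply ContinuousOn.intervalIntegrable
    rwa [uIcc_of_le zero_le_one]
  have hG : ∀ x ∈ Ioo (0:ℝ) 1, HasDerivAt G (Fd l₀ x) x := by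
    intro x hx
    have hy : l₀ * x ∈ Ioo (0:ℝ) 1 :=
      ⟨mul_pos hl₀0 hx.1, by nlinarith [hx.2, hx.1] ⟩
    have hlin : HasDerivAt (fun x : ℝ => l₀ * x) l₀ x := by
      simpa using (hasDerivAt_id x).const_mul l₀
    have hSx : HasDerivAt (fun x => S (l₀ * x)) (l₀ • Sd (l₀ * x)) x :=
      HasDerivAt.scomp x (hSder _ hy) hlin
    have hSu : HasDerivAt (fun x => S (l₀ * x) (u x))
        ((l₀ • Sd (l₀ * x)) (u x) + S (l₀ * x) (D x)) x := hSx.clm_apply (huder x hx)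
    have hi1 : HasDerivAt (fun x => ⟪S (l₀ * x) (u x), u x⟫)
        (⟪S (l₀ * x) (u x), D x⟫ + ⟪(l₀ • Sd (l₀ * x)) (u x) + S (l₀ * x) (D x), u x⟫) x :=
      HasDerivAt.inner ℝ hSu (huder x hx)
    have ht1 : HasDerivAt (fun x => x * l₀ * ⟪S (l₀ * x) (u x), u x⟫)
        (1 * l₀ * ⟪S (l₀ * x) (u x), u x⟫ + x * l₀ *
          (⟪S (l₀ * x) (u x), D x⟫ + ⟪(l₀ • Sd (l₀ * x)) (u x) + S (l₀ * x) (D x), u x⟫)) x :=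
      ((hasDerivAt_id x).mul_const l₀).mul hi1
    have ht2 : HasDerivAt (fun x => (1 / l₀) * ⟪D x, u x⟫)
        ((1 / l₀) * (⟪D x, D x⟫ + ⟪D2 x, u x⟫)) x :=
      (HasDerivAt.inner ℝ (hDder x hx) (huder x hx)).const_mul (1 / l₀)
    have ht3 : HasDerivAt (fun x => (1 / l₀) * x * ⟪D x, D x⟫)
        ((1 / l₀) * 1 * ⟪D x, D x⟫ + (1 / l₀) * x * (⟪D x, D2 x⟫ + ⟪D2 x, D x⟫)) x := by
      exact (((hasDerivAt_id x).const_mul (1 / l₀)).mul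
        (HasDerivAt.inner ℝ (hDder x hx) (hDder x hx))).congr_deriv rfl
    have total := (ht1.sub ht2).add ht3
    rw [hGdef]
    refine total.congr_deriv ?_
    -- now a real-number identity
    have hyI : l₀ * x ∈ Icc (0:ℝ) 1 := Ioo_subset_Icc_self hy
    have hsm : ⟪S (l₀ * x) (D x), u x⟫ = ⟪S (l₀ * x) (u x), D x⟫ := by
      have h := (hsym _ hyI).isSymmetric (D x) (u x)
      simp only [ContinuousLinearMap.coe_coe] at h
      rw [h, real_inner_comm]
    have hsmul : ⟪(l₀ • Sd (l₀ * x)) (u x), u x⟫ = l₀ * ⟪Sd (l₀ * x) (u x), u x⟫ := by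
      rw [ContinuousLinearMap.smul_apply, real_inner_smul_left]
    have hD2u : ⟪D2 x, u x⟫ = -(l₀ ^ 2 * ⟪S (l₀ * x) (u x), u x⟫) := by
      rw [hode' x (Ioo_subset_Icc_self hx)]
      rw [inner_neg_left, real_inner_smul_left]
    have hD2D : ⟪D2 x, D x⟫ = -(l₀ ^ 2 * ⟪S (l₀ * x) (u x), D x⟫) := by
      rw [hode' x (Ioo_subset_Icc_self hx)]
      rw [inner_neg_left, real_inner_smul_left]
    have hDD2 : ⟪D x, D2 x⟫ = -(l₀ ^ 2 * ⟪S (l₀ * x) (u x), D x⟫) := by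
      rw [real_inner_comm]; exact hD2D
    rw [inner_add_left, hsm, hsmul, hD2u, hD2D, hDD2, hFddef]
    have hl₀ne : l₀ ≠ 0 := ne_of_gt hl₀0
    field_simp
    ring
  have hkey : ∫ x in (0:ℝ)..1, Fd l₀ x = (1 / l₀) * ‖D 1‖ ^ 2 := by
    rw [intervalIntegral.integral_eq_sub_of_hasDeriv_right_of_le zero_le_one hGc
      (fun x hx => (hG x hx).hasDerivWithinAt) hFdint]
    rw [hGdef]
    simp only [hu0, hu1, inner_zero_right, mul_zero, zero_mul, sub_zero, zero_sub, mul_one,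
      one_mul, zero_add, add_zero, neg_zero, sub_zero]
    rw [real_inner_self_eq_norm_sq]

  -- Step B: differentiate under the integral sign
  obtain ⟨C1, hC1⟩ := isCompact_Icc.exists_bound_of_continuousOn hS_c
  obtain ⟨C2, hC2⟩ := isCompact_Icc.exists_bound_of_continuousOn hSd_c
  obtain ⟨C3, hC3⟩ := isCompact_Icc.exists_bound_of_continuousOn hu_c
  set ε := min l₀ (1 - l₀) with hεdef
  have hεpos : 0 < ε := lt_min hl₀0 (by linarith)
  have hball : Metric.ball l₀ ε ⊆ Ioo 0 1 := by
    intro t ht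
    rw [Metric.mem_ball, Real.dist_eq] at ht
    have h1 := (abs_lt.1 ht).1
    have h2 := (abs_lt.1 ht).2
    have h3 := min_le_left l₀ (1 - l₀)
    have h4 := min_le_right l₀ (1 - l₀)
    exact ⟨by linarith, by linarith⟩
  have hcontF : ∀ t ∈ Ioo (0:ℝ) 1,
      ContinuousOn (fun x : ℝ => t ^ 2 * ⟪S (t * x) (u x), u x⟫) (Ioc 0 1) := by
    intro t ht
    have hmapt : ∀ x ∈ Ioc (0:ℝ) 1, t * x ∈ Icc (0:ℝ) 1 := fun x hx =>
      ⟨mul_nonneg ht.1.le hx.1.le, by nlinarith [hx.2, ht.2, hx.1.le]⟩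
    exact continuousOn_const.mul
      (((hS_c.comp (continuous_const.mul continuous_id).continuousOn hmapt).clm_apply
        (hu_c.mono Ioc_subset_Icc_self)).inner (hu_c.mono Ioc_subset_Icc_self))
  have hF_meas : ∀ᶠ t in nhds l₀,
      MeasureTheory.AEStronglyMeasurable (fun x : ℝ => t ^ 2 * ⟪S (t * x) (u x), u x⟫)
        (MeasureTheory.volume.restrict (Set.uIoc (0:ℝ) 1)) := by
    filter_upwards [Metric.ball_mem_nhds l₀ hεpos] with t ht
    rw [Set.uIoc_of_le (zero_le_one' ℝ)]
    exact (hcontF t (hball ht)).aestronglyMeasurable measurableSet_Ioc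
  have hF_int : IntervalIntegrable (fun x : ℝ => l₀ ^ 2 * ⟪S (l₀ * x) (u x), u x⟫)
      MeasureTheory.volume 0 1 := by
    apply ContinuousOn.intervalIntegrable
    rw [uIcc_of_le zero_le_one]
    exact continuousOn_const.mul ((hSlx_c.clm_apply hu_c).inner hu_c)
  have hF'_meas : MeasureTheory.AEStronglyMeasurable (Fd l₀)
      (MeasureTheory.volume.restrict (Set.uIoc (0:ℝ) 1)) := by
    rw [Set.uIoc_of_le (zero_le_one' ℝ)]
    exact (hFd_c.mono Ioc_subset_Icc_self).aestronglyMeasurable measurableSet_Ioc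
  have h_bound : ∀ᵐ x ∂MeasureTheory.volume, x ∈ Set.uIoc (0:ℝ) 1 →
      ∀ t ∈ Metric.ball l₀ ε, ‖Fd t x‖ ≤ 2 * (C1 * C3 ^ 2) + C2 * C3 ^ 2 := by
    apply MeasureTheory.ae_of_all
    intro x hxI t ht
    have hx : x ∈ Ioc (0:ℝ) 1 := by rwa [Set.uIoc_of_le (zero_le_one' ℝ)] at hxI
    have ht' := hball ht
    have htx : t * x ∈ Icc (0:ℝ) 1 :=
      ⟨mul_nonneg ht'.1.le hx.1.le, by nlinarith [hx.2, ht'.2, hx.1.le]⟩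
    have n1 : ‖S (t * x)‖ ≤ C1 := hC1 _ htx
    have n2 : ‖u x‖ ≤ C3 := hC3 _ (Ioc_subset_Icc_self hx)
    have m1 : ‖Sd (t * x)‖ ≤ C2 := hC2 _ htx
    have hC1n : (0:ℝ) ≤ C1 := le_trans (norm_nonneg _) n1
    have hC2n : (0:ℝ) ≤ C2 := le_trans (norm_nonneg _) m1
    have hC3n : (0:ℝ) ≤ C3 := le_trans (norm_nonneg _) n2
    have i1 : |⟪S (t * x) (u x), u x⟫| ≤ C1 * C3 ^ 2 := by
      have h4 := abs_real_inner_le_norm (S (t * x) (u x)) (u x)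
      have h5 := (S (t * x)).le_opNorm (u x)
      have q1 : ‖S (t * x) (u x)‖ ≤ C1 * C3 :=
        le_trans h5 (mul_le_mul n1 n2 (norm_nonneg _) hC1n)
      have s1 : ‖S (t * x) (u x)‖ * ‖u x‖ ≤ (C1 * C3) * C3 :=
        mul_le_mul q1 n2 (norm_nonneg _) (mul_nonneg hC1n hC3n)
      nlinarith [le_trans h4 s1]
    have i2 : |⟪Sd (t * x) (u x), u x⟫| ≤ C2 * C3 ^ 2 := by
      have h4 := abs_real_inner_le_norm (Sd (t * x) (u x)) (u x)
      have h5 := (Sd (t * x)).le_opNorm (u x)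
      have q1 : ‖Sd (t * x) (u x)‖ ≤ C2 * C3 :=
        le_trans h5 (mul_le_mul m1 n2 (norm_nonneg _) hC2n)
      have s1 : ‖Sd (t * x) (u x)‖ * ‖u x‖ ≤ (C2 * C3) * C3 :=
        mul_le_mul q1 n2 (norm_nonneg _) (mul_nonneg hC2n hC3n)
      nlinarith [le_trans h4 s1]
    rw [hFddef, Real.norm_eq_abs]
    have e1 := abs_add_le (2 * t * ⟪S (t * x) (u x), u x⟫) (t ^ 2 * x * ⟪Sd (t * x) (u x), u x⟫)
    have e2 : |2 * t * ⟪S (t * x) (u x), u x⟫| = 2 * t * |⟪S (t * x) (u x), u x⟫| := by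
      rw [abs_mul, abs_of_pos (by nlinarith [ht'.1] : (0:ℝ) < 2 * t)]
    have e3 : |t ^ 2 * x * ⟪Sd (t * x) (u x), u x⟫| = t ^ 2 * x * |⟪Sd (t * x) (u x), u x⟫| := by
      rw [abs_mul, abs_of_pos (mul_pos (pow_pos ht'.1 2) hx.1)]
    rw [e2, e3] at e1
    have e4 : 2 * t * |⟪S (t * x) (u x), u x⟫| ≤ 2 * (C1 * C3 ^ 2) := by
      nlinarith [mul_nonneg (by linarith [ht'.2] : (0:ℝ) ≤ 1 - t)
        (abs_nonneg (⟪S (t * x) (u x), u x⟫ : ℝ)), i1, abs_nonneg (⟪S (t * x) (u x), u x⟫ : ℝ)]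
    have e5 : t ^ 2 * x * |⟪Sd (t * x) (u x), u x⟫| ≤ C2 * C3 ^ 2 := by
      have htx1 : t ^ 2 * x ≤ 1 := by nlinarith [ht'.1, ht'.2, hx.1, hx.2]
      nlinarith [mul_nonneg (by linarith : (0:ℝ) ≤ 1 - t ^ 2 * x)
        (abs_nonneg (⟪Sd (t * x) (u x), u x⟫ : ℝ)), i2]
    calc |2 * t * ⟪S (t * x) (u x), u x⟫ + t ^ 2 * x * ⟪Sd (t * x) (u x), u x⟫|
        ≤ 2 * t * |⟪S (t * x) (u x), u x⟫| + t ^ 2 * x * |⟪Sd (t * x) (u x), u x⟫| := e1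
      _ ≤ 2 * (C1 * C3 ^ 2) + C2 * C3 ^ 2 := add_le_add e4 e5
  have h_diff : ∀ᵐ x ∂MeasureTheory.volume, x ∈ Set.uIoc (0:ℝ) 1 →
      ∀ t ∈ Metric.ball l₀ ε,
        HasDerivAt (fun t : ℝ => t ^ 2 * ⟪S (t * x) (u x), u x⟫) (Fd t x) t := by
    apply MeasureTheory.ae_of_all
    intro x hxI t ht
    have hx : x ∈ Ioc (0:ℝ) 1 := by rwa [Set.uIoc_of_le (zero_le_one' ℝ)] at hxI
    have ht' := hball ht
    have htx : t * x ∈ Ioo (0:ℝ) 1 := by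
      refine ⟨mul_pos ht'.1 hx.1, ?_⟩
      have : t * x ≤ t * 1 := mul_le_mul_of_nonneg_left hx.2 ht'.1.le
      linarith [ht'.2]
    have hlin : HasDerivAt (fun t : ℝ => t * x) x t := by
      simpa using (hasDerivAt_id t).mul_const x
    have hSx : HasDerivAt (fun t : ℝ => S (t * x)) (x • Sd (t * x)) t :=
      HasDerivAt.scomp t (hSder _ htx) hlin
    have hSu : HasDerivAt (fun t : ℝ => S (t * x) (u x))
        ((x • Sd (t * x)) (u x) + S (t * x) 0) t :=
      hSx.clm_apply (hasDerivAt_const t (u x))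
    have hi : HasDerivAt (fun t : ℝ => ⟪S (t * x) (u x), u x⟫)
        (⟪S (t * x) (u x), (0 : EuclideanSpace ℝ (Fin n))⟫ +
          ⟪(x • Sd (t * x)) (u x) + S (t * x) 0, u x⟫) t :=
      HasDerivAt.inner ℝ hSu (hasDerivAt_const t (u x))
    have hmul := (hasDerivAt_pow 2 t).mul hi
    rw [hFddef]
    refine hmul.congr_deriv ?_
    simp only [inner_zero_right, map_zero, add_zero, zero_add, pow_one,
      ContinuousLinearMap.smul_apply, real_inner_smul_left, Nat.cast_ofNat]
    ring
  have main := (intervalIntegral.hasDerivAt_integral_of_dominated_loc_of_deriv_le (Metric.ball_mem_nhds l₀ hεpos)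
    hF_meas hF_int hF'_meas h_bound (intervalIntegrable_const) h_diff).2
  rw [hkey] at main
  exact main



end
end
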